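/- arXiv:2601.05550 — 5 statements merged into one kernel-verified Lean document; each statement's English description precedes it below -/
import Mathlib

section
/- Let g : ℝ → ℝ be continuous, non-decreasing and everywhere positive, and let C > 0, q ≥ 0, θ > 0 and τ > qθ be constants. Then for every a ∈ ℝ there exist R > 0 and a function v : [0,R) → ℝ such that: v is continuous on [0,R) with v(0) = a; v is differentiable at 0 from the right with v'(0) = 0; for every r ∈ (0,R) the derivative v'(r) exists and equals C · r^{-q} · (∫_0^r s^{τ-1} g(v(s)) ds)^{1/θ}; and v'(r) > 0 and v''(r) > 0 for all r ∈ (0,R). -/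
open Real MeasureTheory Set Filter Topology ENNReal

/-- The right-hand side of the Cauchy problem (★):
`C · r^{-q} · (∫_0^r s^{τ-1} g(v(s)) ds)^{1/θ}`. -/
noncomputable def cauchyRHS (C q τ θ : ℝ) (g v : ℝ → ℝ) (r : ℝ) : ℝ :=
  C * r ^ (-q) * (∫ s in (0:ℝ)..r, s ^ (τ - 1) * g (v s)) ^ (1 / θ)

/-- `v : ℝ → ℝ` solves the Cauchy problem (★) on `[0, R)` (with `R ∈ (0, ∞]` an
extended nonnegative real): `v` is continuous on `[0, R)`, `v 0 = a`, and at every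
`r ∈ (0, R)` the derivative of `v` exists and is given by `cauchyRHS`. -/
def SolvesCauchy (C q τ θ a : ℝ) (g : ℝ → ℝ) (R : ℝ≥0∞) (v : ℝ → ℝ) : Prop :=
  ContinuousOn v {r : ℝ | 0 ≤ r ∧ ENNReal.ofReal r < R} ∧
  v 0 = a ∧
  ∀ r : ℝ, 0 < r → ENNReal.ofReal r < R → HasDerivAt v (cauchyRHS C q τ θ g v r) r

/-- The Keller–Osserman condition:
`∫_b^∞ (∫_0^t g(s) ds)^{-1/(θ+1)} dt = +∞` for every `b > 0`. -/
def KellerOsserman (θ : ℝ) (g : ℝ → ℝ) : Prop :=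
  ∀ b : ℝ, 0 < b →
    ∫⁻ t in Set.Ioi b, ENNReal.ofReal ((∫ s in (0:ℝ)..t, g s) ^ (-(1 / (θ + 1)))) = ⊤



/- ### Auxiliary machinery for the proof -/

section aux

variable {g : ℝ → ℝ} {C q θ τ a R : ℝ} {u : ℝ → ℝ} {t r : ℝ}

/-- The inner integral. -/
noncomputable def cpInner (τ : ℝ) (g u : ℝ → ℝ) (t : ℝ) : ℝ :=
  ∫ s in (0:ℝ)..t, s ^ (τ - 1) * g (u s)

lemma cauchyRHS_eq : cauchyRHS C q τ θ g u r = C * r ^ (-q) * (cpInner τ g u r) ^ (1 / θ) := rfl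

lemma inner_integrable (hg_cont : Continuous g) (hg_mono : Monotone g) (hg_pos : ∀ t, 0 < g t)
    (hτ0 : 0 < τ) (hu : Measurable u) (hbox : ∀ s ∈ Icc (0:ℝ) R, a ≤ u s ∧ u s ≤ a + 1)
    (ht : t ∈ Icc (0:ℝ) R) :
    IntervalIntegrable (fun s => s ^ (τ - 1) * g (u s)) volume 0 t := by
  have h0t : (0:ℝ) ≤ t := ht.1
  have hbd : IntervalIntegrable (fun s : ℝ => g (a+1) * s ^ (τ-1)) volume 0 t :=
    (intervalIntegral.intervalIntegrable_rpow' (by linarith)).const_mul _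
  refine hbd.mono_fun' ?_ ?_
  · rw [uIoc_of_le h0t]
    have h1 : ContinuousOn (fun s : ℝ => s ^ (τ-1)) (Ioc 0 t) :=
      fun x hx => (Real.continuousAt_rpow_const x _ (Or.inl hx.1.ne')).continuousWithinAt
    exact (h1.aestronglyMeasurable measurableSet_Ioc).mul
      ((hg_cont.measurable.comp hu).aestronglyMeasurable)
  · rw [uIoc_of_le h0t]
    refine (ae_restrict_iff' measurableSet_Ioc).mpr (ae_of_all _ fun x hx => ?_)
    have hx0 : 0 < x := hx.1
    have h1 : 0 ≤ x ^ (τ-1) := Real.rpow_nonneg hx0.le _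
    have h2 : 0 < g (u x) := hg_pos _
    have h3 : g (u x) ≤ g (a+1) := hg_mono (hbox x ⟨hx0.le, hx.2.trans ht.2⟩).2
    simp only [Real.norm_eq_abs, abs_of_nonneg (mul_nonneg h1 h2.le)]
    nlinarith

lemma rpow_integral_eq (hτ0 : 0 < τ) (h0t : 0 ≤ t) (c : ℝ) :
    (∫ s in (0:ℝ)..t, s ^ (τ - 1) * c) = c * t ^ τ / τ := by
  rw [intervalIntegral.integral_mul_const, integral_rpow (Or.inl (by linarith))]
  rw [show τ - 1 + 1 = τ by ring, Real.zero_rpow hτ0.ne']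
  ring

lemma inner_le (hg_cont : Continuous g) (hg_mono : Monotone g) (hg_pos : ∀ t, 0 < g t)
    (hτ0 : 0 < τ) (hu : Measurable u) (hbox : ∀ s ∈ Icc (0:ℝ) R, a ≤ u s ∧ u s ≤ a + 1)
    (ht : t ∈ Icc (0:ℝ) R) :
    cpInner τ g u t ≤ g (a+1) * t ^ τ / τ := by
  rw [← rpow_integral_eq hτ0 ht.1 (g (a+1))]
  refine intervalIntegral.integral_mono_on ht.1
    (inner_integrable hg_cont hg_mono hg_pos hτ0 hu hbox ht)
    ((intervalIntegral.intervalIntegrable_rpow' (by linarith)).mul_const _) fun x hx => ?_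
  exact mul_le_mul_of_nonneg_left (hg_mono (hbox x ⟨hx.1, hx.2.trans ht.2⟩).2)
    (Real.rpow_nonneg hx.1 _)

lemma inner_ge (hg_cont : Continuous g) (hg_mono : Monotone g) (hg_pos : ∀ t, 0 < g t)
    (hτ0 : 0 < τ) (hu : Measurable u) (hbox : ∀ s ∈ Icc (0:ℝ) R, a ≤ u s ∧ u s ≤ a + 1)
    (ht : t ∈ Icc (0:ℝ) R) :
    g a * t ^ τ / τ ≤ cpInner τ g u t := by
  rw [← rpow_integral_eq hτ0 ht.1 (g a)]
  refine intervalIntegral.integral_mono_on ht.1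
    ((intervalIntegral.intervalIntegrable_rpow' (by linarith)).mul_const _)
    (inner_integrable hg_cont hg_mono hg_pos hτ0 hu hbox ht) fun x hx => ?_
  exact mul_le_mul_of_nonneg_left (hg_mono (hbox x ⟨hx.1, hx.2.trans ht.2⟩).1)
    (Real.rpow_nonneg hx.1 _)

lemma inner_nonneg (hg_cont : Continuous g) (hg_mono : Monotone g) (hg_pos : ∀ t, 0 < g t)
    (hτ0 : 0 < τ) (hu : Measurable u) (hbox : ∀ s ∈ Icc (0:ℝ) R, a ≤ u s ∧ u s ≤ a + 1)
    (ht : t ∈ Icc (0:ℝ) R) : 0 ≤ cpInner τ g u t := by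
  refine le_trans ?_ (inner_ge hg_cont hg_mono hg_pos hτ0 hu hbox ht)
  have := (hg_pos a).le
  have : 0 ≤ t ^ τ := Real.rpow_nonneg ht.1 _
  positivity



lemma F_nonneg (hg_cont : Continuous g) (hg_mono : Monotone g) (hg_pos : ∀ t, 0 < g t)
    (hC : 0 < C) (hτ0 : 0 < τ) (hθ : 0 < θ)
    (hu : Measurable u) (hbox : ∀ s ∈ Icc (0:ℝ) R, a ≤ u s ∧ u s ≤ a + 1)
    (ht : t ∈ Icc (0:ℝ) R) : 0 ≤ cauchyRHS C q τ θ g u t := by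
  rw [cauchyRHS_eq]
  have h1 : 0 ≤ t ^ (-q) := Real.rpow_nonneg ht.1 _
  have h2 : 0 ≤ (cpInner τ g u t) ^ (1/θ) :=
    Real.rpow_nonneg (inner_nonneg hg_cont hg_mono hg_pos hτ0 hu hbox ht) _
  positivity

lemma F_le (hg_cont : Continuous g) (hg_mono : Monotone g) (hg_pos : ∀ t, 0 < g t)
    (hC : 0 < C) (hτ0 : 0 < τ) (hθ : 0 < θ)
    (hu : Measurable u) (hbox : ∀ s ∈ Icc (0:ℝ) R, a ≤ u s ∧ u s ≤ a + 1)
    (ht : t ∈ Icc (0:ℝ) R) :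
    cauchyRHS C q τ θ g u t ≤ C * (g (a+1) / τ) ^ (1/θ) * t ^ (τ/θ - q) := by
  rcases eq_or_lt_of_le ht.1 with h0 | h0
  · rw [cauchyRHS_eq, ← h0]
    have : cpInner τ g u 0 = 0 := by
      simp [cpInner, intervalIntegral.integral_same]
    rw [this, Real.zero_rpow (by positivity : (1:ℝ)/θ ≠ 0), mul_zero]
    have : (0:ℝ) ^ (τ/θ - q) = 0 ∨ (0:ℝ) ^ (τ/θ - q) = 1 := by
      rcases eq_or_ne (τ/θ - q) 0 with h | h
      · right; rw [h, Real.rpow_zero]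
      · left; exact Real.zero_rpow h
    have hM : 0 < g (a+1) := hg_pos _
    rcases this with h | h <;> rw [h] <;> positivity
  · rw [cauchyRHS_eq]
    have hM : 0 < g (a+1) := hg_pos _
    have h1 : (cpInner τ g u t) ^ (1/θ) ≤ (g (a+1) * t ^ τ / τ) ^ (1/θ) :=
      Real.rpow_le_rpow (inner_nonneg hg_cont hg_mono hg_pos hτ0 hu hbox ht)
        (inner_le hg_cont hg_mono hg_pos hτ0 hu hbox ht) (by positivity)
    have h2 : (g (a+1) * t ^ τ / τ) ^ (1/θ)
        = (g (a+1) / τ) ^ (1/θ) * t ^ (τ/θ) := by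
      rw [show g (a+1) * t ^ τ / τ = (g (a+1) / τ) * t ^ τ by ring,
        Real.mul_rpow (by positivity) (Real.rpow_nonneg h0.le _),
        ← Real.rpow_mul h0.le]
      ring_nf
    have h3 : t ^ (-q) * t ^ (τ/θ) = t ^ (τ/θ - q) := by
      rw [← Real.rpow_add h0]; ring_nf
    calc C * t ^ (-q) * (cpInner τ g u t) ^ (1/θ)
        ≤ C * t ^ (-q) * ((g (a+1) / τ) ^ (1/θ) * t ^ (τ/θ)) := by
          refine mul_le_mul_of_nonneg_left (h1.trans_eq h2) ?_
          have := Real.rpow_nonneg h0.le (-q); positivity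
      _ = C * (g (a+1) / τ) ^ (1/θ) * (t ^ (-q) * t ^ (τ/θ)) := by ring
      _ = C * (g (a+1) / τ) ^ (1/θ) * t ^ (τ/θ - q) := by rw [h3]

lemma inner_contOn (hg_cont : Continuous g) (hg_mono : Monotone g) (hg_pos : ∀ t, 0 < g t)
    (hτ0 : 0 < τ) (hu : Measurable u) (hbox : ∀ s ∈ Icc (0:ℝ) R, a ≤ u s ∧ u s ≤ a + 1)
    (hr : r ∈ Icc (0:ℝ) R) :
    ContinuousOn (cpInner τ g u) (Icc 0 r) := by
  have := intervalIntegral.continuousOn_primitive_interval'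
    (inner_integrable hg_cont hg_mono hg_pos hτ0 hu hbox hr)
    (left_mem_uIcc (a := (0:ℝ)) (b := r))
  rwa [uIcc_of_le hr.1] at this

lemma F_contOn_Ioc (hg_cont : Continuous g) (hg_mono : Monotone g) (hg_pos : ∀ t, 0 < g t)
    (hτ0 : 0 < τ) (hθ : 0 < θ) (hu : Measurable u)
    (hbox : ∀ s ∈ Icc (0:ℝ) R, a ≤ u s ∧ u s ≤ a + 1) (hr : r ∈ Icc (0:ℝ) R) :
    ContinuousOn (cauchyRHS C q τ θ g u) (Ioc 0 r) := by
  have hw := inner_contOn hg_cont hg_mono hg_pos hτ0 hu hbox hr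
  have h1 : ContinuousOn (fun t : ℝ => C * t ^ (-q)) (Ioc 0 r) :=
    continuousOn_const.mul (continuousOn_id.rpow_const fun x hx => Or.inl hx.1.ne')
  exact h1.mul ((hw.mono Ioc_subset_Icc_self).rpow_const
    fun x _ => Or.inr (by positivity))

lemma F_meas (hg_cont : Continuous g) (hg_mono : Monotone g) (hg_pos : ∀ t, 0 < g t)
    (hτ0 : 0 < τ) (hθ : 0 < θ) (hu : Measurable u)
    (hbox : ∀ s ∈ Icc (0:ℝ) R, a ≤ u s ∧ u s ≤ a + 1) (hr : r ∈ Icc (0:ℝ) R) :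
    AEStronglyMeasurable (cauchyRHS C q τ θ g u) (volume.restrict (Set.uIoc 0 r)) := by
  rw [uIoc_of_le hr.1]
  exact (F_contOn_Ioc hg_cont hg_mono hg_pos hτ0 hθ hu hbox hr).aestronglyMeasurable
    measurableSet_Ioc

lemma F_integrable (hg_cont : Continuous g) (hg_mono : Monotone g) (hg_pos : ∀ t, 0 < g t)
    (hC : 0 < C) (hτ0 : 0 < τ) (hθ : 0 < θ) (hu : Measurable u)
    (hbox : ∀ s ∈ Icc (0:ℝ) R, a ≤ u s ∧ u s ≤ a + 1) (hα : 0 < τ/θ - q)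
    (hr : r ∈ Icc (0:ℝ) R) :
    IntervalIntegrable (cauchyRHS C q τ θ g u) volume 0 r := by
  have hbd : IntervalIntegrable (fun t : ℝ => C * (g (a+1) / τ) ^ (1/θ) * t ^ (τ/θ - q))
      volume 0 r := (intervalIntegral.intervalIntegrable_rpow' (by linarith)).const_mul _
  refine hbd.mono_fun' (F_meas hg_cont hg_mono hg_pos hτ0 hθ hu hbox hr) ?_
  rw [uIoc_of_le hr.1]
  refine (ae_restrict_iff' measurableSet_Ioc).mpr (ae_of_all _ fun x hx => ?_)
  have hmem : x ∈ Icc (0:ℝ) R := ⟨hx.1.le, hx.2.trans hr.2⟩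
  show ‖cauchyRHS C q τ θ g u x‖ ≤ _
  rw [Real.norm_eq_abs,
    abs_of_nonneg (F_nonneg hg_cont hg_mono hg_pos hC hτ0 hθ hu hbox hmem)]
  exact F_le hg_cont hg_mono hg_pos hC hτ0 hθ hu hbox hmem


lemma F_integral_nonneg (hg_cont : Continuous g) (hg_mono : Monotone g) (hg_pos : ∀ t, 0 < g t)
    (hC : 0 < C) (hτ0 : 0 < τ) (hθ : 0 < θ) (hu : Measurable u)
    (hbox : ∀ s ∈ Icc (0:ℝ) R, a ≤ u s ∧ u s ≤ a + 1)
    (hr : r ∈ Icc (0:ℝ) R) :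
    0 ≤ ∫ t in (0:ℝ)..r, cauchyRHS C q τ θ g u t := by
  refine intervalIntegral.integral_nonneg hr.1 fun x hx => ?_
  exact F_nonneg hg_cont hg_mono hg_pos hC hτ0 hθ hu hbox ⟨hx.1, hx.2.trans hr.2⟩

lemma F_integral_le_one (hg_cont : Continuous g) (hg_mono : Monotone g) (hg_pos : ∀ t, 0 < g t)
    (hC : 0 < C) (hτ0 : 0 < τ) (hθ : 0 < θ) (hu : Measurable u)
    (hbox : ∀ s ∈ Icc (0:ℝ) R, a ≤ u s ∧ u s ≤ a + 1) (hα : 0 < τ/θ - q)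
    (hRB : C * (g (a+1) / τ) ^ (1/θ) * R ^ (τ/θ - q + 1) ≤ τ/θ - q + 1)
    (hr : r ∈ Icc (0:ℝ) R) :
    (∫ t in (0:ℝ)..r, cauchyRHS C q τ θ g u t) ≤ 1 := by
  set B := C * (g (a+1) / τ) ^ (1/θ) with hBdef
  have hM : 0 < g (a+1) := hg_pos _
  have hB : 0 < B := by positivity
  have h1 : (∫ t in (0:ℝ)..r, cauchyRHS C q τ θ g u t)
      ≤ ∫ t in (0:ℝ)..r, B * t ^ (τ/θ - q) := by
    refine intervalIntegral.integral_mono_on hr.1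
      (F_integrable hg_cont hg_mono hg_pos hC hτ0 hθ hu hbox hα hr)
      ((intervalIntegral.intervalIntegrable_rpow' (by linarith)).const_mul _)
      fun x hx => F_le hg_cont hg_mono hg_pos hC hτ0 hθ hu hbox ⟨hx.1, hx.2.trans hr.2⟩
  have h2 : (∫ t in (0:ℝ)..r, B * t ^ (τ/θ - q)) = B * r ^ (τ/θ - q + 1) / (τ/θ - q + 1) := by
    rw [intervalIntegral.integral_const_mul, integral_rpow (Or.inl (by linarith)),
      Real.zero_rpow (by linarith : τ/θ - q + 1 ≠ 0)]
    ring
  have h3 : B * r ^ (τ/θ - q + 1) ≤ B * R ^ (τ/θ - q + 1) :=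
    mul_le_mul_of_nonneg_left (Real.rpow_le_rpow hr.1 hr.2 (by linarith)) hB.le
  have h4 : B * r ^ (τ/θ - q + 1) / (τ/θ - q + 1) ≤ 1 := by
    rw [div_le_one (by linarith)]
    exact h3.trans hRB
  linarith [h1, h2 ▸ h1]

lemma F_mono (hg_cont : Continuous g) (hg_mono : Monotone g) (hg_pos : ∀ t, 0 < g t)
    (hC : 0 < C) (hτ0 : 0 < τ) (hθ : 0 < θ)
    (hu : Measurable u) (hu' : Measurable u')
    (hbox : ∀ s ∈ Icc (0:ℝ) R, a ≤ u s ∧ u s ≤ a + 1)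
    (hbox' : ∀ s ∈ Icc (0:ℝ) R, a ≤ u' s ∧ u' s ≤ a + 1)
    (hle : ∀ s ∈ Icc (0:ℝ) R, u s ≤ u' s)
    (ht : t ∈ Icc (0:ℝ) R) :
    cauchyRHS C q τ θ g u t ≤ cauchyRHS C q τ θ g u' t := by
  rw [cauchyRHS_eq, cauchyRHS_eq]
  have hinner : cpInner τ g u t ≤ cpInner τ g u' t := by
    refine intervalIntegral.integral_mono_on ht.1
      (inner_integrable hg_cont hg_mono hg_pos hτ0 hu hbox ht)
      (inner_integrable hg_cont hg_mono hg_pos hτ0 hu' hbox' ht) fun x hx => ?_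
    exact mul_le_mul_of_nonneg_left
      (hg_mono (hle x ⟨hx.1, hx.2.trans ht.2⟩)) (Real.rpow_nonneg hx.1 _)
  have h2 : (cpInner τ g u t) ^ (1/θ) ≤ (cpInner τ g u' t) ^ (1/θ) :=
    Real.rpow_le_rpow (inner_nonneg hg_cont hg_mono hg_pos hτ0 hu hbox ht) hinner
      (by positivity)
  have h3 : 0 ≤ C * t ^ (-q) := by
    have := Real.rpow_nonneg ht.1 (-q); positivity
  exact mul_le_mul_of_nonneg_left h2 h3


variable {u u' : ℝ → ℝ}

lemma inner_meas (hg_cont : Continuous g) (hu : Measurable u) (h0t : 0 ≤ t) :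
    AEStronglyMeasurable (fun s => s ^ (τ - 1) * g (u s))
      (volume.restrict (Set.uIoc 0 t)) := by
  rw [uIoc_of_le h0t]
  have h1 : ContinuousOn (fun s : ℝ => s ^ (τ-1)) (Ioc 0 t) :=
    fun x hx => (Real.continuousAt_rpow_const x _ (Or.inl hx.1.ne')).continuousWithinAt
  exact (h1.aestronglyMeasurable measurableSet_Ioc).mul
    ((hg_cont.measurable.comp hu).aestronglyMeasurable)

end aux

/-- clamp to [0, R] -/
noncomputable def cpClamp (R r : ℝ) : ℝ := max 0 (min r R)

lemma cpClamp_mem {R : ℝ} (hR : 0 ≤ R) (r : ℝ) : cpClamp R r ∈ Set.Icc 0 R :=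
  ⟨le_max_left _ _, max_le hR (min_le_right _ _)⟩

lemma cpClamp_eq {R r : ℝ} (h : r ∈ Set.Icc 0 R) : cpClamp R r = r := by
  simp [cpClamp, min_eq_left h.2, max_eq_right h.1]

lemma cpClamp_cont (R : ℝ) : Continuous (cpClamp R) :=
  continuous_const.max (continuous_id.min continuous_const)

/-- Picard-type iteration. -/
noncomputable def cpSeq (C q τ θ a R : ℝ) (g : ℝ → ℝ) : ℕ → ℝ → ℝ
  | 0 => fun _ => a
  | n+1 => fun r =>
      a + ∫ t in (0:ℝ)..(cpClamp R r), cauchyRHS C q τ θ g (cpSeq C q τ θ a R g n) t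

lemma cpSeq_zero_apply {C q τ θ a R : ℝ} {g : ℝ → ℝ} {r : ℝ} :
    cpSeq C q τ θ a R g 0 r = a := rfl

lemma cpSeq_succ_apply {C q τ θ a R : ℝ} {g : ℝ → ℝ} {n : ℕ} {r : ℝ} :
    cpSeq C q τ θ a R g (n+1) r
      = a + ∫ t in (0:ℝ)..(cpClamp R r), cauchyRHS C q τ θ g (cpSeq C q τ θ a R g n) t := rfl

section seq
variable {g : ℝ → ℝ} {C q θ τ a R : ℝ}
variable (hg_cont : Continuous g) (hg_mono : Monotone g) (hg_pos : ∀ t, 0 < g t)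
  (hC : 0 < C) (hτ0 : 0 < τ) (hθ : 0 < θ) (hα : 0 < τ/θ - q) (hR0 : 0 < R)
  (hRB : C * (g (a+1) / τ) ^ (1/θ) * R ^ (τ/θ - q + 1) ≤ τ/θ - q + 1)

include hg_cont hg_mono hg_pos hC hτ0 hθ hα hR0 hRB

lemma cpSeq_cont_box :
    ∀ n, Continuous (cpSeq C q τ θ a R g n) ∧
      ∀ r, a ≤ cpSeq C q τ θ a R g n r ∧ cpSeq C q τ θ a R g n r ≤ a + 1 := by
  intro n
  induction n with
  | zero =>
    refine ⟨continuous_const, fun r => ?_⟩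
    rw [cpSeq_zero_apply]
    exact ⟨le_refl a, by linarith⟩
  | succ n ih =>
    obtain ⟨hcont, hbox⟩ := ih
    have hbox' : ∀ s ∈ Set.Icc (0:ℝ) R, a ≤ cpSeq C q τ θ a R g n s ∧
        cpSeq C q τ θ a R g n s ≤ a + 1 := fun s _ => hbox s
    constructor
    · have hP : ContinuousOn
          (fun y => ∫ t in (0:ℝ)..y, cauchyRHS C q τ θ g (cpSeq C q τ θ a R g n) t)
          (Set.Icc 0 R) := by
        have := intervalIntegral.continuousOn_primitive_interval'
          (F_integrable hg_cont hg_mono hg_pos hC hτ0 hθ hcont.measurable hbox' hα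
            ⟨hR0.le, le_refl R⟩)
          (Set.left_mem_uIcc (a := (0:ℝ)) (b := R))
        rwa [Set.uIcc_of_le hR0.le] at this
      exact continuous_const.add
        (hP.comp_continuous (cpClamp_cont R) (cpClamp_mem hR0.le))
    · intro r
      have hc := cpClamp_mem hR0.le r
      constructor
      · have := F_integral_nonneg (q := q) hg_cont hg_mono hg_pos hC hτ0 hθ
          hcont.measurable hbox' hc
        rw [cpSeq_succ_apply]; linarith
      · have := F_integral_le_one hg_cont hg_mono hg_pos hC hτ0 hθ
          hcont.measurable hbox' hα hRB hc
        rw [cpSeq_succ_apply]; linarith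

lemma cpSeq_mono_succ :
    ∀ n r, cpSeq C q τ θ a R g n r ≤ cpSeq C q τ θ a R g (n+1) r := by
  intro n
  induction n with
  | zero =>
    intro r
    have h := cpSeq_cont_box hg_cont hg_mono hg_pos hC hτ0 hθ hα hR0 hRB (0 : ℕ)
    have := F_integral_nonneg (q := q) hg_cont hg_mono hg_pos hC hτ0 hθ
      h.1.measurable (fun s _ => h.2 s) (cpClamp_mem hR0.le r)
    rw [cpSeq_zero_apply, cpSeq_succ_apply]; linarith
  | succ n ih =>
    intro r
    have hn := cpSeq_cont_box hg_cont hg_mono hg_pos hC hτ0 hθ hα hR0 hRB n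
    have hn1 := cpSeq_cont_box hg_cont hg_mono hg_pos hC hτ0 hθ hα hR0 hRB (n+1)
    have hc := cpClamp_mem hR0.le r
    have hmono : (∫ t in (0:ℝ)..(cpClamp R r), cauchyRHS C q τ θ g (cpSeq C q τ θ a R g n) t)
        ≤ ∫ t in (0:ℝ)..(cpClamp R r), cauchyRHS C q τ θ g (cpSeq C q τ θ a R g (n+1)) t := by
      refine intervalIntegral.integral_mono_on hc.1
        (F_integrable hg_cont hg_mono hg_pos hC hτ0 hθ hn.1.measurable (fun s _ => hn.2 s) hα hc)
        (F_integrable hg_cont hg_mono hg_pos hC hτ0 hθ hn1.1.measurable (fun s _ => hn1.2 s) hα hc)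
        fun x hx => ?_
      exact F_mono hg_cont hg_mono hg_pos hC hτ0 hθ hn.1.measurable hn1.1.measurable
        (fun s _ => hn.2 s) (fun s _ => hn1.2 s) (fun s _ => ih s) ⟨hx.1, hx.2.trans hc.2⟩
    show cpSeq C q τ θ a R g (n+1) r ≤ cpSeq C q τ θ a R g (n+2) r
    rw [cpSeq_succ_apply (n := n+1), cpSeq_succ_apply (n := n)]
    linarith


/-- The limit function. -/
noncomputable def cpLim (C q τ θ a R : ℝ) (g : ℝ → ℝ) : ℝ → ℝ :=
  fun r => ⨆ n, cpSeq C q τ θ a R g n r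

lemma cpSeq_mono : ∀ r, Monotone (fun n => cpSeq C q τ θ a R g n r) := fun r =>
  monotone_nat_of_le_succ fun n =>
    cpSeq_mono_succ hg_cont hg_mono hg_pos hC hτ0 hθ hα hR0 hRB n r

lemma cpSeq_tendsto :
    ∀ r, Tendsto (fun n => cpSeq C q τ θ a R g n r) atTop (𝓝 (cpLim C q τ θ a R g r)) := by
  intro r
  refine tendsto_atTop_ciSup (cpSeq_mono hg_cont hg_mono hg_pos hC hτ0 hθ hα hR0 hRB r) ?_
  refine ⟨a + 1, ?_⟩
  rintro x ⟨n, rfl⟩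
  exact (cpSeq_cont_box hg_cont hg_mono hg_pos hC hτ0 hθ hα hR0 hRB n).2 r |>.2

lemma cpLim_box : ∀ r, a ≤ cpLim C q τ θ a R g r ∧ cpLim C q τ θ a R g r ≤ a + 1 := by
  intro r
  have hbdd : BddAbove (Set.range fun n => cpSeq C q τ θ a R g n r) := by
    refine ⟨a + 1, ?_⟩
    rintro x ⟨n, rfl⟩
    exact (cpSeq_cont_box hg_cont hg_mono hg_pos hC hτ0 hθ hα hR0 hRB n).2 r |>.2
  constructor
  · have := le_ciSup hbdd 0
    rwa [cpSeq_zero_apply] at this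
  · exact ciSup_le fun n => (cpSeq_cont_box hg_cont hg_mono hg_pos hC hτ0 hθ hα hR0 hRB n).2 r |>.2

lemma cpLim_meas : Measurable (cpLim C q τ θ a R g) := by
  refine measurable_of_tendsto_metrizable
    (fun n => (cpSeq_cont_box hg_cont hg_mono hg_pos hC hτ0 hθ hα hR0 hRB n).1.measurable) ?_
  exact tendsto_pi_nhds.2 (cpSeq_tendsto hg_cont hg_mono hg_pos hC hτ0 hθ hα hR0 hRB)

lemma cpLim_box' : ∀ s ∈ Set.Icc (0:ℝ) R,
    a ≤ cpLim C q τ θ a R g s ∧ cpLim C q τ θ a R g s ≤ a + 1 :=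
  fun s _ => cpLim_box hg_cont hg_mono hg_pos hC hτ0 hθ hα hR0 hRB s

/-- the fixed point property -/
lemma cpLim_fixed {r : ℝ} (hr : r ∈ Set.Icc (0:ℝ) R) :
    cpLim C q τ θ a R g r
      = a + ∫ t in (0:ℝ)..r, cauchyRHS C q τ θ g (cpLim C q τ θ a R g) t := by
  set v := cpLim C q τ θ a R g with hv
  have hvm : Measurable v := cpLim_meas hg_cont hg_mono hg_pos hC hτ0 hθ hα hR0 hRB
  have hvbox := cpLim_box' hg_cont hg_mono hg_pos hC hτ0 hθ hα hR0 hRB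
  have hcb := cpSeq_cont_box hg_cont hg_mono hg_pos hC hτ0 hθ hα hR0 hRB
  have htend := cpSeq_tendsto hg_cont hg_mono hg_pos hC hτ0 hθ hα hR0 hRB
  -- limit of (n+1)-th terms
  have h1 : Tendsto (fun n => cpSeq C q τ θ a R g (n+1) r) atTop (𝓝 (v r)) :=
    (htend r).comp (tendsto_add_atTop_nat 1)
  -- inner convergence, for each x in (0, r]
  have hinner : ∀ x ∈ Set.Ioc (0:ℝ) r,
      Tendsto (fun n => cpInner τ g (cpSeq C q τ θ a R g n) x) atTop
        (𝓝 (cpInner τ g v x)) := by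
    intro x hx
    have hxmem : x ∈ Set.Icc (0:ℝ) R := ⟨hx.1.le, hx.2.trans hr.2⟩
    refine intervalIntegral.tendsto_integral_filter_of_dominated_convergence
      (fun s => g (a+1) * s ^ (τ - 1)) ?_ ?_ ?_ ?_
    · exact Eventually.of_forall fun n => inner_meas hg_cont (hcb n).1.measurable hx.1.le
    · refine Eventually.of_forall fun n => ae_of_all _ fun s hs => ?_
      rw [Set.uIoc_of_le hx.1.le] at hs
      have h1 : 0 ≤ s ^ (τ-1) := Real.rpow_nonneg hs.1.le _
      have h2 : 0 < g (cpSeq C q τ θ a R g n s) := hg_pos _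
      have h3 : g (cpSeq C q τ θ a R g n s) ≤ g (a+1) :=
        hg_mono ((hcb n).2 s).2
      rw [Real.norm_eq_abs, abs_of_nonneg (mul_nonneg h1 h2.le)]
      show s ^ (τ - 1) * g (cpSeq C q τ θ a R g n s) ≤ g (a+1) * s ^ (τ-1)
      nlinarith
    · exact (intervalIntegral.intervalIntegrable_rpow' (by linarith)).const_mul _
    · refine ae_of_all _ fun s hs => ?_
      exact ((hg_cont.tendsto _).comp (htend s)).const_mul _
  -- outer convergence
  have h3 : Tendsto (fun n => ∫ t in (0:ℝ)..r, cauchyRHS C q τ θ g (cpSeq C q τ θ a R g n) t)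
      atTop (𝓝 (∫ t in (0:ℝ)..r, cauchyRHS C q τ θ g v t)) := by
    refine intervalIntegral.tendsto_integral_filter_of_dominated_convergence
      (fun t => C * (g (a+1) / τ) ^ (1/θ) * t ^ (τ/θ - q)) ?_ ?_ ?_ ?_
    · exact Eventually.of_forall fun n =>
        F_meas hg_cont hg_mono hg_pos hτ0 hθ (hcb n).1.measurable (fun s _ => (hcb n).2 s) hr
    · refine Eventually.of_forall fun n => ae_of_all _ fun x hx => ?_
      rw [Set.uIoc_of_le hr.1] at hx
      have hxm : x ∈ Set.Icc (0:ℝ) R := ⟨hx.1.le, hx.2.trans hr.2⟩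
      rw [Real.norm_eq_abs, abs_of_nonneg (F_nonneg hg_cont hg_mono hg_pos hC hτ0 hθ
        (hcb n).1.measurable (fun s _ => (hcb n).2 s) hxm)]
      exact F_le hg_cont hg_mono hg_pos hC hτ0 hθ (hcb n).1.measurable
        (fun s _ => (hcb n).2 s) hxm
    · exact (intervalIntegral.intervalIntegrable_rpow' (by linarith)).const_mul _
    · refine ae_of_all _ fun x hx => ?_
      rw [Set.uIoc_of_le hr.1] at hx
      have := hinner x hx
      have hcontr : ContinuousAt (fun y : ℝ => y ^ (1/θ)) (cpInner τ g v x) :=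
        Real.continuousAt_rpow_const _ _ (Or.inr (by positivity))
      have h4 : Tendsto (fun n => (cpInner τ g (cpSeq C q τ θ a R g n) x) ^ (1/θ)) atTop
          (𝓝 ((cpInner τ g v x) ^ (1/θ))) := hcontr.tendsto.comp this
      exact h4.const_mul (C * x ^ (-q))
  -- identification
  have h5 : (fun n => cpSeq C q τ θ a R g (n+1) r)
      = fun n => a + ∫ t in (0:ℝ)..r, cauchyRHS C q τ θ g (cpSeq C q τ θ a R g n) t := by
    funext n
    rw [cpSeq_succ_apply, cpClamp_eq hr]
  rw [h5] at h1
  exact tendsto_nhds_unique h1 (tendsto_const_nhds.add h3)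

end seq

/-- Theorem 1.1 (local existence): for every initial value `a` there exist `R > 0`
and a solution `v` of (★) on `[0, R)` with right derivative `0` at the origin and
`v' > 0`, `v'' > 0` on `(0, R)`. -/
theorem local_existence
    (g : ℝ → ℝ) (hg_cont : Continuous g) (hg_mono : Monotone g)
    (hg_pos : ∀ t, 0 < g t)
    (C q θ τ a : ℝ) (hC : 0 < C) (hq : 0 ≤ q) (hθ : 0 < θ) (hτ : q * θ < τ) :
    ∃ R : ℝ, 0 < R ∧ ∃ v : ℝ → ℝ,
      SolvesCauchy C q τ θ a g (ENNReal.ofReal R) v ∧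
      HasDerivWithinAt v 0 (Set.Ici 0) 0 ∧
      ∀ r ∈ Set.Ioo 0 R,
        0 < deriv v r ∧ DifferentiableAt ℝ (deriv v) r ∧ 0 < deriv (deriv v) r := by
  have hτ0 : 0 < τ := lt_of_le_of_lt (mul_nonneg hq hθ.le) hτ
  have hα : 0 < τ/θ - q := by
    rw [sub_pos, lt_div_iff₀ hθ]; linarith
  set β : ℝ := τ/θ - q + 1 with hβdef
  have hβ : 0 < β := by rw [hβdef]; linarith
  have hM : 0 < g (a+1) := hg_pos _
  set B : ℝ := C * (g (a+1) / τ) ^ (1/θ) with hBdef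
  have hB : 0 < B := by positivity
  set R : ℝ := (β/(B+1)) ^ (1/β) with hRdef
  have hR0 : 0 < R := Real.rpow_pos_of_pos (by positivity) _
  have hRB : C * (g (a+1) / τ) ^ (1/θ) * R ^ (τ/θ - q + 1) ≤ τ/θ - q + 1 := by
    have h1 : R ^ β = β/(B+1) := by
      rw [hRdef, ← Real.rpow_mul (by positivity), one_div_mul_cancel hβ.ne', Real.rpow_one]
    show B * R ^ β ≤ β
    rw [h1]
    have h2 : B/(B+1) ≤ 1 := by
      rw [div_le_one (by positivity)]; linarith
    calc B * (β/(B+1)) = β * (B/(B+1)) := by ring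
      _ ≤ β * 1 := mul_le_mul_of_nonneg_left h2 hβ.le
      _ = β := mul_one β
  set v : ℝ → ℝ := cpLim C q τ θ a R g with hvdef
  have hvm : Measurable v := cpLim_meas hg_cont hg_mono hg_pos hC hτ0 hθ hα hR0 hRB
  have hvbox : ∀ s ∈ Set.Icc (0:ℝ) R, a ≤ v s ∧ v s ≤ a + 1 :=
    cpLim_box' hg_cont hg_mono hg_pos hC hτ0 hθ hα hR0 hRB
  have hfix : ∀ {r : ℝ}, r ∈ Set.Icc (0:ℝ) R →
      v r = a + ∫ t in (0:ℝ)..r, cauchyRHS C q τ θ g v t :=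
    fun hr => cpLim_fixed hg_cont hg_mono hg_pos hC hτ0 hθ hα hR0 hRB hr
  have hFint : ∀ {r : ℝ}, r ∈ Set.Icc (0:ℝ) R →
      IntervalIntegrable (cauchyRHS C q τ θ g v) volume 0 r :=
    fun hr => F_integrable hg_cont hg_mono hg_pos hC hτ0 hθ hvm hvbox hα hr
  have hFcont : ContinuousOn (cauchyRHS C q τ θ g v) (Ioc 0 R) :=
    F_contOn_Ioc hg_cont hg_mono hg_pos hτ0 hθ hvm hvbox ⟨hR0.le, le_rfl⟩
  set P : ℝ → ℝ := fun y => a + ∫ t in (0:ℝ)..y, cauchyRHS C q τ θ g v t with hPdef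
  have hPcont : ContinuousOn P (Icc 0 R) := by
    have := intervalIntegral.continuousOn_primitive_interval'
      (hFint ⟨hR0.le, le_rfl⟩) (Set.left_mem_uIcc (a := (0:ℝ)) (b := R))
    rw [Set.uIcc_of_le hR0.le] at this
    exact continuousOn_const.add this
  have hvP : ∀ x ∈ Icc (0:ℝ) R, v x = P x := fun x hx => hfix hx
  have hderiv : ∀ r ∈ Ioo (0:ℝ) R, HasDerivAt v (cauchyRHS C q τ θ g v r) r := by
    intro r hrm
    have hne : Ioo (0:ℝ) R ∈ 𝓝 r := Ioo_mem_nhds hrm.1 hrm.2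
    have hne' : Ioc (0:ℝ) R ∈ 𝓝 r := mem_of_superset hne Ioo_subset_Ioc_self
    have hmeasAt : StronglyMeasurableAtFilter (cauchyRHS C q τ θ g v) (𝓝 r) volume :=
      ⟨Ioc 0 R, hne', hFcont.aestronglyMeasurable measurableSet_Ioc⟩
    have hcAt : ContinuousAt (cauchyRHS C q τ θ g v) r := hFcont.continuousAt hne'
    have hP : HasDerivAt P (cauchyRHS C q τ θ g v r) r :=
      (intervalIntegral.integral_hasDerivAt_right (hFint ⟨hrm.1.le, hrm.2.le⟩)
        hmeasAt hcAt).const_add a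
    exact hP.congr_of_eventuallyEq
      (eventually_of_mem hne fun x hx => hvP x ⟨hx.1.le, hx.2.le⟩)
  refine ⟨R, hR0, v, ⟨?_, ?_, ?_⟩, ?_, ?_⟩
  · -- continuity
    have hsub : {r : ℝ | 0 ≤ r ∧ ENNReal.ofReal r < ENNReal.ofReal R} ⊆ Icc 0 R := by
      rintro x ⟨h1, h2⟩
      exact ⟨h1, ((ENNReal.ofReal_lt_ofReal_iff hR0).mp h2).le⟩
    exact (hPcont.mono hsub).congr fun x hx => hvP x (hsub hx)
  · -- v 0 = a
    rw [hfix ⟨le_rfl, hR0.le⟩, intervalIntegral.integral_same, add_zero]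
  · -- derivative on (0, R)
    intro r h0 hlt
    exact hderiv r ⟨h0, (ENNReal.ofReal_lt_ofReal_iff hR0).mp hlt⟩
  · -- right derivative at 0
    have hF0 : cauchyRHS C q τ θ g v 0 = 0 := by
      rw [cauchyRHS_eq]
      have h1 : cpInner τ g v 0 = 0 := intervalIntegral.integral_same
      rw [h1, Real.zero_rpow (by positivity : (1:ℝ)/θ ≠ 0), mul_zero]
    have hmem0 : Ioc (0:ℝ) R ∈ 𝓝[>] (0:ℝ) := Ioc_mem_nhdsGT_of_mem ⟨le_rfl, hR0⟩
    have hms : StronglyMeasurableAtFilter (cauchyRHS C q τ θ g v) (𝓝[>] (0:ℝ)) volume :=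
      ⟨Ioc 0 R, hmem0, hFcont.aestronglyMeasurable measurableSet_Ioc⟩
    have hcw : ContinuousWithinAt (cauchyRHS C q τ θ g v) (Ioi 0) 0 := by
      rw [ContinuousWithinAt, hF0]
      refine squeeze_zero'
        (eventually_of_mem hmem0 fun t ht =>
          F_nonneg hg_cont hg_mono hg_pos hC hτ0 hθ hvm hvbox ⟨ht.1.le, ht.2⟩)
        (eventually_of_mem hmem0 fun t ht =>
          F_le hg_cont hg_mono hg_pos hC hτ0 hθ hvm hvbox ⟨ht.1.le, ht.2⟩) ?_
      have h1 : Tendsto (fun t : ℝ => t ^ (τ/θ - q)) (𝓝 0) (𝓝 ((0:ℝ) ^ (τ/θ - q))) :=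
        (Real.continuousAt_rpow_const 0 _ (Or.inr hα.le)).tendsto
      rw [Real.zero_rpow hα.ne'] at h1
      have h2 : Tendsto (fun t : ℝ => C * (g (a+1) / τ) ^ (1/θ) * t ^ (τ/θ - q))
          (𝓝[>] (0:ℝ)) (𝓝 (C * (g (a+1) / τ) ^ (1/θ) * 0)) :=
        (h1.mono_left nhdsWithin_le_nhds).const_mul _
      simpa using h2
    have hP0 : HasDerivWithinAt P (cauchyRHS C q τ θ g v 0) (Ici 0) 0 :=
      (intervalIntegral.integral_hasDerivWithinAt_right (IntervalIntegrable.refl)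
        hms hcw).const_add a
    have h3 : HasDerivWithinAt v (cauchyRHS C q τ θ g v 0) (Ici 0) 0 :=
      hP0.congr_of_eventuallyEq
        (eventually_of_mem (Icc_mem_nhdsGE_of_mem ⟨le_rfl, hR0⟩)
          fun x hx => hvP x hx)
        (hvP 0 ⟨le_rfl, hR0.le⟩)
    rwa [hF0] at h3
  · -- second derivative
    intro r hrm
    have hrIcc : r ∈ Icc (0:ℝ) R := ⟨hrm.1.le, hrm.2.le⟩
    have hd : HasDerivAt v (cauchyRHS C q τ θ g v r) r := hderiv r hrm
    have hga : 0 < g a := hg_pos a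
    have hw_pos : 0 < cpInner τ g v r := by
      have h1 := inner_ge hg_cont hg_mono hg_pos hτ0 hvm hvbox hrIcc
      have h2 : 0 < r ^ τ := Real.rpow_pos_of_pos hrm.1 _
      have : 0 < g a * r ^ τ / τ := by positivity
      linarith
    set w : ℝ := cpInner τ g v r with hwdef
    have hFpos : 0 < cauchyRHS C q τ θ g v r := by
      rw [cauchyRHS_eq]
      have h1 : 0 < r ^ (-q) := Real.rpow_pos_of_pos hrm.1 _
      have h2 : 0 < w ^ (1/θ) := Real.rpow_pos_of_pos hw_pos _
      positivity
    -- monotonicity of v on [0, R]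
    have hvmono : ∀ x y : ℝ, 0 ≤ x → x ≤ y → y ≤ R → v x ≤ v y := by
      intro x y hx hxy hyR
      have hxm : x ∈ Icc (0:ℝ) R := ⟨hx, hxy.trans hyR⟩
      have hym : y ∈ Icc (0:ℝ) R := ⟨hx.trans hxy, hyR⟩
      have e1 := hfix hxm
      have e2 := hfix hym
      have hsub := intervalIntegral.integral_interval_sub_left (hFint hym) (hFint hxm)
      have hnn : 0 ≤ ∫ t in x..y, cauchyRHS C q τ θ g v t :=
        intervalIntegral.integral_nonneg hxy fun t ht =>
          F_nonneg hg_cont hg_mono hg_pos hC hτ0 hθ hvm hvbox ⟨hx.trans ht.1, ht.2.trans hyR⟩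
      linarith [hsub, hnn]
    -- continuity of the inner integrand near r
    have hvcont : ContinuousOn v (Ioo 0 R) :=
      (hPcont.mono Ioo_subset_Icc_self).congr fun x hx => hvP x ⟨hx.1.le, hx.2.le⟩
    have hGcont : ContinuousOn (fun s : ℝ => s ^ (τ - 1) * g (v s)) (Ioo 0 R) :=
      (continuousOn_id.rpow_const fun x hx => Or.inl hx.1.ne').mul
        (hg_cont.comp_continuousOn hvcont)
    have hne : Ioo (0:ℝ) R ∈ 𝓝 r := Ioo_mem_nhds hrm.1 hrm.2
    have hw : HasDerivAt (cpInner τ g v) (r ^ (τ - 1) * g (v r)) r :=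
      intervalIntegral.integral_hasDerivAt_right
        (inner_integrable hg_cont hg_mono hg_pos hτ0 hvm hvbox hrIcc)
        ⟨Ioo 0 R, hne, hGcont.aestronglyMeasurable measurableSet_Ioo⟩
        (hGcont.continuousAt hne)
    set w' : ℝ := r ^ (τ - 1) * g (v r) with hw'def
    have hpow : HasDerivAt (fun t : ℝ => C * t ^ (-q)) (C * (-q * r ^ (-q - 1))) r :=
      (Real.hasDerivAt_rpow_const (p := -q) (Or.inl hrm.1.ne')).const_mul C
    have hrpowd : HasDerivAt (fun t : ℝ => (cpInner τ g v t) ^ (1/θ))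
        (w' * (1/θ) * w ^ (1/θ - 1)) r := hw.rpow_const (Or.inl hw_pos.ne')
    have hF' : HasDerivAt (cauchyRHS C q τ θ g v)
        (C * (-q * r ^ (-q - 1)) * w ^ (1/θ) + (C * r ^ (-q)) * (w' * (1/θ) * w ^ (1/θ - 1)))
        r := by
      have := hpow.mul hrpowd
      exact this
    -- the nice form of the second derivative
    have e1 : r ^ (-q) = r ^ (-q - 1) * r := by
      rw [← Real.rpow_add_one hrm.1.ne' (-q - 1)]; congr 1; ring
    have e2 : w ^ (1/θ) = w ^ (1/θ - 1) * w := by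
      rw [← Real.rpow_add_one hw_pos.ne' (1/θ - 1)]; congr 1; ring
    have e3 : r ^ (τ - 1) * r = r ^ τ := by
      rw [← Real.rpow_add_one hrm.1.ne' (τ - 1)]; congr 1; ring
    have key1 : w ≤ g (v r) * r ^ τ / τ := by
      rw [hwdef, ← rpow_integral_eq hτ0 hrm.1.le (g (v r))]
      refine intervalIntegral.integral_mono_on hrm.1.le
        (inner_integrable hg_cont hg_mono hg_pos hτ0 hvm hvbox hrIcc)
        ((intervalIntegral.intervalIntegrable_rpow' (by linarith)).mul_const _)
        fun x hx => ?_
      exact mul_le_mul_of_nonneg_left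
        (hg_mono (hvmono x r hx.1 hx.2 hrm.2.le)) (Real.rpow_nonneg hx.1 _)
    have key2 : τ * w ≤ r * w' := by
      have : r * w' = g (v r) * r ^ τ := by rw [hw'def]; rw [← e3]; ring
      rw [this]
      calc τ * w ≤ τ * (g (v r) * r ^ τ / τ) := mul_le_mul_of_nonneg_left key1 hτ0.le
        _ = g (v r) * r ^ τ := by field_simp
    set D : ℝ := C * (-q * r ^ (-q - 1)) * w ^ (1/θ) + (C * r ^ (-q)) * (w' * (1/θ) * w ^ (1/θ - 1))
      with hDdef
    have hDeq : D = C * r ^ (-q - 1) * w ^ (1/θ - 1) * (r * w' / θ - q * w) := by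
      rw [hDdef, e1, e2]
      field_simp
      ring
    have hDpos : 0 < D := by
      rw [hDeq]
      have h1 : 0 < r ^ (-q - 1) := Real.rpow_pos_of_pos hrm.1 _
      have h2 : 0 < w ^ (1/θ - 1) := Real.rpow_pos_of_pos hw_pos _
      have h3 : 0 < r * w' / θ - q * w := by
        have h5 : q * w < τ / θ * w := by nlinarith [hw_pos, hα]
        have h6 : τ / θ * w ≤ r * w' / θ := by
          rw [div_mul_eq_mul_div]
          exact (div_le_div_iff_of_pos_right hθ).mpr key2
        linarith
      positivity
    have hveq : deriv v =ᶠ[𝓝 r] cauchyRHS C q τ θ g v :=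
      eventually_of_mem hne fun x hx => (hderiv x hx).deriv
    have hdd : HasDerivAt (deriv v) D r := by
      rw [hDdef]
      exact hF'.congr_of_eventuallyEq hveq
    refine ⟨by rw [hd.deriv]; exact hFpos, hdd.differentiableAt, by rw [hdd.deriv]; exact hDpos⟩
end

section
/- Let g : ℝ → ℝ be continuous, non-decreasing and everywhere positive, let C > 0, q ≥ 0, θ > 0 and τ > qθ be constants, let R ∈ (0,∞], and let v : [0,R) → ℝ solve the Cauchy problem (★) with v(0) = a. Then the limit as r → 0⁺ of v''(r) / r^{(τ − θ(q+1))/θ} equals C · (1/θ − q/τ) · τ^{1 − 1/θ} · g(a)^{1/θ}. In particular, if τ > θ(q+1) then v''(r) → 0 as r → 0⁺, and if τ = θ(q+1) then v''(r) → C · (g(a)/τ)^{1/θ} as r → 0⁺. -/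
open Real MeasureTheory Set Filter Topology ENNReal

/-- Asymptotics of `v''` near the origin (underlying cases (i), (ii) of
Theorems 1.1 and 1.2): `v''(r)/r^{(τ-θ(q+1))/θ} → C(1/θ - q/τ)τ^{1-1/θ} g(a)^{1/θ}`
as `r → 0⁺`; in particular `v''(r) → 0` if `τ > θ(q+1)` and
`v''(r) → C (g(a)/τ)^{1/θ}` if `τ = θ(q+1)`. -/
theorem second_deriv_asymptotics
    (g : ℝ → ℝ) (hg_cont : Continuous g) (hg_mono : Monotone g) (hg_pos : ∀ t, 0 < g t)
    (C q θ τ a : ℝ) (hC : 0 < C) (hq : 0 ≤ q) (hθ : 0 < θ) (hτ : q * θ < τ)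
    (R : ℝ≥0∞) (hR : 0 < R) (v : ℝ → ℝ)
    (hv : SolvesCauchy C q τ θ a g R v) :
    Tendsto (fun r => deriv (deriv v) r / r ^ ((τ - θ * (q + 1)) / θ)) (𝓝[>] 0)
      (𝓝 (C * (1 / θ - q / τ) * τ ^ (1 - 1 / θ) * g a ^ (1 / θ))) ∧
    (θ * (q + 1) < τ → Tendsto (fun r => deriv (deriv v) r) (𝓝[>] 0) (𝓝 0)) ∧
    (τ = θ * (q + 1) → Tendsto (fun r => deriv (deriv v) r) (𝓝[>] 0)
      (𝓝 (C * (g a / τ) ^ (1 / θ)))) := by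
  obtain ⟨hvc, hv0, hv'⟩ := hv
  have hτ0 : 0 < τ := lt_of_le_of_lt (mul_nonneg hq hθ.le) hτ
  have hga : 0 < g a := hg_pos a
  obtain ⟨δ, hδ0, hδR⟩ : ∃ δ : ℝ, 0 < δ ∧ ENNReal.ofReal δ < R := by
    rcases eq_or_ne R ⊤ with h | h
    · exact ⟨1, one_pos, by simp [h]⟩
    · have h0 : 0 < R.toReal := ENNReal.toReal_pos hR.ne' h
      exact ⟨R.toReal / 2, by positivity,
        (ENNReal.ofReal_lt_iff_lt_toReal (by positivity) h).2 (by linarith)⟩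
  have hmemS : ∀ r : ℝ, 0 ≤ r → r ≤ δ → (0 ≤ r ∧ ENNReal.ofReal r < R) := fun r h1 h2 =>
    ⟨h1, lt_of_le_of_lt (ENNReal.ofReal_le_ofReal h2) hδR⟩
  have hvδ : ContinuousOn v (Icc 0 δ) := hvc.mono (fun r hr => hmemS r hr.1 hr.2)
  have hva : Tendsto v (𝓝[>] (0:ℝ)) (𝓝 a) := by
    have h1 : Tendsto v (𝓝[Icc 0 δ] (0:ℝ)) (𝓝 a) := by
      rw [← hv0]; exact hvδ 0 ⟨le_refl 0, hδ0.le⟩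
    rw [← nhdsWithin_Ioo_eq_nhdsGT hδ0]
    exact h1.mono_left (nhdsWithin_mono _ Ioo_subset_Icc_self)
  set f : ℝ → ℝ := fun s => s ^ (τ - 1) * g (v s) with hfdef
  set F : ℝ → ℝ := fun r => ∫ s in (0:ℝ)..r, f s with hFdef
  -- interval integrability
  have hInt : ∀ r ∈ Icc (0:ℝ) δ, IntervalIntegrable f volume 0 r := by
    intro r hr
    have h1 : IntervalIntegrable (fun s : ℝ => s ^ (τ - 1)) volume 0 r :=
      intervalIntegral.intervalIntegrable_rpow' (by linarith)
    have h2 : ContinuousOn (fun s => g (v s)) (uIcc 0 r) := by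
      rw [uIcc_of_le hr.1]
      exact hg_cont.comp_continuousOn (hvδ.mono (Icc_subset_Icc le_rfl hr.2))
    exact h1.mul_continuousOn h2
  have hvcAt : ∀ r ∈ Ioo (0:ℝ) δ, ContinuousAt v r := fun r hr =>
    (hv' r hr.1 (hmemS r hr.1.le hr.2.le).2).continuousAt
  have hfCont : ∀ r ∈ Ioo (0:ℝ) δ, ContinuousAt f r := by
    intro r hr
    have h1 : ContinuousAt (fun s : ℝ => s ^ (τ - 1)) r :=
      Real.continuousAt_rpow_const r _ (Or.inl hr.1.ne')
    exact h1.mul (hg_cont.continuousAt.comp (hvcAt r hr))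
  have hFderiv : ∀ r ∈ Ioo (0:ℝ) δ, HasDerivAt F (r ^ (τ - 1) * g (v r)) r := by
    intro r hr
    have hm : ContinuousOn f (Ioo 0 δ) := fun x hx => (hfCont x hx).continuousWithinAt
    exact intervalIntegral.integral_hasDerivAt_right (hInt r ⟨hr.1.le, hr.2.le⟩)
      (hm.stronglyMeasurableAtFilter isOpen_Ioo r hr) (hfCont r hr)
  have hFpos : ∀ r ∈ Ioo (0:ℝ) δ, 0 < F r := fun r hr =>
    intervalIntegral.intervalIntegral_pos_of_pos_on (hInt r ⟨hr.1.le, hr.2.le⟩)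
      (fun x hx => mul_pos (Real.rpow_pos_of_pos hx.1 _) (hg_pos _)) hr.1
  have hF0 : Tendsto F (𝓝[>] (0:ℝ)) (𝓝 0) := by
    have hc : ContinuousOn F (uIcc 0 δ) :=
      intervalIntegral.continuousOn_primitive_interval' (hInt δ ⟨hδ0.le, le_rfl⟩)
        left_mem_uIcc
    have h1 : Tendsto F (𝓝[uIcc 0 δ] (0:ℝ)) (𝓝 0) := by
      have h2 : Tendsto F (𝓝[uIcc 0 δ] (0:ℝ)) (𝓝 (F 0)) := hc 0 left_mem_uIcc
      rwa [show F 0 = 0 by simp [hFdef]] at h2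
    rw [← nhdsWithin_Ioo_eq_nhdsGT hδ0]
    refine h1.mono_left (nhdsWithin_mono _ ?_)
    rw [uIcc_of_le hδ0.le]
    exact Ioo_subset_Icc_self
  have hgv : Tendsto (fun r => g (v r)) (𝓝[>] (0:ℝ)) (𝓝 (g a)) :=
    (hg_cont.tendsto a).comp hva
  -- L'Hopital: F r / r^τ → g a / τ
  have hU : Tendsto (fun r => F r / r ^ τ) (𝓝[>] (0:ℝ)) (𝓝 (g a / τ)) := by
    refine HasDerivAt.lhopital_zero_right_on_Ioo hδ0
      (f' := fun r => r ^ (τ - 1) * g (v r)) (g' := fun r => τ * r ^ (τ - 1))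
      hFderiv (fun x hx => Real.hasDerivAt_rpow_const (Or.inl hx.1.ne'))
      (fun x hx => (mul_pos hτ0 (Real.rpow_pos_of_pos hx.1 _)).ne') hF0 ?_ ?_
    · have h0 : Tendsto (fun r : ℝ => r ^ τ) (𝓝 (0:ℝ)) (𝓝 ((0:ℝ) ^ τ)) :=
        (Real.continuousAt_rpow_const 0 τ (Or.inr hτ0.le)).tendsto
      rw [Real.zero_rpow hτ0.ne'] at h0
      exact h0.mono_left nhdsWithin_le_nhds
    · have heq : ∀ᶠ r in 𝓝[>] (0:ℝ),
          g (v r) / τ = r ^ (τ - 1) * g (v r) / (τ * r ^ (τ - 1)) := by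
        filter_upwards [self_mem_nhdsWithin] with r (hr : 0 < r)
        have h1 : r ^ (τ - 1) ≠ 0 := (Real.rpow_pos_of_pos hr _).ne'
        field_simp
      exact (hgv.div_const τ).congr' heq
  -- the function to which everything tends
  have hUpow : ∀ p : ℝ, Tendsto (fun r => (F r / r ^ τ) ^ p) (𝓝[>] (0:ℝ))
      (𝓝 ((g a / τ) ^ p)) := fun p =>
    ((Real.continuousAt_rpow_const _ p (Or.inl (div_pos hga hτ0).ne')).tendsto).comp hU
  have hL : Tendsto (fun r => C * (-q * (F r / r ^ τ) ^ (1 / θ) +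
      1 / θ * (F r / r ^ τ) ^ (1 / θ - 1) * g (v r))) (𝓝[>] (0:ℝ))
      (𝓝 (C * (-q * (g a / τ) ^ (1 / θ) + 1 / θ * (g a / τ) ^ (1 / θ - 1) * g a))) := by
    exact (((hUpow (1 / θ)).const_mul (-q)).add
      (((hUpow (1 / θ - 1)).const_mul (1 / θ)).mul hgv)).const_mul C
  -- second derivative formula
  have hdd : ∀ r ∈ Ioo (0:ℝ) δ, deriv (deriv v) r =
      C * (-q * r ^ (-q - 1)) * F r ^ (1 / θ) +
      C * r ^ (-q) * (r ^ (τ - 1) * g (v r) * (1 / θ) * F r ^ (1 / θ - 1)) := by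
    intro r hr
    have hΦ : HasDerivAt (fun x => C * x ^ (-q) * F x ^ (1 / θ))
        (C * (-q * r ^ (-q - 1)) * F r ^ (1 / θ) +
         C * r ^ (-q) * (r ^ (τ - 1) * g (v r) * (1 / θ) * F r ^ (1 / θ - 1))) r := by
      have h1 : HasDerivAt (fun x : ℝ => C * x ^ (-q)) (C * (-q * r ^ (-q - 1))) r :=
        (Real.hasDerivAt_rpow_const (p := -q) (Or.inl hr.1.ne')).const_mul C
      have h2 : HasDerivAt (fun x => F x ^ (1 / θ))
          (r ^ (τ - 1) * g (v r) * (1 / θ) * F r ^ (1 / θ - 1)) r :=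
        (hFderiv r hr).rpow_const (Or.inl (hFpos r hr).ne')
      exact h1.mul h2
    have heq : deriv v =ᶠ[𝓝 r] fun x => C * x ^ (-q) * F x ^ (1 / θ) := by
      filter_upwards [isOpen_Ioo.mem_nhds hr] with x hx
      exact (hv' x hx.1 (hmemS x hx.1.le hx.2.le).2).deriv
    exact (hΦ.congr_of_eventuallyEq heq).deriv
  -- quotient identity
  have key : ∀ r ∈ Ioo (0:ℝ) δ, deriv (deriv v) r / r ^ ((τ - θ * (q + 1)) / θ) =
      C * (-q * (F r / r ^ τ) ^ (1 / θ) +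
        1 / θ * (F r / r ^ τ) ^ (1 / θ - 1) * g (v r)) := by
    intro r hr
    have hr0 : 0 < r := hr.1
    have hrτ : (0:ℝ) < r ^ τ := Real.rpow_pos_of_pos hr0 τ
    set u : ℝ := F r / r ^ τ with hu
    have hu0 : 0 < u := div_pos (hFpos r hr) hrτ
    have hFr : F r = u * r ^ τ := by rw [hu]; field_simp
    have f1 : F r ^ (1 / θ) = u ^ (1 / θ) * r ^ (τ * (1 / θ)) := by
      rw [hFr, Real.mul_rpow hu0.le hrτ.le, Real.rpow_mul hr0.le]
    have f2 : F r ^ (1 / θ - 1) = u ^ (1 / θ - 1) * r ^ (τ * (1 / θ - 1)) := by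
      rw [hFr, Real.mul_rpow hu0.le hrτ.le, Real.rpow_mul hr0.le]
    have e1 : r ^ (-q - 1) * r ^ (τ * (1 / θ)) = r ^ ((τ - θ * (q + 1)) / θ) := by
      rw [← Real.rpow_add hr0]; congr 1; field_simp; ring
    have e2 : r ^ (-q) * (r ^ (τ - 1) * r ^ (τ * (1 / θ - 1))) =
        r ^ ((τ - θ * (q + 1)) / θ) := by
      rw [← Real.rpow_add hr0, ← Real.rpow_add hr0]; congr 1; field_simp; ring
    have hγ : (0:ℝ) < r ^ ((τ - θ * (q + 1)) / θ) := Real.rpow_pos_of_pos hr0 _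
    rw [hdd r hr, f1, f2, div_eq_iff hγ.ne']
    linear_combination (C * (-q) * u ^ (1 / θ)) * e1 +
      (C * (1 / θ) * u ^ (1 / θ - 1) * g (v r)) * e2
  have hIoo : Ioo (0:ℝ) δ ∈ 𝓝[>] (0:ℝ) := Ioo_mem_nhdsGT_of_mem ⟨le_rfl, hδ0⟩
  have main : Tendsto (fun r => deriv (deriv v) r / r ^ ((τ - θ * (q + 1)) / θ))
      (𝓝[>] (0:ℝ))
      (𝓝 (C * (1 / θ - q / τ) * τ ^ (1 - 1 / θ) * g a ^ (1 / θ))) := by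
    have hval : C * (-q * (g a / τ) ^ (1 / θ) + 1 / θ * (g a / τ) ^ (1 / θ - 1) * g a) =
        C * (1 / θ - q / τ) * τ ^ (1 - 1 / θ) * g a ^ (1 / θ) := by
      have A : (g a / τ) ^ (1 / θ) = g a ^ (1 / θ) * τ ^ (-(1 / θ)) := by
        rw [Real.div_rpow hga.le hτ0.le, Real.rpow_neg hτ0.le, div_eq_mul_inv]
      have B : (g a / τ) ^ (1 / θ - 1) = (g a / τ) ^ (1 / θ) / (g a / τ) := by
        rw [Real.rpow_sub (div_pos hga hτ0), Real.rpow_one]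
      have Cq : τ ^ (1 - 1 / θ) = τ * τ ^ (-(1 / θ)) := by
        rw [show (1:ℝ) - 1 / θ = 1 + -(1 / θ) by ring, Real.rpow_add hτ0, Real.rpow_one]
      rw [B, A, Cq]
      field_simp
      ring
    rw [← hval]
    exact hL.congr' (by filter_upwards [hIoo] with r hr using (key r hr).symm)
  refine ⟨main, fun hlt => ?_, fun heq => ?_⟩
  · have hγ0 : 0 < (τ - θ * (q + 1)) / θ := by
      apply div_pos _ hθ; linarith
    have hrγ : Tendsto (fun r : ℝ => r ^ ((τ - θ * (q + 1)) / θ)) (𝓝[>] (0:ℝ)) (𝓝 0) := by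
      have h0 : Tendsto (fun r : ℝ => r ^ ((τ - θ * (q + 1)) / θ)) (𝓝 (0:ℝ))
          (𝓝 ((0:ℝ) ^ ((τ - θ * (q + 1)) / θ))) :=
        (Real.continuousAt_rpow_const 0 _ (Or.inr hγ0.le)).tendsto
      rw [Real.zero_rpow hγ0.ne'] at h0
      exact h0.mono_left nhdsWithin_le_nhds
    have := main.mul hrγ
    rw [mul_zero] at this
    refine this.congr' ?_
    filter_upwards [self_mem_nhdsWithin] with r (hr : 0 < r)
    have : r ^ ((τ - θ * (q + 1)) / θ) ≠ 0 := (Real.rpow_pos_of_pos hr _).ne'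
    field_simp
  · have h0 : (τ - θ * (q + 1)) / θ = 0 := by rw [heq]; simp
    have hval2 : C * (1 / θ - q / τ) * τ ^ (1 - 1 / θ) * g a ^ (1 / θ) =
        C * (g a / τ) ^ (1 / θ) := by
      have A : (g a / τ) ^ (1 / θ) = g a ^ (1 / θ) * τ ^ (-(1 / θ)) := by
        rw [Real.div_rpow hga.le hτ0.le, Real.rpow_neg hτ0.le, div_eq_mul_inv]
      have Cq : τ ^ (1 - 1 / θ) = τ * τ ^ (-(1 / θ)) := by
        rw [show (1:ℝ) - 1 / θ = 1 + -(1 / θ) by ring, Real.rpow_add hτ0, Real.rpow_one]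
      rw [A, Cq]
      have h1 : 1 / θ - q / τ = 1 / τ := by
        rw [heq]; field_simp; ring
      rw [h1]
      field_simp
    rw [← hval2]
    have := main
    simp only [h0, Real.rpow_zero, div_one] at this
    exact this
end

section
/- Let g : ℝ → ℝ be continuous, non-decreasing and everywhere positive, let C > 0, q ≥ 0, θ > 0 be constants with θq < τ < θ(q+1), let R ∈ (0,∞), and let v : [0,R) → ℝ solve the Cauchy problem (★) with v(0) = a. Then for every δ with 1 < δ < θ/(θ(q+1) − τ) and every R' ∈ (0,R), the integral ∫_0^{R'} |v''(r)|^δ dr is finite; that is, v belongs to W^{2,δ} on (0,R'). -/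
open Real MeasureTheory Set Filter Topology ENNReal

/-- Case (iii) of Theorem 1.1: when `θq < τ < θ(q+1)`, any solution of (★) on `[0, R)`
belongs to `W^{2,δ}(0, R')` for every `1 < δ < θ/(θ(q+1) - τ)` and `R' ∈ (0, R)`,
i.e. `∫_0^{R'} |v''(r)|^δ dr < ∞`. -/
theorem W2delta_regularity
    (g : ℝ → ℝ) (hg_cont : Continuous g) (hg_mono : Monotone g) (hg_pos : ∀ t, 0 < g t)
    (C q θ τ a : ℝ) (hC : 0 < C) (hq : 0 ≤ q) (hθ : 0 < θ)
    (hτ1 : θ * q < τ) (hτ2 : τ < θ * (q + 1))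
    (R : ℝ) (hR : 0 < R) (v : ℝ → ℝ)
    (hv : SolvesCauchy C q τ θ a g (ENNReal.ofReal R) v)
    (δ : ℝ) (hδ1 : 1 < δ) (hδ2 : δ < θ / (θ * (q + 1) - τ))
    (R' : ℝ) (hR' : R' ∈ Set.Ioo 0 R) :
    IntegrableOn (fun r => |deriv (deriv v) r| ^ δ) (Set.Ioo 0 R') := by
  obtain ⟨hR'0, hR'R⟩ := hR'
  obtain ⟨hv_cont, hv0, hv_deriv⟩ := hv
  have hτ0 : 0 < τ := lt_of_le_of_lt (mul_nonneg hθ.le hq) hτ1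
  have hθτ : 0 < θ * (q + 1) - τ := by linarith
  have hδ0 : 0 < δ := lt_trans one_pos hδ1
  set R'' := (R' + R) / 2 with hR''def
  have hR''1 : R' < R'' := by rw [hR''def]; linarith
  have hR''2 : R'' < R := by rw [hR''def]; linarith
  have hR''0 : 0 < R'' := lt_trans hR'0 hR''1
  have hsub : Set.Icc 0 R'' ⊆ {r : ℝ | 0 ≤ r ∧ ENNReal.ofReal r < ENNReal.ofReal R} := by
    intro x hx
    exact ⟨hx.1, (ENNReal.ofReal_lt_ofReal_iff hR).2 (lt_of_le_of_lt hx.2 hR''2)⟩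
  have hIoosub : Set.Ioo 0 R ⊆ {r : ℝ | 0 ≤ r ∧ ENNReal.ofReal r < ENNReal.ofReal R} :=
    fun x hx => ⟨hx.1.le, (ENNReal.ofReal_lt_ofReal_iff hR).2 hx.2⟩
  have hv_contIcc : ContinuousOn v (Set.Icc 0 R'') := hv_cont.mono hsub
  have hv_contIoo : ContinuousOn v (Set.Ioo 0 R) := hv_cont.mono hIoosub
  have hgv_cont : ContinuousOn (fun s => g (v s)) (Set.Icc 0 R'') :=
    hg_cont.comp_continuousOn hv_contIcc
  obtain ⟨sM, hsM, hMmax⟩ :=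
    isCompact_Icc.exists_isMaxOn (Set.nonempty_Icc.2 hR''0.le) hgv_cont
  obtain ⟨sm, hsm, hmmin⟩ :=
    isCompact_Icc.exists_isMinOn (Set.nonempty_Icc.2 hR''0.le) hgv_cont
  set M := g (v sM) with hMdef
  set m := g (v sm) with hmdef
  have hm0 : 0 < m := hg_pos _
  have hM0 : 0 < M := hg_pos _
  have hgvM : ∀ s ∈ Set.Icc (0:ℝ) R'', g (v s) ≤ M := fun s hs => isMaxOn_iff.1 hMmax s hs
  have hgvm : ∀ s ∈ Set.Icc (0:ℝ) R'', m ≤ g (v s) := fun s hs => isMinOn_iff.1 hmmin s hs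
  set f := fun s : ℝ => s ^ (τ - 1) * g (v s) with hfdef
  set F := fun r : ℝ => ∫ s in (0:ℝ)..r, f s with hFdef
  have hf_cont : ContinuousOn f (Set.Ioo 0 R) := by
    apply ContinuousOn.mul
    · intro x hx
      exact (Real.continuousAt_rpow_const x (τ - 1) (Or.inl (ne_of_gt hx.1))).continuousWithinAt
    · exact hg_cont.comp_continuousOn hv_contIoo
  have hf_int : ∀ r ∈ Set.Ioc (0:ℝ) R'', IntervalIntegrable f volume 0 r := by
    intro r hr
    rw [intervalIntegrable_iff_integrableOn_Ioc_of_le hr.1.le]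
    have hss : Set.Ioc (0:ℝ) r ⊆ Set.Ioo 0 R :=
      fun x hx => ⟨hx.1, lt_of_le_of_lt hx.2 (lt_of_le_of_lt hr.2 hR''2)⟩
    have hmeas : AEStronglyMeasurable f (volume.restrict (Set.Ioc (0:ℝ) r)) :=
      (hf_cont.mono hss).aestronglyMeasurable measurableSet_Ioc
    have hbint : IntegrableOn (fun s : ℝ => M * s ^ (τ - 1)) (Set.Ioc 0 r) := by
      have := (intervalIntegral.intervalIntegrable_rpow' (a := 0) (b := r)
        (by linarith : (-1:ℝ) < τ - 1)).const_mul M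
      rwa [intervalIntegrable_iff_integrableOn_Ioc_of_le hr.1.le] at this
    apply hbint.mono' hmeas
    rw [ae_restrict_iff' measurableSet_Ioc]
    filter_upwards with s hs
    have hs0 : 0 ≤ s := hs.1.le
    have hrp : (0:ℝ) ≤ s ^ (τ - 1) := Real.rpow_nonneg hs0 _
    have hgle : g (v s) ≤ M := hgvM s ⟨hs0, le_trans hs.2 hr.2⟩
    have : ‖f s‖ = s ^ (τ - 1) * g (v s) := by
      rw [Real.norm_eq_abs]
      exact abs_of_nonneg (mul_nonneg hrp (hg_pos _).le)
    rw [this, mul_comm M]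
    exact mul_le_mul_of_nonneg_left hgle hrp
  have hτne : τ - 1 + 1 ≠ 0 := by simp; linarith
  have hrpow_int : ∀ r : ℝ, 0 < r → (∫ s in (0:ℝ)..r, s ^ (τ - 1)) = r ^ τ / τ := by
    intro r hr
    rw [integral_rpow (Or.inl (by linarith : (-1:ℝ) < τ - 1))]
    rw [Real.zero_rpow hτne]
    have : τ - 1 + 1 = τ := by ring
    rw [this, sub_zero]
  have hF_ub : ∀ r ∈ Set.Ioc (0:ℝ) R'', F r ≤ M / τ * r ^ τ := by
    intro r hr
    have h1 : IntervalIntegrable (fun s : ℝ => M * s ^ (τ - 1)) volume 0 r :=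
      (intervalIntegral.intervalIntegrable_rpow' (by linarith : (-1:ℝ) < τ - 1)).const_mul M
    have h2 : F r ≤ ∫ s in (0:ℝ)..r, M * s ^ (τ - 1) := by
      simp only [hFdef]
      apply intervalIntegral.integral_mono_on hr.1.le (hf_int r hr) h1
      intro s hs
      have hrp : (0:ℝ) ≤ s ^ (τ - 1) := Real.rpow_nonneg hs.1 _
      have hgle : g (v s) ≤ M := hgvM s ⟨hs.1, le_trans hs.2 hr.2⟩
      calc f s = s ^ (τ - 1) * g (v s) := rfl
        _ ≤ s ^ (τ - 1) * M := mul_le_mul_of_nonneg_left hgle hrp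
        _ = M * s ^ (τ - 1) := mul_comm _ _
    calc F r ≤ ∫ s in (0:ℝ)..r, M * s ^ (τ - 1) := h2
      _ = M * (r ^ τ / τ) := by rw [intervalIntegral.integral_const_mul, hrpow_int r hr.1]
      _ = M / τ * r ^ τ := by ring
  have hF_lb : ∀ r ∈ Set.Ioc (0:ℝ) R'', m / τ * r ^ τ ≤ F r := by
    intro r hr
    have h1 : IntervalIntegrable (fun s : ℝ => m * s ^ (τ - 1)) volume 0 r :=
      (intervalIntegral.intervalIntegrable_rpow' (by linarith : (-1:ℝ) < τ - 1)).const_mul m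
    have h2 : (∫ s in (0:ℝ)..r, m * s ^ (τ - 1)) ≤ F r := by
      simp only [hFdef]
      apply intervalIntegral.integral_mono_on hr.1.le h1 (hf_int r hr)
      intro s hs
      have hrp : (0:ℝ) ≤ s ^ (τ - 1) := Real.rpow_nonneg hs.1 _
      have hgle : m ≤ g (v s) := hgvm s ⟨hs.1, le_trans hs.2 hr.2⟩
      calc m * s ^ (τ - 1) = s ^ (τ - 1) * m := mul_comm _ _
        _ ≤ s ^ (τ - 1) * g (v s) := mul_le_mul_of_nonneg_left hgle hrp
        _ = f s := rfl
    calc m / τ * r ^ τ = m * (r ^ τ / τ) := by ring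
      _ = ∫ s in (0:ℝ)..r, m * s ^ (τ - 1) := by
          rw [intervalIntegral.integral_const_mul, hrpow_int r hr.1]
      _ ≤ F r := h2
  have hF_pos : ∀ r ∈ Set.Ioc (0:ℝ) R'', 0 < F r := by
    intro r hr
    refine lt_of_lt_of_le ?_ (hF_lb r hr)
    have := Real.rpow_pos_of_pos hr.1 τ
    have : 0 < m / τ := div_pos hm0 hτ0
    positivity
  have hF' : ∀ r ∈ Set.Ioo (0:ℝ) R'', HasDerivAt F (f r) r := by
    intro r hr
    have hrR : r ∈ Set.Ioo 0 R := ⟨hr.1, lt_trans hr.2 hR''2⟩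
    exact intervalIntegral.integral_hasDerivAt_right (hf_int r ⟨hr.1, hr.2.le⟩)
      (hf_cont.stronglyMeasurableAtFilter isOpen_Ioo r hrR)
      (hf_cont.continuousAt (isOpen_Ioo.mem_nhds hrR))
  set D := fun r : ℝ => C * (-q * r ^ (-q - 1)) * F r ^ (1 / θ) +
      C * r ^ (-q) * (f r * (1 / θ) * F r ^ (1 / θ - 1)) with hDdef
  have hRHS' : ∀ r ∈ Set.Ioo (0:ℝ) R'', HasDerivAt (cauchyRHS C q τ θ g v) (D r) r := by
    intro r hr
    have hceq : cauchyRHS C q τ θ g v = fun x => C * x ^ (-q) * F x ^ (1 / θ) := by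
      simp only [hFdef, hfdef]; rfl
    have h1 : HasDerivAt (fun x : ℝ => C * x ^ (-q)) (C * (-q * r ^ (-q - 1))) r := by
      have := (Real.hasDerivAt_rpow_const (x := r) (p := -q)
        (Or.inl (ne_of_gt hr.1))).const_mul C
      simpa [neg_sub, sub_eq_add_neg] using this
    have h2 : HasDerivAt (fun x : ℝ => F x ^ (1 / θ))
        (f r * (1 / θ) * F r ^ (1 / θ - 1)) r :=
      (hF' r hr).rpow_const (Or.inl (ne_of_gt (hF_pos r ⟨hr.1, hr.2.le⟩)))
    rw [hceq]
    exact h1.mul h2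
  have h2nd : ∀ r ∈ Set.Ioo (0:ℝ) R', deriv (deriv v) r = D r := by
    intro r hr
    have hrR'' : r ∈ Set.Ioo 0 R'' := ⟨hr.1, lt_trans hr.2 hR''1⟩
    have hev : deriv v =ᶠ[nhds r] cauchyRHS C q τ θ g v := by
      filter_upwards [isOpen_Ioo.mem_nhds (⟨hr.1, lt_trans hr.2 hR'R⟩ : r ∈ Set.Ioo 0 R)]
        with x hx
      exact (hv_deriv x hx.1 ((ENNReal.ofReal_lt_ofReal_iff hR).2 hx.2)).deriv
    rw [hev.deriv_eq, (hRHS' r hrR'').deriv]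
  -- the key pointwise bound
  set p := 1 / θ - 1 with hpdef
  set B := max ((M / τ) ^ p) ((m / τ) ^ p) with hBdef
  have hB0 : 0 ≤ B := le_trans (Real.rpow_nonneg (div_pos hM0 hτ0).le p) (le_max_left _ _)
  set al := τ / θ - q - 1 with haldef
  set K := C * (q * (M / τ) ^ (1 / θ)) + C * ((1 / θ) * (M * B)) with hKdef
  have hK0 : 0 ≤ K := by
    apply add_nonneg
    · exact mul_nonneg hC.le (mul_nonneg hq (Real.rpow_nonneg (div_pos hM0 hτ0).le _))
    · exact mul_nonneg hC.le (mul_nonneg (by positivity) (mul_nonneg hM0.le hB0))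
  have key : ∀ r ∈ Set.Ioo (0:ℝ) R', |D r| ≤ K * r ^ al := by
    intro r hr
    have hr0 : 0 < r := hr.1
    have hrIoc : r ∈ Set.Ioc (0:ℝ) R'' := ⟨hr0, (lt_trans hr.2 hR''1).le⟩
    have hFpos := hF_pos r hrIoc
    have hrτpos : (0:ℝ) < r ^ τ := Real.rpow_pos_of_pos hr0 τ
    -- e1
    have e1 : F r ^ (1 / θ) ≤ (M / τ) ^ (1 / θ) * r ^ (τ / θ) := by
      have h := Real.rpow_le_rpow hFpos.le (hF_ub r hrIoc) (by positivity : (0:ℝ) ≤ 1 / θ)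
      calc F r ^ (1 / θ) ≤ (M / τ * r ^ τ) ^ (1 / θ) := h
        _ = (M / τ) ^ (1 / θ) * (r ^ τ) ^ (1 / θ) :=
            Real.mul_rpow (div_pos hM0 hτ0).le hrτpos.le
        _ = (M / τ) ^ (1 / θ) * r ^ (τ * (1 / θ)) := by rw [← Real.rpow_mul hr0.le]
        _ = (M / τ) ^ (1 / θ) * r ^ (τ / θ) := by rw [show τ * (1 / θ) = τ / θ by ring]
    -- e2
    have e2 : F r ^ p ≤ B * r ^ (τ * p) := by
      rcases le_or_gt 0 p with hp | hp
      · calc F r ^ p ≤ (M / τ * r ^ τ) ^ p :=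
              Real.rpow_le_rpow hFpos.le (hF_ub r hrIoc) hp
          _ = (M / τ) ^ p * r ^ (τ * p) := by
              rw [Real.mul_rpow (div_pos hM0 hτ0).le hrτpos.le, ← Real.rpow_mul hr0.le]
          _ ≤ B * r ^ (τ * p) :=
              mul_le_mul_of_nonneg_right (le_max_left _ _) (Real.rpow_nonneg hr0.le _)
      · calc F r ^ p ≤ (m / τ * r ^ τ) ^ p :=
              Real.rpow_le_rpow_of_nonpos (by positivity) (hF_lb r hrIoc) hp.le
          _ = (m / τ) ^ p * r ^ (τ * p) := by
              rw [Real.mul_rpow (div_pos hm0 hτ0).le hrτpos.le, ← Real.rpow_mul hr0.le]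
          _ ≤ B * r ^ (τ * p) :=
              mul_le_mul_of_nonneg_right (le_max_right _ _) (Real.rpow_nonneg hr0.le _)
    -- e3
    have e3 : f r ≤ M * r ^ (τ - 1) := by
      have hgle : g (v r) ≤ M := hgvM r ⟨hr0.le, hrIoc.2⟩
      calc f r = r ^ (τ - 1) * g (v r) := rfl
        _ ≤ r ^ (τ - 1) * M := mul_le_mul_of_nonneg_left hgle (Real.rpow_nonneg hr0.le _)
        _ = M * r ^ (τ - 1) := mul_comm _ _
    have hfr0 : 0 ≤ f r := mul_nonneg (Real.rpow_nonneg hr0.le _) (hg_pos _).le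
    -- abs computations
    have h1abs : |C * (-q * r ^ (-q - 1)) * F r ^ (1 / θ)|
        = C * q * r ^ (-q - 1) * F r ^ (1 / θ) := by
      rw [abs_mul, abs_mul, abs_mul, abs_neg, abs_of_pos hC, abs_of_nonneg hq,
        abs_of_nonneg (Real.rpow_nonneg hr0.le _),
        abs_of_nonneg (Real.rpow_nonneg hFpos.le _)]
      ring
    have hT2 : 0 ≤ C * r ^ (-q) * (f r * (1 / θ) * F r ^ (1 / θ - 1)) := by
      apply mul_nonneg (mul_nonneg hC.le (Real.rpow_nonneg hr0.le _))
      exact mul_nonneg (mul_nonneg hfr0 (by positivity)) (Real.rpow_nonneg hFpos.le _)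
    have h2abs : |C * r ^ (-q) * (f r * (1 / θ) * F r ^ (1 / θ - 1))|
        = C * r ^ (-q) * (f r * (1 / θ) * F r ^ (1 / θ - 1)) := abs_of_nonneg hT2
    -- the inequalities for the two terms
    have hA1 : C * q * r ^ (-q - 1) * F r ^ (1 / θ)
        ≤ C * q * r ^ (-q - 1) * ((M / τ) ^ (1 / θ) * r ^ (τ / θ)) :=
      mul_le_mul_of_nonneg_left e1
        (mul_nonneg (mul_nonneg hC.le hq) (Real.rpow_nonneg hr0.le _))
    have hA2 : C * r ^ (-q) * (f r * (1 / θ) * F r ^ (1 / θ - 1))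
        ≤ C * r ^ (-q) * ((M * r ^ (τ - 1)) * (1 / θ) * (B * r ^ (τ * p))) := by
      apply mul_le_mul_of_nonneg_left _ (mul_nonneg hC.le (Real.rpow_nonneg hr0.le _))
      have hp' : F r ^ (1 / θ - 1) = F r ^ p := by rw [hpdef]
      rw [hp']
      apply mul_le_mul (mul_le_mul_of_nonneg_right e3 (by positivity : (0:ℝ) ≤ 1 / θ)) e2
        (Real.rpow_nonneg hFpos.le _)
      exact mul_nonneg (mul_nonneg hM0.le (Real.rpow_nonneg hr0.le _)) (by positivity)
    -- power arithmetic
    have hpow1 : r ^ (-q - 1) * r ^ (τ / θ) = r ^ al := by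
      rw [← Real.rpow_add hr0, haldef]; congr 1; ring
    have hpow2 : r ^ (-q) * (r ^ (τ - 1) * r ^ (τ * p)) = r ^ al := by
      rw [← Real.rpow_add hr0, ← Real.rpow_add hr0, haldef, hpdef]
      congr 1; field_simp; ring
    calc |D r| ≤ |C * (-q * r ^ (-q - 1)) * F r ^ (1 / θ)|
          + |C * r ^ (-q) * (f r * (1 / θ) * F r ^ (1 / θ - 1))| := by
          rw [hDdef]; exact abs_add_le _ _
      _ = C * q * r ^ (-q - 1) * F r ^ (1 / θ)
          + C * r ^ (-q) * (f r * (1 / θ) * F r ^ (1 / θ - 1)) := by rw [h1abs, h2abs]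
      _ ≤ C * q * r ^ (-q - 1) * ((M / τ) ^ (1 / θ) * r ^ (τ / θ))
          + C * r ^ (-q) * ((M * r ^ (τ - 1)) * (1 / θ) * (B * r ^ (τ * p))) :=
          add_le_add hA1 hA2
      _ = C * (q * (M / τ) ^ (1 / θ)) * (r ^ (-q - 1) * r ^ (τ / θ))
          + C * ((1 / θ) * (M * B)) * (r ^ (-q) * (r ^ (τ - 1) * r ^ (τ * p))) := by ring
      _ = K * r ^ al := by rw [hpow1, hpow2, hKdef]; ring
  -- exponent condition
  have hαδ : (-1:ℝ) < al * δ := by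
    have h := (lt_div_iff₀ hθτ).1 hδ2
    have hal_eq : al * δ * θ = -(δ * (θ * (q + 1) - τ)) := by
      rw [haldef]; field_simp; ring
    nlinarith [mul_pos hθ hδ0]
  -- bound function integrable
  have hbi : IntegrableOn (fun r : ℝ => K ^ δ * r ^ (al * δ)) (Set.Ioo 0 R') := by
    have h := (intervalIntegral.intervalIntegrable_rpow' (a := 0) (b := R') hαδ).const_mul
      (K ^ δ)
    rw [intervalIntegrable_iff_integrableOn_Ioc_of_le hR'0.le] at h
    exact h.mono_set Set.Ioo_subset_Ioc_self
  -- measurability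
  have hmeas : AEStronglyMeasurable (fun r => |deriv (deriv v) r| ^ δ)
      (volume.restrict (Set.Ioo 0 R')) := by
    have : Measurable fun r => |deriv (deriv v) r| ^ δ :=
      (Real.continuous_rpow_const hδ0.le).measurable.comp (measurable_deriv (deriv v)).abs
    exact this.aestronglyMeasurable
  apply hbi.mono' hmeas
  rw [ae_restrict_iff' measurableSet_Ioo]
  filter_upwards with r hr
  have hr0 : 0 < r := hr.1
  have hnn : (0:ℝ) ≤ |deriv (deriv v) r| ^ δ := Real.rpow_nonneg (abs_nonneg _) _
  rw [Real.norm_eq_abs, abs_of_nonneg hnn]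
  calc |deriv (deriv v) r| ^ δ = |D r| ^ δ := by rw [h2nd r hr]
    _ ≤ (K * r ^ al) ^ δ := Real.rpow_le_rpow (abs_nonneg _) (key r hr) hδ0.le
    _ = K ^ δ * (r ^ al) ^ δ := Real.mul_rpow hK0 (Real.rpow_nonneg hr0.le _)
    _ = K ^ δ * r ^ (al * δ) := by rw [← Real.rpow_mul hr0.le]
end

section
/- Let g : ℝ → ℝ be continuous, non-decreasing and everywhere positive, and let C > 0, q ≥ 0, θ > 0 and τ ≥ θq + 1 be constants. Suppose for some a ∈ ℝ there exists v : [0,∞) → ℝ solving the Cauchy problem (★) on all of [0,∞) with v(0) = a and with right derivative v'(0) = 0 at the origin. Then the Keller–Osserman condition holds: ∫_b^∞ (∫_0^t g(s) ds)^{-1/(θ+1)} dt = +∞ for every b > 0. -/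
open Real MeasureTheory Set Filter Topology ENNReal

set_option maxHeartbeats 1000000 in
/-- Necessity direction of Theorem 1.2: if `τ ≥ θq + 1` and for some `a` the Cauchy
problem (★) has an entire solution on `[0, ∞)` with right derivative `0` at the
origin, then the Keller–Osserman condition holds. -/
theorem KO_of_entire_existence
    (g : ℝ → ℝ) (hg_cont : Continuous g) (hg_mono : Monotone g) (hg_pos : ∀ t, 0 < g t)
    (C q θ τ : ℝ) (hC : 0 < C) (hq : 0 ≤ q) (hθ : 0 < θ) (hτ : θ * q + 1 ≤ τ)
    (a : ℝ) (v : ℝ → ℝ)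
    (hv : SolvesCauchy C q τ θ a g ⊤ v)
    (hv0 : HasDerivWithinAt v 0 (Set.Ici 0) 0) :
    KellerOsserman θ g := by
  obtain ⟨hv_cont', hv0a, hv_deriv'⟩ := hv
  have hv_cont : ContinuousOn v (Ici 0) := by
    have : {r : ℝ | 0 ≤ r ∧ ENNReal.ofReal r < ⊤} = Ici 0 := by
      ext r; simp [ENNReal.ofReal_lt_top]
    rwa [this] at hv_cont'
  set G : ℝ → ℝ := fun t => ∫ s in (0:ℝ)..t, g s with hGdef
  set w : ℝ → ℝ := fun r => ∫ s in (0:ℝ)..r, s ^ (τ - 1) * g (v s) with hwdef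
  have hτ1 : (1:ℝ) ≤ τ := by nlinarith
  have hτ0 : (0:ℝ) < τ := by linarith
  have hvd : ∀ r : ℝ, 0 < r → HasDerivAt v (C * r ^ (-q) * (w r) ^ (1/θ)) r := by
    intro r hr
    simpa [cauchyRHS, hwdef] using hv_deriv' r hr (by simp)
  -- continuity of the integrand of w on [0,∞)
  have hint_cont : ContinuousOn (fun s : ℝ => s ^ (τ - 1) * g (v s)) (Ici 0) := by
    apply ContinuousOn.mul
    · intro x hx
      exact (Real.continuousAt_rpow_const x (τ-1) (Or.inr (by linarith))).continuousWithinAt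
    · exact hg_cont.comp_continuousOn hv_cont
  have hint_integrable : ∀ u : ℝ, 0 ≤ u →
      IntervalIntegrable (fun s : ℝ => s ^ (τ - 1) * g (v s)) volume 0 u := by
    intro u hu
    apply ContinuousOn.intervalIntegrable
    apply hint_cont.mono
    rw [uIcc_of_le hu]
    exact Icc_subset_Ici_self
  have hw_deriv : ∀ r : ℝ, 0 < r → HasDerivAt w (r ^ (τ - 1) * g (v r)) r := by
    intro r hr
    apply intervalIntegral.integral_hasDerivAt_right (hint_integrable r hr.le)
    · exact (hint_cont.mono (Ioi_subset_Ici le_rfl)).stronglyMeasurableAtFilter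
        isOpen_Ioi r hr
    · exact (hint_cont r hr.le).continuousAt (Ici_mem_nhds hr)
  have hw_pos : ∀ r : ℝ, 0 < r → 0 < w r := by
    intro r hr
    apply intervalIntegral.intervalIntegral_pos_of_pos_on (hint_integrable r hr.le) _ hr
    intro x hx
    exact mul_pos (Real.rpow_pos_of_pos hx.1 _) (hg_pos _)
  -- derivative positivity and monotonicity of v
  have hD_pos : ∀ r : ℝ, 0 < r → 0 < C * r ^ (-q) * (w r) ^ (1/θ) := by
    intro r hr
    exact mul_pos (mul_pos hC (Real.rpow_pos_of_pos hr _))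
      (Real.rpow_pos_of_pos (hw_pos r hr) _)
  have hv_mono : StrictMonoOn v (Ici 0) := by
    apply strictMonoOn_of_deriv_pos (convex_Ici 0) hv_cont
    intro x hx
    rw [interior_Ici] at hx
    rw [(hvd x hx).deriv]
    exact hD_pos x hx
  have hva : ∀ r : ℝ, 0 ≤ r → a ≤ v r := by
    intro r hr
    rcases eq_or_lt_of_le hr with h | h
    · rw [← h, hv0a]
    · rw [← hv0a]; exact (hv_mono (le_refl (0:ℝ) : (0:ℝ) ∈ Ici 0) hr h).le
  have hrpow_cont : ∀ u : ℝ, 0 ≤ u →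
      IntervalIntegrable (fun s : ℝ => g a * s ^ (τ - 1)) volume 0 u := by
    intro u hu
    apply ContinuousOn.intervalIntegrable
    apply ContinuousOn.mul continuousOn_const
    intro x hx
    exact (Real.continuousAt_rpow_const x (τ-1) (Or.inr (by linarith))).continuousWithinAt
  -- lower bound for w
  have hw_lb : ∀ r : ℝ, 0 ≤ r → g a * (r ^ τ / τ) ≤ w r := by
    intro r hr
    have h1 : ∫ s in (0:ℝ)..r, g a * s ^ (τ - 1) ≤ w r := by
      apply intervalIntegral.integral_mono_on hr (hrpow_cont r hr) (hint_integrable r hr)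
      intro x hx
      rw [mul_comm]
      apply mul_le_mul_of_nonneg_left _ (Real.rpow_nonneg hx.1 _)
      exact hg_mono (hva x hx.1)
    have h2 : ∫ s in (0:ℝ)..r, g a * s ^ (τ - 1) = g a * (r ^ τ / τ) := by
      rw [intervalIntegral.integral_const_mul, integral_rpow (Or.inl (by linarith))]
      rw [Real.zero_rpow (by linarith : τ - 1 + 1 ≠ 0)]
      norm_num
    linarith
  set c0 : ℝ := C * (g a / τ) ^ (1/θ) with hc0def
  have hc0 : 0 < c0 := mul_pos hC (Real.rpow_pos_of_pos (div_pos (hg_pos a) hτ0) _)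
  have hexp : 1/θ ≤ τ/θ - q := by
    have h3 : (τ - θ*q - 1)/θ = τ/θ - q - 1/θ := by field_simp
    have h4 := div_nonneg (by linarith : (0:ℝ) ≤ τ - θ*q - 1) hθ.le
    rw [h3] at h4; linarith
  have hvd_lb : ∀ r : ℝ, 1 ≤ r → c0 * r ^ (1/θ) ≤ C * r ^ (-q) * (w r) ^ (1/θ) := by
    intro r hr
    have hr0 : 0 < r := lt_of_lt_of_le one_pos hr
    have hga : (0:ℝ) ≤ g a * (r ^ τ / τ) :=
      mul_nonneg (hg_pos a).le (div_nonneg (Real.rpow_nonneg hr0.le _) hτ0.le)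
    have h1 : (g a * (r ^ τ / τ)) ^ (1/θ) ≤ (w r) ^ (1/θ) :=
      Real.rpow_le_rpow hga (hw_lb r hr0.le) (div_nonneg zero_le_one hθ.le)
    have h2 : (g a * (r ^ τ / τ)) ^ (1/θ) = (g a / τ) ^ (1/θ) * r ^ (τ/θ) := by
      rw [show g a * (r ^ τ / τ) = (g a / τ) * r ^ τ by ring,
        Real.mul_rpow (div_nonneg (hg_pos a).le hτ0.le) (Real.rpow_nonneg hr0.le _),
        ← Real.rpow_mul hr0.le, mul_one_div]
    calc c0 * r ^ (1/θ) ≤ c0 * r ^ (τ/θ - q) := by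
          apply mul_le_mul_of_nonneg_left (Real.rpow_le_rpow_of_exponent_le hr hexp) hc0.le
      _ = C * r ^ (-q) * ((g a / τ) ^ (1/θ) * r ^ (τ/θ)) := by
          rw [hc0def]
          rw [show τ/θ - q = -q + τ/θ by ring, Real.rpow_add hr0]
          ring
      _ ≤ C * r ^ (-q) * (w r) ^ (1/θ) := by
          rw [← h2]
          exact mul_le_mul_of_nonneg_left (h2 ▸ h1)
            (mul_nonneg hC.le (Real.rpow_nonneg hr0.le _))
  set c4 : ℝ := c0 * (θ/(θ+1)) with hc4def
  have hc4 : 0 < c4 := mul_pos hc0 (by positivity)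
  have hgrow : ∀ R : ℝ, 1 ≤ R → a + c4 * (R ^ ((θ+1)/θ) - 1) ≤ v R := by
    intro R hR
    have hmono : MonotoneOn (fun r => v r - c4 * r ^ ((θ+1)/θ)) (Ici 1) := by
      apply monotoneOn_of_deriv_nonneg (convex_Ici 1)
      · apply ContinuousOn.sub (hv_cont.mono (Ici_subset_Ici.mpr zero_le_one))
        apply ContinuousOn.mul continuousOn_const
        exact ContinuousOn.rpow_const continuousOn_id
          (fun x _ => Or.inr (le_of_lt (div_pos (by linarith) hθ)))
      · rw [interior_Ici]
        intro x hx
        have hx0 : 0 < x := lt_trans one_pos hx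
        exact ((hvd x hx0).sub (((Real.hasDerivAt_rpow_const
          (Or.inl hx0.ne')).const_mul c4))).differentiableAt.differentiableWithinAt
      · rw [interior_Ici]
        intro x hx
        have hx0 : 0 < x := lt_trans one_pos hx
        have hd := (hvd x hx0).sub ((Real.hasDerivAt_rpow_const
          (p := (θ+1)/θ) (Or.inl hx0.ne')).const_mul c4)
        rw [(show HasDerivAt (fun r => v r - c4 * r ^ ((θ+1)/θ)) _ x from hd).deriv]
        have he1 : c4 * ((θ+1)/θ * x ^ ((θ+1)/θ - 1)) = c0 * x ^ (1/θ) := by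
          rw [show (θ+1)/θ - 1 = 1/θ by field_simp; ring, hc4def]
          field_simp
        rw [he1]
        have := hvd_lb x hx.le
        linarith
    have h5 := hmono (self_mem_Ici) (mem_Ici.mpr hR) hR
    simp only [Real.one_rpow] at h5
    have h6 := hva 1 zero_le_one
    nlinarith
  -- facts about G
  have hG_deriv : ∀ t : ℝ, HasDerivAt G (g t) t := by
    intro t
    exact intervalIntegral.integral_hasDerivAt_right
      (hg_cont.intervalIntegrable 0 t)
      (hg_cont.stronglyMeasurable.stronglyMeasurableAtFilter)
      hg_cont.continuousAt
  have hG_cont : Continuous G := by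
    rw [continuous_iff_continuousAt]; exact fun t => (hG_deriv t).continuousAt
  have hG_mono : StrictMono G := by
    apply strictMono_of_deriv_pos
    intro x; rw [(hG_deriv x).deriv]; exact hg_pos x
  have hG_lb : ∀ t : ℝ, 0 ≤ t → g 0 * t ≤ G t := by
    intro t ht
    have h1 : ∫ s in (0:ℝ)..t, g 0 ≤ G t := by
      apply intervalIntegral.integral_mono_on ht
        (intervalIntegrable_const) (hg_cont.intervalIntegrable 0 t)
      intro x hx; exact hg_mono hx.1
    simpa [mul_comm] using h1
  have hG_pos : ∀ t : ℝ, 0 < t → 0 < G t := fun t ht =>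
    lt_of_lt_of_le (mul_pos (hg_pos 0) ht) (hG_lb t ht.le)
  -- constants for the key inequality
  set k0 : ℝ := (θ+1)/(θ*C) with hk0def
  have hk0 : 0 < k0 := div_pos (by linarith) (mul_pos hθ hC)
  set e : ℝ := q*(θ+1) with hedef
  have he0 : 0 ≤ e := mul_nonneg hq (by linarith)
  set c1' : ℝ := C^(θ+1) * k0 * (4:ℝ)^(-e) with hc1'def
  have hc1' : 0 < c1' := mul_pos (mul_pos (Real.rpow_pos_of_pos hC _) hk0)
    (Real.rpow_pos_of_pos (by norm_num) _)
  set c1 : ℝ := c1' ^ (1/(θ+1)) with hc1def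
  have hc1 : 0 < c1 := Real.rpow_pos_of_pos hc1' _
  have hθ1 : (0:ℝ) < θ + 1 := by linarith
  -- continuity of w on (0,∞)
  have hw_cont : ContinuousOn w (Ioi 0) := fun x hx =>
    (hw_deriv x hx).continuousAt.continuousWithinAt
  -- the key differential inequality
  have hkey : ∀ R0 r : ℝ, 1 ≤ R0 → R0 ≤ r → r ≤ 4*R0 →
      c1 * (G (v r) - G (v R0)) ^ (1/(θ+1)) ≤ C * r ^ (-q) * (w r) ^ (1/θ) := by
    intro R0 r hR0 hR0r hr4
    have hR00 : (0:ℝ) < R0 := lt_of_lt_of_le one_pos hR0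
    have hr0 : (0:ℝ) < r := lt_of_lt_of_le hR00 hR0r
    -- the comparison function Φ
    set Φ : ℝ → ℝ := fun x => (w x)^((θ+1)/θ) - k0 * R0^e * G (v x) with hΦdef
    have hΦmono : MonotoneOn Φ (Ici R0) := by
      apply monotoneOn_of_deriv_nonneg (convex_Ici R0)
      · apply ContinuousOn.sub
        · apply ContinuousOn.rpow_const
            (hw_cont.mono (fun x hx => lt_of_lt_of_le hR00 hx))
          intro x hx
          exact Or.inr (le_of_lt (div_pos hθ1 hθ))
        · apply ContinuousOn.mul continuousOn_const
          exact hG_cont.comp_continuousOn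
            (hv_cont.mono (fun x hx => le_trans hR00.le hx))
      · rw [interior_Ici]
        intro x hx
        have hx0 : 0 < x := lt_trans hR00 hx
        exact (((hw_deriv x hx0).rpow_const (Or.inl (hw_pos x hx0).ne')).sub
          (((hG_deriv (v x)).comp x (hvd x hx0)).const_mul
            (k0 * R0^e))).differentiableAt.differentiableWithinAt
      · rw [interior_Ici]
        intro x hx
        have hx0 : 0 < x := lt_trans hR00 hx
        have hx1 : 1 ≤ x := le_trans hR0 hx.le
        have hd := ((hw_deriv x hx0).rpow_const
            (p := (θ+1)/θ) (Or.inl (hw_pos x hx0).ne')).sub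
          (((hG_deriv (v x)).comp x (hvd x hx0)).const_mul (k0 * R0^e))
        have hd2 : HasDerivAt Φ
            (x ^ (τ - 1) * g (v x) * ((θ + 1) / θ) * w x ^ ((θ + 1) / θ - 1) -
              k0 * R0 ^ e * (g (v x) * (C * x ^ (-q) * w x ^ (1 / θ)))) x := by
          exact hd
        rw [hd2.deriv]
        set D : ℝ := C * x ^ (-q) * (w x) ^ (1/θ) with hDdef
        have hDpos : 0 < D := hD_pos x hx0
        have hxqq : x ^ q * x ^ (-q) = 1 := by
          rw [← Real.rpow_add hx0, add_neg_cancel, Real.rpow_zero]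
        have hweq : (w x) ^ ((θ+1)/θ - 1) = x ^ q * D / C := by
          rw [hDdef, show (θ+1)/θ - 1 = 1/θ by field_simp; ring]
          calc w x ^ (1/θ) = (x ^ q * x ^ (-q)) * w x ^ (1/θ) * (C / C) := by
                rw [hxqq, div_self hC.ne']; ring
            _ = x ^ q * (C * x ^ (-q) * w x ^ (1/θ)) / C := by ring
        have hxe : R0 ^ e ≤ x ^ (τ - 1 + q) := by
          calc R0 ^ e ≤ x ^ e := Real.rpow_le_rpow hR00.le hx.le he0
            _ ≤ x ^ (τ - 1 + q) := Real.rpow_le_rpow_of_exponent_le hx1 (by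
                rw [hedef]; nlinarith)
        have hgD : 0 ≤ g (v x) * D := mul_nonneg (hg_pos _).le hDpos.le
        have hEq : x ^ (τ - 1) * g (v x) * ((θ + 1) / θ) * w x ^ ((θ + 1) / θ - 1) -
            k0 * R0 ^ e * (g (v x) * D) =
            k0 * (x ^ (τ - 1 + q) - R0 ^ e) * (g (v x) * D) := by
          rw [hweq, hk0def, Real.rpow_add hx0]
          field_simp
        rw [hEq]
        exact mul_nonneg (mul_nonneg hk0.le (by linarith)) hgD
    -- use monotonicity of Φ
    have hvm : v R0 ≤ v r := hv_mono.monotoneOn (mem_Ici.mpr (by linarith))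
      (mem_Ici.mpr (by linarith)) hR0r
    have hΔ0 : 0 ≤ G (v r) - G (v R0) := sub_nonneg.mpr (hG_mono.monotone hvm)
    have hΦin := hΦmono (self_mem_Ici) (mem_Ici.mpr hR0r) hR0r
    have hwr : k0 * R0^e * (G (v r) - G (v R0)) ≤ (w r) ^ ((θ+1)/θ) := by
      have h8 : 0 ≤ (w R0) ^ ((θ+1)/θ) := Real.rpow_nonneg (hw_pos R0 hR00).le _
      simp only [hΦdef] at hΦin
      linarith
    set D : ℝ := C * r ^ (-q) * (w r) ^ (1/θ) with hDdef
    have hDpos : 0 < D := hD_pos r hr0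
    have hDpow : D ^ (θ+1) = C^(θ+1) * r ^ (-e) * (w r) ^ ((θ+1)/θ) := by
      rw [hDdef, Real.mul_rpow
          (mul_nonneg hC.le (Real.rpow_nonneg hr0.le _)) (Real.rpow_nonneg (hw_pos r hr0).le _),
        Real.mul_rpow hC.le (Real.rpow_nonneg hr0.le _),
        ← Real.rpow_mul hr0.le, ← Real.rpow_mul (hw_pos r hr0).le,
        show -q*(θ+1) = -e by rw [hedef]; ring,
        show 1/θ*(θ+1) = (θ+1)/θ by ring]
    have h10 : (4*R0) ^ (-e) ≤ r ^ (-e) := by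
      rw [Real.rpow_neg (by positivity), Real.rpow_neg hr0.le]
      exact inv_anti₀ (Real.rpow_pos_of_pos hr0 _)
        (Real.rpow_le_rpow hr0.le hr4 he0)
    have hR0qq : R0 ^ (-e) * R0 ^ e = 1 := by
      rw [← Real.rpow_add hR00, neg_add_cancel, Real.rpow_zero]
    have h9 : c1' * (G (v r) - G (v R0)) ≤ D ^ (θ+1) := by
      rw [hDpow]
      have hnn : 0 ≤ k0 * R0^e * (G (v r) - G (v R0)) :=
        mul_nonneg (mul_nonneg hk0.le (Real.rpow_nonneg hR00.le _)) hΔ0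
      have h12 : (4*R0)^(-e) * R0^e = (4:ℝ)^(-e) := by
        rw [Real.mul_rpow (by norm_num) hR00.le, mul_assoc, hR0qq, mul_one]
      calc c1' * (G (v r) - G (v R0))
          = C^(θ+1) * ((4*R0)^(-e) * R0^e) * (k0 * (G (v r) - G (v R0))) := by
            rw [hc1'def, h12]; ring
        _ = C^(θ+1) * (4*R0)^(-e) * (k0 * R0^e * (G (v r) - G (v R0))) := by ring
        _ ≤ C^(θ+1) * r^(-e) * (k0 * R0^e * (G (v r) - G (v R0))) := by
            exact mul_le_mul_of_nonneg_right
              (mul_le_mul_of_nonneg_left h10 (Real.rpow_nonneg hC.le _)) hnn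
        _ ≤ C^(θ+1) * r^(-e) * (w r) ^ ((θ+1)/θ) := by
            exact mul_le_mul_of_nonneg_left hwr
              (mul_nonneg (Real.rpow_nonneg hC.le _) (Real.rpow_nonneg hr0.le _))
    have h11 : (c1' * (G (v r) - G (v R0))) ^ (1/(θ+1)) ≤ (D^(θ+1)) ^ (1/(θ+1)) :=
      Real.rpow_le_rpow (mul_nonneg hc1'.le hΔ0) h9 (le_of_lt (by positivity))
    rwa [Real.mul_rpow hc1'.le hΔ0, ← Real.rpow_mul hDpos.le,
      mul_one_div_cancel hθ1.ne', Real.rpow_one, ← hc1def] at h11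
  -- now suppose KO fails at level b
  intro b hb
  by_contra hKO
  set L : ℝ≥0∞ := ∫⁻ t in Set.Ioi b, ENNReal.ofReal ((G t) ^ (-(1/(θ+1)))) with hLdef
  have hL : L ≠ ⊤ := hKO
  set f : ℝ → ℝ := fun t => (G t) ^ (-(1/(θ+1))) with hfdef
  -- any interval integral of f over (b,∞) is bounded by L.toReal
  have hIbound : ∀ x y : ℝ, b < x → x ≤ y → (∫ t in x..y, f t) ≤ L.toReal := by
    intro x y hx hxy
    have hfc : ContinuousOn f (Icc x y) := by
      apply ContinuousOn.rpow_const hG_cont.continuousOn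
      intro t ht
      exact Or.inl (hG_pos t (lt_trans hb (lt_of_lt_of_le hx ht.1))).ne'
    have hInt : IntegrableOn f (Ioc x y) :=
      (hfc.integrableOn_Icc).mono_set Ioc_subset_Icc_self
    have hnn : 0 ≤ᵐ[volume.restrict (Ioc x y)] f := by
      apply (ae_restrict_iff' measurableSet_Ioc).mpr
      exact ae_of_all _ (fun t ht => Real.rpow_nonneg
        (le_of_lt (hG_pos t (lt_trans hb (lt_trans hx ht.1)))) _)
    have h2 : ENNReal.ofReal (∫ t in Ioc x y, f t) =
        ∫⁻ t in Ioc x y, ENNReal.ofReal (f t) :=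
      MeasureTheory.ofReal_integral_eq_lintegral_ofReal hInt hnn
    have h3 : (∫⁻ t in Ioc x y, ENNReal.ofReal (f t)) ≤ L := by
      rw [hLdef]
      exact lintegral_mono_set (fun t ht => lt_trans hx ht.1)
    rw [intervalIntegral.integral_of_le hxy]
    exact (ENNReal.ofReal_le_iff_le_toReal hL).mp (h2 ▸ h3)
  set d1 : ℝ := c1 * (2:ℝ) ^ (-(1/(θ+1))) with hd1def
  have hd1 : 0 < d1 := mul_pos hc1 (Real.rpow_pos_of_pos two_pos _)
  -- the fast-growth estimate
  have hfast : ∀ R0 : ℝ, 1 ≤ R0 → b < v (2*R0) →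
      2 * G (v R0) ≤ G (v (2*R0)) → d1 * (2*R0) ≤ L.toReal := by
    intro R0 hR0 hvb hfastG
    have hR00 : (0:ℝ) < R0 := lt_of_lt_of_le one_pos hR0
    set R1 : ℝ := 2*R0 with hR1def
    set R2 : ℝ := 4*R0 with hR2def
    have hR12 : R1 ≤ R2 := by rw [hR1def, hR2def]; linarith
    set D : ℝ → ℝ := fun r => C * r ^ (-q) * (w r) ^ (1/θ) with hDdef
    -- pointwise bound on [R1, R2]
    have hpt : ∀ r ∈ Icc R1 R2, d1 ≤ D r * f (v r) := by
      intro r hr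
      have hrR0 : R0 ≤ r := le_trans (by linarith) hr.1
      have hr0 : 0 < r := lt_of_lt_of_le hR00 hrR0
      have hr4 : r ≤ 4*R0 := hr.2
      have hvr : v R1 ≤ v r := hv_mono.monotoneOn (mem_Ici.mpr (by linarith))
        (mem_Ici.mpr hr0.le) hr.1
      have hGvr : 0 < G (v r) := hG_pos _ (lt_trans hb (lt_of_lt_of_le hvb hvr))
      have hhalf : G (v r) / 2 ≤ G (v r) - G (v R0) := by
        have := hG_mono.monotone hvr
        linarith [hfastG, this]
      have h13 : c1 * (G (v r) / 2) ^ (1/(θ+1)) ≤ D r := by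
        apply le_trans _ (hkey R0 r hR0 hrR0 hr4)
        apply mul_le_mul_of_nonneg_left _ hc1.le
        exact Real.rpow_le_rpow (by positivity) hhalf (by positivity)
      have h14 : (G (v r) / 2) ^ (1/(θ+1)) =
          (2:ℝ) ^ (-(1/(θ+1))) * (G (v r)) ^ (1/(θ+1)) := by
        rw [Real.div_rpow hGvr.le (by norm_num), Real.rpow_neg (by norm_num)]
        ring
      have h15 : (G (v r)) ^ (1/(θ+1)) * f (v r) = 1 := by
        rw [hfdef, ← Real.rpow_add hGvr, add_neg_cancel, Real.rpow_zero]
      have hfpos : 0 < f (v r) := Real.rpow_pos_of_pos hGvr _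
      calc d1 = d1 * ((G (v r)) ^ (1/(θ+1)) * f (v r)) := by rw [h15, mul_one]
        _ = (c1 * ((G (v r) / 2) ^ (1/(θ+1)))) * f (v r) := by rw [h14, hd1def]; ring
        _ ≤ D r * f (v r) := mul_le_mul_of_nonneg_right h13 hfpos.le
    -- continuity of the integrand
    have hDcont : ContinuousOn D (Icc R1 R2) := by
      apply ContinuousOn.mul
      · apply ContinuousOn.mul continuousOn_const
        apply ContinuousOn.rpow_const continuousOn_id
        intro x hx
        exact Or.inl (by
          have : 0 < x := lt_of_lt_of_le (by linarith : (0:ℝ) < R1) hx.1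
          exact this.ne')
      · apply ContinuousOn.rpow_const
          (hw_cont.mono (fun x hx => lt_of_lt_of_le (by linarith : (0:ℝ) < R1) hx.1))
        intro x hx
        exact Or.inl (hw_pos x (lt_of_lt_of_le (by linarith) hx.1)).ne'
    have hvIcc : ContinuousOn v (Icc R1 R2) :=
      hv_cont.mono (fun x hx => le_trans (by linarith : (0:ℝ) ≤ R1) hx.1)
    have hfvcont : ContinuousOn (fun r => D r * f (v r)) (Icc R1 R2) := by
      apply hDcont.mul
      apply ContinuousOn.rpow_const (hG_cont.comp_continuousOn hvIcc)
      intro x hx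
      have hvx : v R1 ≤ v x := hv_mono.monotoneOn (mem_Ici.mpr (by linarith))
        (mem_Ici.mpr (le_trans (by linarith : (0:ℝ) ≤ R1) hx.1)) hx.1
      exact Or.inl (hG_pos _ (lt_trans hb (lt_of_lt_of_le hvb hvx))).ne'
    -- lower bound for the integral
    have h16 : d1 * (2*R0) ≤ ∫ r in R1..R2, D r * f (v r) := by
      have := intervalIntegral.integral_mono_on (μ := volume) hR12
        intervalIntegrable_const
        (((uIcc_of_le hR12).symm ▸ hfvcont : ContinuousOn _ (uIcc R1 R2)).intervalIntegrable)
        hpt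
      have hconst : (∫ _r in R1..R2, d1) = (R2 - R1) * d1 := by
        simp [smul_eq_mul]
      calc d1 * (2*R0) = (R2 - R1) * d1 := by rw [hR1def, hR2def]; ring
        _ = ∫ _r in R1..R2, d1 := hconst.symm
        _ ≤ ∫ r in R1..R2, D r * f (v r) := this
    -- substitution
    have huIcc : uIcc R1 R2 = Icc R1 R2 := uIcc_of_le hR12
    have h17 : ∫ r in R1..R2, D r * f (v r) = ∫ t in v R1..v R2, f t := by
      have := intervalIntegral.integral_comp_smul_deriv''
        (f := v) (f' := D) (g := f)
        (huIcc ▸ hvIcc)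
        (fun x hx => by
          rw [min_eq_left hR12, max_eq_right hR12] at hx
          exact (hvd x (lt_trans (by linarith) hx.1)).hasDerivWithinAt)
        (huIcc ▸ hDcont)
        (by
          rw [huIcc]
          apply ContinuousOn.rpow_const hG_cont.continuousOn
          rintro t ⟨x, hx, rfl⟩
          have hvx : v R1 ≤ v x := hv_mono.monotoneOn (mem_Ici.mpr (by linarith))
            (mem_Ici.mpr (by linarith [hx.1])) hx.1
          exact Or.inl (hG_pos _ (lt_trans hb (lt_of_lt_of_le hvb hvx))).ne')
      simpa [smul_eq_mul, Function.comp] using this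
    have hvR1b : b < v R1 := hvb
    have hvR12 : v R1 ≤ v R2 := hv_mono.monotoneOn (mem_Ici.mpr (by linarith))
      (mem_Ici.mpr (by linarith)) hR12
    calc d1 * (2*R0) ≤ ∫ r in R1..R2, D r * f (v r) := h16
      _ = ∫ t in v R1..v R2, f t := h17
      _ ≤ L.toReal := hIbound _ _ hvR1b hvR12
  -- choose the starting scale K
  obtain ⟨N1, hN1⟩ := pow_unbounded_of_one_lt (R := ℝ) ((b - a)/c4 + 1) one_lt_two
  obtain ⟨N2, hN2⟩ := pow_unbounded_of_one_lt (R := ℝ) (L.toReal/d1) one_lt_two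
  set K := max N1 N2 with hKdef
  have hP1 : ∀ k : ℕ, (1:ℝ) ≤ 2^k := fun k => one_le_pow₀ one_le_two
  have hP0 : ∀ k : ℕ, (0:ℝ) < 2^k := fun k => lt_of_lt_of_le one_pos (hP1 k)
  have hPmono : ∀ m k : ℕ, m ≤ k → (2:ℝ)^m ≤ (2:ℝ)^k := fun m k h =>
    pow_le_pow_right₀ one_le_two h
  have hvlb : ∀ k : ℕ, a + c4 * ((2:ℝ)^k - 1) ≤ v ((2:ℝ)^k) := by
    intro k
    have h := hgrow ((2:ℝ)^k) (hP1 k)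
    have h1 : (2:ℝ)^k ≤ ((2:ℝ)^k) ^ ((θ+1)/θ) := by
      calc (2:ℝ)^k = ((2:ℝ)^k) ^ (1:ℝ) := (Real.rpow_one _).symm
        _ ≤ _ := Real.rpow_le_rpow_of_exponent_le (hP1 k) (by
            rw [le_div_iff₀ hθ]; linarith)
    have h2 := mul_le_mul_of_nonneg_left
      (by linarith : (2:ℝ)^k - 1 ≤ ((2:ℝ)^k)^((θ+1)/θ) - 1) hc4.le
    linarith
  have hbK : b < v ((2:ℝ)^K) := by
    have h2K : (b-a)/c4 + 1 < 2^K :=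
      lt_of_lt_of_le hN1 (hPmono N1 K (le_max_left _ _))
    have h2K' : b - a < c4 * ((2:ℝ)^K - 1) := by
      rw [div_add' _ _ _ hc4.ne', div_lt_iff₀ hc4] at h2K
      nlinarith
    linarith [hvlb K]
  have hv0le : ∀ k : ℕ, v ((2:ℝ)^K) ≤ v ((2:ℝ)^k) ∨ K ≤ k → True := fun _ _ => trivial
  have hbk : ∀ k : ℕ, K ≤ k → b < v ((2:ℝ)^k) := by
    intro k hk
    exact lt_of_lt_of_le hbK (hv_mono.monotoneOn (mem_Ici.mpr (hP0 K).le)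
      (mem_Ici.mpr (hP0 k).le) (hPmono K k hk))
  have hslow : ∀ k : ℕ, K ≤ k → G (v ((2:ℝ)^(k+1))) < 2 * G (v ((2:ℝ)^k)) := by
    intro k hk
    by_contra hcon
    push_neg at hcon
    have h2 : (2:ℝ)^(k+1) = 2 * (2:ℝ)^k := by ring
    have hfa := hfast ((2:ℝ)^k) (hP1 k)
      (by rw [← h2]; exact hbk (k+1) (le_trans hk (Nat.le_succ k)))
      (by rw [← h2]; exact hcon)
    have hL2 : L.toReal/d1 < (2:ℝ)^(k+1) :=
      lt_of_lt_of_le hN2 (hPmono N2 (k+1)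
        (le_trans (le_max_right N1 N2) (le_trans hk (Nat.le_succ k))))
    rw [div_lt_iff₀ hd1] at hL2
    rw [h2] at hL2
    linarith
  set A := G (v ((2:ℝ)^K)) with hAdef
  have hA : 0 < A := hG_pos _ (lt_trans hb hbK)
  have hgeo : ∀ n : ℕ, G (v ((2:ℝ)^(K+n))) ≤ 2^n * A := by
    intro n
    induction n with
    | zero => simp [hAdef]
    | succ n ih =>
      have hstep := hslow (K+n) (Nat.le_add_right K n)
      apply le_of_lt
      calc G (v ((2:ℝ)^(K+(n+1)))) < 2 * G (v ((2:ℝ)^(K+n))) := by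
            rw [show K+(n+1) = (K+n)+1 by ring]; exact hstep
        _ ≤ 2 * (2^n * A) := by linarith
        _ = 2^(n+1) * A := by ring
  -- final contradiction via superlinear growth
  set M : ℝ := (2:ℝ) ^ ((1:ℝ)/θ) with hMdef
  have hM : 1 < M := by
    rw [hMdef]
    exact (Real.one_lt_rpow_iff_of_pos two_pos).mpr
      (Or.inl ⟨one_lt_two, by positivity⟩)
  have hg0 : 0 < g 0 := hg_pos 0
  obtain ⟨n, hn⟩ := pow_unbounded_of_one_lt (R := ℝ)
    ((A + |g 0 * (c4 - a)|)/(g 0 * c4 * 2^K)) hM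
  have hXpos : (0:ℝ) < (2:ℝ)^(K+n) := hP0 _
  have hpowpow : ((2:ℝ)^(n:ℕ) : ℝ) ^ ((1:ℝ)/θ) = M ^ n := by
    rw [hMdef, ← Real.rpow_natCast 2 n, ← Real.rpow_mul (by norm_num),
      mul_comm, Real.rpow_mul (by norm_num), Real.rpow_natCast]
  have hX : (2:ℝ)^K * 2^n * M^n ≤ ((2:ℝ)^(K+n)) ^ ((θ+1)/θ) := by
    rw [show (θ+1)/θ = 1 + 1/θ by field_simp]
    rw [Real.rpow_add hXpos, Real.rpow_one]
    have h1θ : M ^ n ≤ ((2:ℝ)^(K+n)) ^ ((1:ℝ)/θ) := by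
      calc M ^ n = ((2:ℝ)^n) ^ ((1:ℝ)/θ) := hpowpow.symm
        _ ≤ ((2:ℝ)^(K+n)) ^ ((1:ℝ)/θ) :=
          Real.rpow_le_rpow (hP0 n).le (hPmono n (K+n) (Nat.le_add_left n K))
            (by positivity)
    have hKn : (2:ℝ)^(K+n) = 2^K * 2^n := pow_add 2 K n
    rw [hKn] at h1θ ⊢
    exact mul_le_mul_of_nonneg_left h1θ (mul_pos (hP0 K) (hP0 n)).le
  -- assemble
  have h20 := hgrow ((2:ℝ)^(K+n)) (hP1 (K+n))
  have h21 : g 0 * v ((2:ℝ)^(K+n)) ≤ G (v ((2:ℝ)^(K+n))) :=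
    hG_lb _ (le_trans hb.le (le_of_lt (hbk (K+n) (Nat.le_add_right K n))))
  have h22 := hgeo n
  have hn' : A + |g 0 * (c4 - a)| < g 0 * c4 * 2^K * M^n := by
    rw [div_lt_iff₀ (by positivity)] at hn
    linarith
  have habs : g 0 * (c4 - a) ≤ |g 0 * (c4 - a)| := le_abs_self _
  have h2n : (1:ℝ) ≤ 2^n := hP1 n
  have hvx : a + c4 * (2^K * 2^n * M^n - 1) ≤ v ((2:ℝ)^(K+n)) := by
    have := mul_le_mul_of_nonneg_left hX hc4.le
    nlinarith
  nlinarith [mul_le_mul_of_nonneg_left hvx hg0.le,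
    mul_le_mul_of_nonneg_right hn'.le (le_trans zero_le_one h2n),
    mul_nonneg (abs_nonneg (g 0 * (c4 - a))) (by linarith : (0:ℝ) ≤ 2^n - 1)]
end

section
/- Let g : ℝ → ℝ be continuous, non-decreasing and everywhere positive, and let C > 0, q ≥ 0, θ > 0 and τ be constants with θq < τ < θq + 1. Suppose there exists ε ∈ (0, τ − θq) such that, with κ := (1 − ε)/(τ − θq − ε), the modified Keller–Osserman condition holds: ∫_b^∞ (∫_0^t g(s)^κ ds)^{-1/(κθ+1)} dt = +∞ for every b > 0. Then for every initial value a ≥ 0 there exists an entire solution v : [0,∞) → ℝ of the Cauchy problem (★): v is continuous on [0,∞) with v(0) = a, v is differentiable at 0 from the right with v'(0) = 0, for every r > 0 the derivative v'(r) exists and equals C · r^{-q} · (∫_0^r s^{τ-1} g(v(s)) ds)^{1/θ}, and v'(r) > 0 and v''(r) > 0 for all r > 0. -/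
open Real MeasureTheory Set Filter Topology ENNReal

namespace KOProof

open intervalIntegral

structure Setup : Type where
  g : ℝ → ℝ
  C : ℝ
  q : ℝ
  θ : ℝ
  τ : ℝ
  a : ℝ
  hg_cont : Continuous g
  hg_mono : Monotone g
  hg_pos : ∀ t, 0 < g t
  hC : 0 < C
  hq : 0 ≤ q
  hθ : 0 < θ
  hτ1 : θ * q < τ
  hτ2 : τ < θ * q + 1
  ha : 0 ≤ a

namespace Setup

variable (S : Setup)

lemma τ_pos : 0 < S.τ := lt_of_le_of_lt (mul_nonneg S.hθ.le S.hq) S.hτ1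

noncomputable def dlt : ℝ := (S.τ - S.θ * S.q) / S.θ

lemma dlt_pos : 0 < S.dlt := div_pos (by linarith [S.hτ1]) S.hθ

lemma dlt_eq : S.dlt = S.τ / S.θ - S.q := by
  rw [dlt, sub_div, mul_comm S.θ S.q, mul_div_assoc, div_self S.hθ.ne', mul_one]

noncomputable def A (v : ℝ → ℝ) (t : ℝ) : ℝ :=
  ∫ s in (0:ℝ)..t, s ^ (S.τ - 1) * S.g (v s)

noncomputable def psi (v : ℝ → ℝ) (t : ℝ) : ℝ :=
  S.C * t ^ (-S.q) * (S.A v t) ^ (1 / S.θ)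

lemma psi_eq_cauchyRHS (v : ℝ → ℝ) : S.psi v = cauchyRHS S.C S.q S.τ S.θ S.g v := rfl

def Good (v : ℝ → ℝ) : Prop :=
  ContinuousOn v (Ici 0) ∧ Monotone v ∧ ∀ r, S.a ≤ v r

variable {S}

lemma Good.contOn {v} (h : S.Good v) : ContinuousOn v (Ici 0) := h.1
lemma Good.mono {v} (h : S.Good v) : Monotone v := h.2.1
lemma Good.le {v} (h : S.Good v) : ∀ r, S.a ≤ v r := h.2.2

lemma integrandA_intble {v} (hv : S.Good v) {x : ℝ} (hx : 0 ≤ x) :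
    IntervalIntegrable (fun s => s ^ (S.τ - 1) * S.g (v s)) volume 0 x := by
  apply IntervalIntegrable.mono_fun'
    (g := fun s => s ^ (S.τ - 1) * S.g (v x))
    ((intervalIntegrable_rpow' (by linarith [S.τ_pos])).mul_const _)
  · exact ((measurable_id.pow_const _).mul
      (S.hg_cont.measurable.comp hv.mono.measurable)).aestronglyMeasurable
  · rw [uIoc_of_le hx]
    filter_upwards [ae_restrict_mem measurableSet_Ioc] with s hs
    have h1 : (0:ℝ) ≤ s ^ (S.τ - 1) := rpow_nonneg hs.1.le _
    rw [Real.norm_eq_abs, abs_of_nonneg (mul_nonneg h1 (S.hg_pos _).le)]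
    exact mul_le_mul_of_nonneg_left (S.hg_mono (hv.mono hs.2)) h1

lemma A_zero (v : ℝ → ℝ) : S.A v 0 = 0 := integral_same

lemma A_nonneg {v} (hv : S.Good v) {t : ℝ} (ht : 0 ≤ t) : 0 ≤ S.A v t := by
  apply intervalIntegral.integral_nonneg ht
  intro s hs
  exact mul_nonneg (rpow_nonneg hs.1 _) (S.hg_pos _).le

lemma A_mono {v} (hv : S.Good v) {x y : ℝ} (hx : 0 ≤ x) (hxy : x ≤ y) :
    S.A v x ≤ S.A v y := by
  have h1 := integrandA_intble hv hx
  have h2 := integrandA_intble hv (hx.trans hxy)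
  have h3 : IntervalIntegrable (fun s => s ^ (S.τ - 1) * S.g (v s)) volume x y :=
    h2.mono_set (by rw [uIcc_of_le hxy, uIcc_of_le (hx.trans hxy)]; exact Icc_subset_Icc hx le_rfl)
  have : S.A v y = S.A v x + ∫ s in x..y, s ^ (S.τ - 1) * S.g (v s) := by
    rw [A, A, integral_add_adjacent_intervals h1 h3]
  rw [this]
  have : 0 ≤ ∫ s in x..y, s ^ (S.τ - 1) * S.g (v s) := by
    apply intervalIntegral.integral_nonneg hxy
    intro s hs
    exact mul_nonneg (rpow_nonneg (hx.trans hs.1) _) (S.hg_pos _).le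
  linarith

lemma A_le {v} (hv : S.Good v) {t : ℝ} (ht : 0 ≤ t) :
    S.A v t ≤ S.g (v t) * t ^ S.τ / S.τ := by
  have h1 : S.A v t ≤ ∫ s in (0:ℝ)..t, s ^ (S.τ - 1) * S.g (v t) := by
    apply intervalIntegral.integral_mono_on ht (integrandA_intble hv ht)
      ((intervalIntegrable_rpow' (by linarith [S.τ_pos])).mul_const _)
    intro s hs
    exact mul_le_mul_of_nonneg_left (S.hg_mono (hv.mono hs.2)) (rpow_nonneg hs.1 _)
  have h2 : ∫ s in (0:ℝ)..t, s ^ (S.τ - 1) * S.g (v t)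
      = S.g (v t) * t ^ S.τ / S.τ := by
    rw [intervalIntegral.integral_mul_const, integral_rpow (Or.inl (by linarith [S.τ_pos]))]
    rw [sub_add_cancel, Real.zero_rpow S.τ_pos.ne']
    ring
  linarith

lemma A_ge {v} (hv : S.Good v) {t : ℝ} (ht : 0 ≤ t) :
    S.g S.a * t ^ S.τ / S.τ ≤ S.A v t := by
  have h1 : ∫ s in (0:ℝ)..t, s ^ (S.τ - 1) * S.g S.a ≤ S.A v t := by
    apply intervalIntegral.integral_mono_on ht
      ((intervalIntegrable_rpow' (by linarith [S.τ_pos])).mul_const _)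
      (integrandA_intble hv ht)
    intro s hs
    exact mul_le_mul_of_nonneg_left (S.hg_mono (hv.le s)) (rpow_nonneg hs.1 _)
  have h2 : ∫ s in (0:ℝ)..t, s ^ (S.τ - 1) * S.g S.a
      = S.g S.a * t ^ S.τ / S.τ := by
    rw [intervalIntegral.integral_mul_const, integral_rpow (Or.inl (by linarith [S.τ_pos]))]
    rw [sub_add_cancel, Real.zero_rpow S.τ_pos.ne']
    ring
  linarith

lemma A_pos {v} (hv : S.Good v) {t : ℝ} (ht : 0 < t) : 0 < S.A v t :=
  lt_of_lt_of_le (div_pos (mul_pos (S.hg_pos _) (Real.rpow_pos_of_pos ht _)) S.τ_pos) (A_ge hv ht.le)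

lemma psi_nonneg {v} (hv : S.Good v) {t : ℝ} (ht : 0 ≤ t) : 0 ≤ S.psi v t :=
  mul_nonneg (mul_nonneg S.hC.le (rpow_nonneg ht _)) (rpow_nonneg (A_nonneg hv ht) _)

lemma psi_zero (v : ℝ → ℝ) : S.psi v 0 = 0 := by
  rw [psi, A_zero, Real.zero_rpow (one_div_ne_zero S.hθ.ne'), mul_zero]

lemma psi_le {v} (hv : S.Good v) {t : ℝ} (ht : 0 ≤ t) :
    S.psi v t ≤ S.C * (S.g (v t) / S.τ) ^ (1 / S.θ) * t ^ S.dlt := by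
  rcases eq_or_lt_of_le ht with h | h
  · rw [← h, psi_zero, Real.zero_rpow S.dlt_pos.ne', mul_zero]
  · have h1 : S.psi v t ≤ S.C * t ^ (-S.q) * (S.g (v t) * t ^ S.τ / S.τ) ^ (1 / S.θ) :=
      mul_le_mul_of_nonneg_left
        (Real.rpow_le_rpow (A_nonneg hv ht) (A_le hv ht) (one_div_nonneg.2 S.hθ.le))
        (mul_nonneg S.hC.le (rpow_nonneg ht _))
    have h2 : (S.g (v t) * t ^ S.τ / S.τ) ^ (1 / S.θ)
        = (S.g (v t) / S.τ) ^ (1 / S.θ) * t ^ (S.τ / S.θ) := by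
      rw [show S.g (v t) * t ^ S.τ / S.τ = S.g (v t) / S.τ * t ^ S.τ by ring,
        Real.mul_rpow (div_nonneg (S.hg_pos _).le S.τ_pos.le) (rpow_nonneg ht _),
        ← Real.rpow_mul ht, mul_one_div]
    calc S.psi v t
        ≤ S.C * t ^ (-S.q) * ((S.g (v t) / S.τ) ^ (1 / S.θ) * t ^ (S.τ / S.θ)) := by
          rw [← h2]; exact h1
      _ = S.C * (S.g (v t) / S.τ) ^ (1 / S.θ) * (t ^ (-S.q) * t ^ (S.τ / S.θ)) := by ring
      _ = S.C * (S.g (v t) / S.τ) ^ (1 / S.θ) * t ^ S.dlt := by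
          rw [← Real.rpow_add h, S.dlt_eq]; congr 1; ring

lemma A_hasDerivAt {v} (hv : S.Good v) {t : ℝ} (ht : 0 < t) :
    HasDerivAt (S.A v) (t ^ (S.τ - 1) * S.g (v t)) t := by
  have hmeas : Measurable fun s => s ^ (S.τ - 1) * S.g (v s) :=
    (measurable_id.pow_const _).mul (S.hg_cont.measurable.comp hv.mono.measurable)
  apply intervalIntegral.integral_hasDerivAt_right (integrandA_intble hv ht.le)
    ⟨univ, univ_mem, hmeas.aestronglyMeasurable.restrict⟩
  exact (Real.continuousAt_rpow_const t _ (Or.inl ht.ne')).mul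
    (S.hg_cont.continuousAt.comp (hv.contOn.continuousAt (Ici_mem_nhds ht)))

lemma psi_contAt {v} (hv : S.Good v) {t : ℝ} (ht : 0 < t) :
    ContinuousAt (S.psi v) t := by
  apply ContinuousAt.mul
  · exact continuousAt_const.mul (Real.continuousAt_rpow_const t _ (Or.inl ht.ne'))
  · exact (Real.continuousAt_rpow_const _ _ (Or.inl (A_pos hv ht).ne')).comp
      (A_hasDerivAt hv ht).continuousAt

lemma psi_intble {v} (hv : S.Good v) {x : ℝ} (hx : 0 ≤ x) :
    IntervalIntegrable (S.psi v) volume 0 x := by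
  rw [intervalIntegrable_iff_integrableOn_Ioc_of_le hx]
  have hmaj : IntegrableOn (fun t : ℝ => S.C * (S.g (v x) / S.τ) ^ (1 / S.θ) * t ^ S.dlt)
      (Ioc 0 x) := by
    rw [← intervalIntegrable_iff_integrableOn_Ioc_of_le hx]
    exact (intervalIntegrable_rpow' (by linarith [S.dlt_pos])).const_mul _
  apply Integrable.mono' hmaj
  · exact (ContinuousOn.aestronglyMeasurable
      (fun s hs => (psi_contAt hv hs.1).continuousWithinAt) measurableSet_Ioc)
  · rw [ae_restrict_iff' measurableSet_Ioc]
    filter_upwards with s hs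
    rw [Real.norm_eq_abs, abs_of_nonneg (psi_nonneg hv hs.1.le)]
    calc S.psi v s ≤ S.C * (S.g (v s) / S.τ) ^ (1 / S.θ) * s ^ S.dlt := psi_le hv hs.1.le
      _ ≤ S.C * (S.g (v x) / S.τ) ^ (1 / S.θ) * s ^ S.dlt := by
          apply mul_le_mul_of_nonneg_right _ (rpow_nonneg hs.1.le _)
          apply mul_le_mul_of_nonneg_left _ S.hC.le
          exact Real.rpow_le_rpow (div_nonneg (S.hg_pos _).le S.τ_pos.le)
            ((div_le_div_iff_of_pos_right S.τ_pos).mpr (S.hg_mono (hv.mono hs.2)))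
            (one_div_nonneg.2 S.hθ.le)

lemma A_le_A {u w} (hu : S.Good u) (hw : S.Good w) (huw : ∀ r, u r ≤ w r)
    {t : ℝ} (ht : 0 ≤ t) : S.A u t ≤ S.A w t := by
  apply intervalIntegral.integral_mono_on ht (integrandA_intble hu ht)
    (integrandA_intble hw ht)
  intro s hs
  exact mul_le_mul_of_nonneg_left (S.hg_mono (huw s)) (rpow_nonneg hs.1 _)

lemma psi_le_psi {u w} (hu : S.Good u) (hw : S.Good w) (huw : ∀ r, u r ≤ w r)
    {t : ℝ} (ht : 0 ≤ t) : S.psi u t ≤ S.psi w t :=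
  mul_le_mul_of_nonneg_left
    (Real.rpow_le_rpow (A_nonneg hu ht) (A_le_A hu hw huw ht) (one_div_nonneg.2 S.hθ.le))
    (mul_nonneg S.hC.le (rpow_nonneg ht _))

variable (S)

noncomputable def T (v : ℝ → ℝ) : ℝ → ℝ :=
  fun r => S.a + ∫ t in (0:ℝ)..(max r 0), S.psi v t

variable {S}

lemma T_apply {v : ℝ → ℝ} {r : ℝ} (hr : 0 ≤ r) :
    S.T v r = S.a + ∫ t in (0:ℝ)..r, S.psi v t := by rw [T, max_eq_left hr]

lemma T_apply_nonpos {v : ℝ → ℝ} {r : ℝ} (hr : r ≤ 0) : S.T v r = S.a := by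
  rw [T, max_eq_right hr, intervalIntegral.integral_same, add_zero]

lemma T_zero (v : ℝ → ℝ) : S.T v 0 = S.a := T_apply_nonpos le_rfl

lemma primitive_le {f : ℝ → ℝ} {x y : ℝ} (hf : IntervalIntegrable f volume 0 y)
    (hf' : IntervalIntegrable f volume 0 x)
    (hpos : ∀ t ∈ Icc x y, 0 ≤ f t) (hx : 0 ≤ x) (hxy : x ≤ y) :
    (∫ t in (0:ℝ)..x, f t) ≤ ∫ t in (0:ℝ)..y, f t := by
  have h3 : IntervalIntegrable f volume x y :=
    hf.mono_set (by
      rw [uIcc_of_le hxy, uIcc_of_le (hx.trans hxy)]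
      exact Icc_subset_Icc hx le_rfl)
  have h4 : (0:ℝ) ≤ ∫ t in x..y, f t := intervalIntegral.integral_nonneg hxy hpos
  have h5 := intervalIntegral.integral_add_adjacent_intervals hf' h3
  linarith

lemma T_mono {v} (hv : S.Good v) : Monotone (S.T v) := by
  intro r r' h
  rw [T, T]
  have hm : (0:ℝ) ≤ max r 0 := le_max_right _ _
  have hmm : max r 0 ≤ max r' 0 := max_le_max h le_rfl
  have := primitive_le (psi_intble hv (hm.trans hmm)) (psi_intble hv hm)
    (fun t htt => psi_nonneg hv (hm.trans htt.1)) hm hmm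
  linarith

lemma T_ge {v} (hv : S.Good v) (r : ℝ) : S.a ≤ S.T v r := by
  rw [T]
  have : 0 ≤ ∫ t in (0:ℝ)..(max r 0), S.psi v t :=
    intervalIntegral.integral_nonneg (le_max_right _ _) (fun t htt => psi_nonneg hv htt.1)
  linarith

lemma T_contOn {v} (hv : S.Good v) : ContinuousOn (S.T v) (Ici 0) := by
  intro x hx
  have hx0 : (0:ℝ) ≤ x := hx
  set M := x + 1 with hM
  have hint : IntegrableOn (S.psi v) (Icc 0 M) volume := by
    rw [integrableOn_Icc_iff_integrableOn_Ioc]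
    rw [← intervalIntegrable_iff_integrableOn_Ioc_of_le (by linarith)]
    exact psi_intble hv (by linarith)
  have hprim : ContinuousOn (fun y => ∫ t in Ioc (0:ℝ) y, S.psi v t) (Icc 0 M) :=
    intervalIntegral.continuousOn_primitive hint
  have h1 : ContinuousWithinAt (fun y => ∫ t in Ioc (0:ℝ) y, S.psi v t) (Ici 0) x := by
    apply (hprim x ⟨hx0, by linarith⟩).mono_of_mem_nhdsWithin
    apply Filter.mem_of_superset (inter_mem_nhdsWithin (Ici 0) (Iio_mem_nhds (by linarith : x < M)))
    rintro y ⟨hy1, hy2⟩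
    exact ⟨hy1, le_of_lt hy2⟩
  apply ((continuousWithinAt_const (b := S.a)).add h1).congr
  · intro y hy
    rw [T_apply hy, intervalIntegral.integral_of_le hy]; rfl
  · rw [T_apply hx0, intervalIntegral.integral_of_le hx0]; rfl

lemma T_good {v} (hv : S.Good v) : S.Good (S.T v) :=
  ⟨T_contOn hv, T_mono hv, T_ge hv⟩

lemma T_le_T {u w} (hu : S.Good u) (hw : S.Good w) (huw : ∀ r, u r ≤ w r) (r : ℝ) :
    S.T u r ≤ S.T w r := by
  rw [T, T]
  have h := intervalIntegral.integral_mono_on (le_max_right r 0)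
    (psi_intble hu (le_max_right r 0)) (psi_intble hw (le_max_right r 0))
    (fun t htt => psi_le_psi hu hw huw htt.1)
  linarith

lemma psi_pos {v} (hv : S.Good v) {s : ℝ} (hs : 0 < s) : 0 < S.psi v s :=
  mul_pos (mul_pos S.hC (Real.rpow_pos_of_pos hs _))
    (Real.rpow_pos_of_pos (A_pos hv hs) _)

lemma T_hasDerivAt {v} (hv : S.Good v) {r : ℝ} (hr : 0 < r) :
    HasDerivAt (S.T v) (S.psi v r) r := by
  have hmeas : StronglyMeasurableAtFilter (S.psi v) (𝓝 r) volume :=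
    ⟨Ioi 0, Ioi_mem_nhds hr, (ContinuousOn.aestronglyMeasurable
      (fun s hs => (psi_contAt hv hs).continuousWithinAt) measurableSet_Ioi)⟩
  have hF : HasDerivAt (fun y => ∫ t in (0:ℝ)..y, S.psi v t) (S.psi v r) r :=
    intervalIntegral.integral_hasDerivAt_right (psi_intble hv hr.le) hmeas (psi_contAt hv hr)
  have h2 : HasDerivAt (fun y => S.a + ∫ t in (0:ℝ)..y, S.psi v t) (S.psi v r) r :=
    hF.const_add _
  apply h2.congr_of_eventuallyEq
  filter_upwards [Ioi_mem_nhds hr] with y hy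
  rw [T_apply (le_of_lt hy)]

noncomputable def psiD (v : ℝ → ℝ) (s : ℝ) : ℝ :=
  S.C * ((-S.q) * s ^ (-S.q - 1) * (S.A v s) ^ (1/S.θ) +
    s ^ (-S.q) * ((1/S.θ) * (S.A v s) ^ (1/S.θ - 1) * (s ^ (S.τ-1) * S.g (v s))))

lemma psi_hasDerivAt {v} (hv : S.Good v) {s : ℝ} (hs : 0 < s) :
    HasDerivAt (S.psi v) (S.psiD v s) s := by
  have h1 : HasDerivAt (fun y : ℝ => y ^ (-S.q)) ((-S.q) * s ^ (-S.q - 1)) s :=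
    Real.hasDerivAt_rpow_const (Or.inl hs.ne')
  have h2 : HasDerivAt (fun y => (S.A v y) ^ (1/S.θ))
      ((1/S.θ) * (S.A v s) ^ (1/S.θ - 1) * (s ^ (S.τ-1) * S.g (v s))) s :=
    (Real.hasDerivAt_rpow_const (x := S.A v s) (p := 1/S.θ)
      (Or.inl (A_pos hv hs).ne')).comp s (A_hasDerivAt hv hs)
  have h3 := (h1.mul h2).const_mul S.C
  have hfun : S.psi v = fun y => S.C * (y ^ (-S.q) * (S.A v y) ^ (1/S.θ)) := by
    funext y; rw [psi, mul_assoc]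
  rw [hfun, psiD]
  exact h3

lemma psiD_le {v} (hv : S.Good v) {s : ℝ} (hs : 0 < s) :
    S.psiD v s ≤ S.C * (s ^ (-S.q) *
      ((1/S.θ) * (S.A v s) ^ (1/S.θ - 1) * (s ^ (S.τ-1) * S.g (v s)))) := by
  rw [psiD]
  apply mul_le_mul_of_nonneg_left _ S.hC.le
  have h1 : (-S.q) * s ^ (-S.q - 1) * (S.A v s) ^ (1/S.θ) ≤ 0 := by
    apply mul_nonpos_of_nonpos_of_nonneg
    · exact mul_nonpos_of_nonpos_of_nonneg (by linarith [S.hq]) (rpow_nonneg hs.le _)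
    · exact rpow_nonneg (A_nonneg hv hs.le) _
  linarith

end Setup

noncomputable def Setup.seq (S : Setup) : ℕ → ℝ → ℝ
  | 0 => fun _ => S.a
  | n+1 => S.T (Setup.seq S n)

namespace Setup

variable {S : Setup}

lemma seq_succ (n : ℕ) : S.seq (n+1) = S.T (S.seq n) := rfl
lemma seq_zero : S.seq 0 = fun _ => S.a := rfl

lemma seq_good : ∀ n, S.Good (S.seq n)
  | 0 => ⟨continuousOn_const, monotone_const, fun _ => le_rfl⟩
  | n+1 => by rw [seq_succ]; exact T_good (seq_good n)

lemma seq_le_succ : ∀ n (r : ℝ), S.seq n r ≤ S.seq (n+1) r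
  | 0, r => by rw [seq_succ]; exact T_ge (seq_good 0) r
  | n+1, r => by
      rw [seq_succ, seq_succ]
      exact T_le_T (seq_good n) (seq_good (n+1)) (seq_le_succ n) r

lemma seq_mono_n (r : ℝ) : Monotone fun n => S.seq n r :=
  monotone_nat_of_le_succ fun n => seq_le_succ n r

lemma seq_zero_eval : ∀ n, S.seq n 0 = S.a
  | 0 => rfl
  | n+1 => by rw [seq_succ]; exact T_zero _

lemma seq_nonpos {r : ℝ} (hr : r ≤ 0) : ∀ n, S.seq n r = S.a
  | 0 => rfl
  | n+1 => by rw [seq_succ]; exact T_apply_nonpos hr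

lemma pow_psi_hasDerivAt (m : ℝ) {v} (hv : S.Good v) {s : ℝ} (hs : 0 < s) :
    HasDerivAt (fun y => (S.psi v y) ^ m) (m * (S.psi v s) ^ (m-1) * S.psiD v s) s :=
  (Real.hasDerivAt_rpow_const (x := S.psi v s) (p := m)
    (Or.inl (psi_pos hv hs).ne')).comp s (psi_hasDerivAt hv hs)

lemma key_ineq {κ : ℝ} (hκ : 1 < κ) {v} (hv : S.Good v) {s : ℝ} (hs : 0 < s) :
    (κ*S.θ+1) * (S.psi v s) ^ (κ*S.θ+1-1) * S.psiD v s
      ≤ (κ*S.θ+1)/S.θ * S.C ^ (κ*S.θ) * S.τ ^ (1-κ) *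
          s ^ (κ*(S.τ-S.θ*S.q)-1) * S.g (v s) ^ κ * S.psi v s := by
  have hC := S.hC; have hθ := S.hθ; have hτ := S.τ_pos; have hq := S.hq
  have hA := A_pos hv hs
  have hG := S.hg_pos (v s)
  have hps := psi_pos hv hs
  have hκ0 : (0:ℝ) < κ := lt_trans one_pos hκ
  have hm : (0:ℝ) < κ*S.θ+1 := by positivity
  have h1 : (κ*S.θ+1) * (S.psi v s) ^ (κ*S.θ+1-1) * S.psiD v s
      ≤ (κ*S.θ+1) * (S.psi v s) ^ (κ*S.θ+1-1) * (S.C * (s ^ (-S.q) *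
        ((1/S.θ) * (S.A v s) ^ (1/S.θ - 1) * (s ^ (S.τ-1) * S.g (v s))))) :=
    mul_le_mul_of_nonneg_left (psiD_le hv hs) (by positivity)
  refine h1.trans ?_
  have hlog : Real.log (S.A v s) ≤ Real.log (S.g (v s)) + S.τ * Real.log s - Real.log S.τ := by
    have h := Real.log_le_log hA (A_le hv hs.le)
    rwa [Real.log_div (by positivity) hτ.ne', Real.log_mul hG.ne' (by positivity),
      Real.log_rpow hs] at h
  simp only [psi]
  rw [← Real.log_le_log_iff (by positivity) (by positivity)]
  repeat first
    | rw [Real.log_mul (by positivity) (by positivity)]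
    | rw [Real.log_rpow (by positivity)]
    | rw [Real.log_div (by positivity) (by positivity)]
  rw [Real.log_one]
  have e1 : κ*S.θ*((1/S.θ) * Real.log (S.A v s)) = κ * Real.log (S.A v s) := by
    field_simp
  nlinarith [mul_le_mul_of_nonneg_left hlog (by linarith : (0:ℝ) ≤ κ - 1), e1]

variable (S) in
noncomputable def Phi (κ : ℝ) (x : ℝ) : ℝ := ∫ s in (0:ℝ)..x, S.g s ^ κ

lemma gk_cont (κ : ℝ) : Continuous (fun s => S.g s ^ κ) :=
  S.hg_cont.rpow_const (fun x => Or.inl (S.hg_pos x).ne')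

lemma gk_pos (κ : ℝ) (x : ℝ) : 0 < S.g x ^ κ := Real.rpow_pos_of_pos (S.hg_pos x) _

lemma Phi_hasDerivAt (κ : ℝ) (x : ℝ) : HasDerivAt (S.Phi κ) (S.g x ^ κ) x :=
  intervalIntegral.integral_hasDerivAt_right ((gk_cont κ).intervalIntegrable _ _)
    ⟨univ, univ_mem, ((gk_cont κ).measurable).aestronglyMeasurable.restrict⟩
    (gk_cont κ).continuousAt

lemma Phi_mono (κ : ℝ) : Monotone (S.Phi κ) := by
  intro x y h
  have h1 := (gk_cont (S := S) κ).intervalIntegrable (μ := volume) 0 x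
  have h2 := (gk_cont (S := S) κ).intervalIntegrable (μ := volume) x y
  have h3 := intervalIntegral.integral_add_adjacent_intervals h1 h2
  have h4 : 0 ≤ ∫ s in x..y, S.g s ^ κ :=
    intervalIntegral.integral_nonneg h (fun u _ => (gk_pos κ u).le)
  rw [Phi, Phi, ← h3]
  linarith

lemma Phi_contAt (κ : ℝ) (x : ℝ) : ContinuousAt (S.Phi κ) x :=
  (Phi_hasDerivAt κ x).continuousAt

variable (S) in
noncomputable def Lam (κ : ℝ) (x : ℝ) : ℝ := S.Phi κ x - S.Phi κ S.a + 1

lemma Lam_hasDerivAt (κ : ℝ) (x : ℝ) : HasDerivAt (S.Lam κ) (S.g x ^ κ) x := by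
  have := ((Phi_hasDerivAt (S := S) κ x).sub_const (S.Phi κ S.a)).add_const 1
  exact this

lemma Lam_contAt (κ : ℝ) (x : ℝ) : ContinuousAt (S.Lam κ) x :=
  (Lam_hasDerivAt κ x).continuousAt

lemma Lam_one_le (κ : ℝ) {x : ℝ} (hx : S.a ≤ x) : 1 ≤ S.Lam κ x := by
  have := Phi_mono (S := S) κ hx
  rw [Lam]; linarith

lemma Lam_pos_of_mem (κ : ℝ) {x : ℝ} (hx : S.a ≤ x) : 0 < S.Lam κ x :=
  lt_of_lt_of_le one_pos (Lam_one_le κ hx)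

lemma Lam_mono (κ : ℝ) : Monotone (S.Lam κ) := by
  intro x y h
  have := Phi_mono (S := S) κ h
  rw [Lam, Lam]; linarith

/-- the open set where `Lam` is positive -/
lemma isOpen_LamPos (κ : ℝ) : IsOpen {x : ℝ | 0 < S.Lam κ x} :=
  isOpen_lt continuous_const (continuous_iff_continuousAt.2 (Lam_contAt κ))

variable (S) in
noncomputable def Hf (κ : ℝ) (x : ℝ) : ℝ :=
  ∫ t in S.a..x, (S.Lam κ t) ^ (-(1/(κ*S.θ+1)))

lemma Hint_contAt (κ : ℝ) {x : ℝ} (hx : 0 < S.Lam κ x) :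
    ContinuousAt (fun t => (S.Lam κ t) ^ (-(1/(κ*S.θ+1)))) x :=
  (Real.continuousAt_rpow_const _ _ (Or.inl hx.ne')).comp (Lam_contAt κ x)

lemma Hf_hasDerivAt (κ : ℝ) {x : ℝ} (hx : S.a ≤ x) :
    HasDerivAt (S.Hf κ) ((S.Lam κ x) ^ (-(1/(κ*S.θ+1)))) x := by
  have hsub : Icc S.a x ⊆ {y : ℝ | 0 < S.Lam κ y} :=
    fun y hy => Lam_pos_of_mem κ hy.1
  have hint : IntervalIntegrable (fun t => (S.Lam κ t) ^ (-(1/(κ*S.θ+1)))) volume S.a x := by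
    apply ContinuousOn.intervalIntegrable
    rw [uIcc_of_le hx]
    exact fun y hy => ((Hint_contAt κ (hsub hy)).continuousWithinAt)
  apply intervalIntegral.integral_hasDerivAt_right hint
  · refine ⟨{y : ℝ | 0 < S.Lam κ y}, (isOpen_LamPos κ).mem_nhds (Lam_pos_of_mem κ hx), ?_⟩
    exact ContinuousOn.aestronglyMeasurable
      (fun y hy => (Hint_contAt κ hy).continuousWithinAt) (isOpen_LamPos κ).measurableSet
  · exact Hint_contAt κ (Lam_pos_of_mem κ hx)

lemma Hf_zero (κ : ℝ) : S.Hf κ S.a = 0 := intervalIntegral.integral_same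

lemma Hf_strictMonoOn (κ : ℝ) : StrictMonoOn (S.Hf κ) (Ici S.a) := by
  apply strictMonoOn_of_deriv_pos (convex_Ici _)
  · exact fun x hx => (Hf_hasDerivAt κ hx).continuousAt.continuousWithinAt
  · intro x hx
    rw [interior_Ici] at hx
    rw [(Hf_hasDerivAt κ hx.le).deriv]
    exact Real.rpow_pos_of_pos (Lam_pos_of_mem κ hx.le) _

lemma psi_tendsto_zero {v} (hv : S.Good v) :
    Tendsto (S.psi v) (𝓝[>] (0:ℝ)) (𝓝 0) := by
  set K := S.C * (S.g (v 1) / S.τ) ^ (1/S.θ) with hK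
  have hK0 : 0 ≤ K := by
    have h1 := S.hg_pos (v 1); have h2 := S.τ_pos; have h3 := S.hC
    positivity
  have hup : ∀ t ∈ Ioo (0:ℝ) 1, S.psi v t ≤ K * t ^ S.dlt := by
    intro t ht
    refine (psi_le hv ht.1.le).trans ?_
    apply mul_le_mul_of_nonneg_right _ (rpow_nonneg ht.1.le _)
    apply mul_le_mul_of_nonneg_left _ S.hC.le
    exact Real.rpow_le_rpow (div_nonneg (S.hg_pos _).le S.τ_pos.le)
      ((div_le_div_iff_of_pos_right S.τ_pos).mpr (S.hg_mono (hv.mono ht.2.le)))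
      (one_div_nonneg.2 S.hθ.le)
  have hrp : Tendsto (fun t : ℝ => t ^ S.dlt) (𝓝[>] 0) (𝓝 0) := by
    have h := (Real.continuousAt_rpow_const 0 S.dlt (Or.inr S.dlt_pos.le)).tendsto
    rw [Real.zero_rpow S.dlt_pos.ne'] at h
    exact h.mono_left nhdsWithin_le_nhds
  have hKrp : Tendsto (fun t : ℝ => K * t ^ S.dlt) (𝓝[>] 0) (𝓝 0) := by
    simpa using hrp.const_mul K
  apply tendsto_of_tendsto_of_tendsto_of_le_of_le' tendsto_const_nhds hKrp
  · filter_upwards [self_mem_nhdsWithin] with t ht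
    exact psi_nonneg hv (le_of_lt ht)
  · filter_upwards [Ioo_mem_nhdsGT_of_mem (⟨le_rfl, one_pos⟩ : (0:ℝ) ∈ Ico 0 1)]
      with t ht
    exact hup t ht

lemma psi_pow_tendsto_zero {m : ℝ} (hm : 0 < m) {v} (hv : S.Good v) :
    Tendsto (fun t => (S.psi v t) ^ m) (𝓝[>] (0:ℝ)) (𝓝 0) := by
  have h := (Real.continuousAt_rpow_const 0 m (Or.inr hm.le)).tendsto
  rw [Real.zero_rpow hm.ne'] at h
  exact h.comp (psi_tendsto_zero hv)

variable (S) in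
noncomputable def c3 (κ : ℝ) : ℝ := (κ*S.θ+1)/S.θ * S.C ^ (κ*S.θ) * S.τ ^ (1-κ)

variable (S) in
noncomputable def pex (κ : ℝ) : ℝ := κ*(S.τ-S.θ*S.q)-1

variable (S) in
noncomputable def c4 (κ : ℝ) : ℝ := (S.c3 κ) ^ (1/(κ*S.θ+1))

variable (S) in
noncomputable def pex' (κ : ℝ) : ℝ := S.pex κ / (κ*S.θ+1)

variable (S) in
noncomputable def Nf (κ : ℝ) (r : ℝ) : ℝ := ((1+r) ^ (S.pex' κ + 1) - 1)/(S.pex' κ + 1)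

lemma c3_pos {κ : ℝ} (hκ0 : 0 < κ) : 0 < S.c3 κ := by
  have h1 := S.hθ; have h2 := S.hC; have h3 := S.τ_pos
  rw [c3]; positivity

lemma c4_pos {κ : ℝ} (hκ0 : 0 < κ) : 0 < S.c4 κ :=
  Real.rpow_pos_of_pos (c3_pos hκ0) _

lemma pex_nonneg {κ : ℝ} (hκτ : 1 < κ*(S.τ-S.θ*S.q)) : 0 ≤ S.pex κ := by
  rw [pex]; linarith

lemma m_pos {κ : ℝ} (hκ0 : 0 < κ) : 0 < κ*S.θ+1 := by
  have := S.hθ; positivity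

lemma pex'_nonneg {κ : ℝ} (hκ0 : 0 < κ) (hκτ : 1 < κ*(S.τ-S.θ*S.q)) : 0 ≤ S.pex' κ :=
  div_nonneg (pex_nonneg hκτ) (m_pos hκ0).le

lemma Nf_hasDerivAt {κ : ℝ} (hκ0 : 0 < κ) (hκτ : 1 < κ*(S.τ-S.θ*S.q)) {s : ℝ} (hs : 0 ≤ s) :
    HasDerivAt (S.Nf κ) ((1+s) ^ (S.pex' κ)) s := by
  have h1 : HasDerivAt (fun y : ℝ => 1+y) 1 s := (hasDerivAt_id s).const_add 1
  have h2 := (Real.hasDerivAt_rpow_const (x := 1+s) (p := S.pex' κ + 1)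
    (Or.inl (by linarith : (1:ℝ)+s ≠ 0))).comp s h1
  have h3 := (h2.sub_const 1).div_const (S.pex' κ + 1)
  have hm1 : S.pex' κ + 1 ≠ 0 := by
    have := pex'_nonneg hκ0 hκτ; linarith
  refine HasDerivAt.congr_deriv (f := S.Nf κ) h3 ?_
  rw [show S.pex' κ + 1 - 1 = S.pex' κ by ring]
  field_simp

lemma Nf_zero (κ : ℝ) : S.Nf κ 0 = 0 := by
  rw [Nf, add_zero, Real.one_rpow, sub_self, zero_div]

lemma Nf_nonneg {κ : ℝ} (hκ0 : 0 < κ) (hκτ : 1 < κ*(S.τ-S.θ*S.q)) {r : ℝ} (hr : 0 ≤ r) :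
    0 ≤ S.Nf κ r := by
  rw [Nf]
  have h1 : (1:ℝ) ≤ (1+r) ^ (S.pex' κ + 1) := by
    have h0 : ((1:ℝ)) ^ (S.pex' κ + 1) ≤ (1+r) ^ (S.pex' κ + 1) :=
      Real.rpow_le_rpow (by norm_num) (by linarith) (by linarith [pex'_nonneg hκ0 hκτ])
    rwa [Real.one_rpow] at h0
  have h2 : 0 < S.pex' κ + 1 := by linarith [pex'_nonneg hκ0 hκτ]
  exact div_nonneg (by linarith) h2.le

lemma P_le {κ : ℝ} (hκ : 1 < κ) (hκτ : 1 < κ*(S.τ-S.θ*S.q)) {v} (hv : S.Good v)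
    (hvT : ∀ x, v x ≤ S.T v x) {r : ℝ} (hr : 0 < r) :
    (S.psi v r) ^ (κ*S.θ+1)
      ≤ S.c3 κ * (1+r) ^ (S.pex κ) * (S.Phi κ (S.T v r) - S.Phi κ S.a) := by
  have hκ0 : (0:ℝ) < κ := lt_trans one_pos hκ
  have hw : S.Good (S.T v) := T_good hv
  have main : ∀ r₀ ∈ Ioo (0:ℝ) r,
      (S.psi v r) ^ (κ*S.θ+1) ≤ (S.psi v r₀) ^ (κ*S.θ+1)
        + S.c3 κ * (1+r) ^ (S.pex κ) * (S.Phi κ (S.T v r) - S.Phi κ (S.T v r₀)) := by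
    intro r₀ h₀
    set D1 : ℝ → ℝ := fun s =>
      S.c3 κ * (1+r) ^ (S.pex κ) * S.Phi κ (S.T v s) - (S.psi v s) ^ (κ*S.θ+1) with hD1
    have hder : ∀ s, 0 < s → HasDerivAt D1
        (S.c3 κ * (1+r) ^ (S.pex κ) * (S.g (S.T v s) ^ κ * S.psi v s)
          - ((κ*S.θ+1) * (S.psi v s) ^ (κ*S.θ+1-1) * S.psiD v s)) s := by
      intro s hs
      exact (((Phi_hasDerivAt κ (S.T v s)).comp s (T_hasDerivAt hv hs)).const_mul
        (S.c3 κ * (1+r) ^ (S.pex κ))).sub (pow_psi_hasDerivAt _ hv hs)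
    have hmono : MonotoneOn D1 (Icc r₀ r) := by
      apply monotoneOn_of_deriv_nonneg (convex_Icc _ _)
      · exact fun s hs => (hder s (lt_of_lt_of_le h₀.1 hs.1)).continuousAt.continuousWithinAt
      · intro s hs
        rw [interior_Icc] at hs
        exact (hder s (lt_trans h₀.1 hs.1)).differentiableAt.differentiableWithinAt
      · intro s hs
        rw [interior_Icc] at hs
        have hs0 : 0 < s := lt_trans h₀.1 hs.1
        rw [(hder s hs0).deriv]
        have k1 := key_ineq hκ hv hs0
        have k2 : S.c3 κ * s ^ (S.pex κ) * S.g (v s) ^ κ * S.psi v s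
            ≤ S.c3 κ * (1+r) ^ (S.pex κ) * (S.g (S.T v s) ^ κ * S.psi v s) := by
          have e1 : s ^ (S.pex κ) ≤ (1+r) ^ (S.pex κ) :=
            Real.rpow_le_rpow hs0.le (by linarith [hs.2]) (pex_nonneg hκτ)
          have e2 : S.g (v s) ^ κ ≤ S.g (S.T v s) ^ κ :=
            Real.rpow_le_rpow (S.hg_pos _).le (S.hg_mono (hvT s)) hκ0.le
          have e3 : 0 ≤ S.psi v s := psi_nonneg hv hs0.le
          have e4 : 0 ≤ S.c3 κ := (c3_pos hκ0).le
          have e5 : 0 ≤ S.g (v s) ^ κ := (gk_pos κ _).le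
          have e6 : 0 ≤ s ^ (S.pex κ) := rpow_nonneg hs0.le _
          calc S.c3 κ * s ^ (S.pex κ) * S.g (v s) ^ κ * S.psi v s
              ≤ S.c3 κ * (1+r) ^ (S.pex κ) * S.g (S.T v s) ^ κ * S.psi v s := by
                apply mul_le_mul_of_nonneg_right _ e3
                apply mul_le_mul (mul_le_mul_of_nonneg_left e1 e4) e2 e5 (by positivity)
            _ = S.c3 κ * (1+r) ^ (S.pex κ) * (S.g (S.T v s) ^ κ * S.psi v s) := by ring
        have k3 : (κ*S.θ+1) * (S.psi v s) ^ (κ*S.θ+1-1) * S.psiD v s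
            ≤ S.c3 κ * s ^ (S.pex κ) * S.g (v s) ^ κ * S.psi v s := by
          simp only [c3, pex]
          exact k1
        linarith
    have hend := hmono (left_mem_Icc.2 h₀.2.le) (right_mem_Icc.2 h₀.2.le) h₀.2.le
    rw [hD1] at hend
    simp only at hend
    linarith
  -- pass to the limit r₀ → 0⁺
  have hψ : Tendsto (fun t => (S.psi v t) ^ (κ*S.θ+1)) (𝓝[>] (0:ℝ)) (𝓝 0) :=
    psi_pow_tendsto_zero (m_pos hκ0) hv
  have hw0 : Tendsto (fun t => S.Phi κ (S.T v t)) (𝓝[>] (0:ℝ)) (𝓝 (S.Phi κ S.a)) := by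
    have h1 : ContinuousWithinAt (S.T v) (Ici 0) 0 := hw.contOn 0 Set.self_mem_Ici
    have h2 : Tendsto (S.T v) (𝓝[>] (0:ℝ)) (𝓝 S.a) := by
      have := h1.tendsto
      rw [T_zero] at this
      exact this.mono_left (nhdsWithin_mono _ Ioi_subset_Ici_self)
    exact ((Phi_contAt κ S.a).tendsto).comp h2
  have hlim : Tendsto (fun r₀ => (S.psi v r₀) ^ (κ*S.θ+1)
      + S.c3 κ * (1+r) ^ (S.pex κ) * (S.Phi κ (S.T v r) - S.Phi κ (S.T v r₀)))
      (𝓝[>] (0:ℝ))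
      (𝓝 (0 + S.c3 κ * (1+r) ^ (S.pex κ) * (S.Phi κ (S.T v r) - S.Phi κ S.a))) :=
    hψ.add ((tendsto_const_nhds.sub hw0).const_mul _)
  have hev : ∀ᶠ r₀ in 𝓝[>] (0:ℝ), (S.psi v r) ^ (κ*S.θ+1) ≤ (S.psi v r₀) ^ (κ*S.θ+1)
      + S.c3 κ * (1+r) ^ (S.pex κ) * (S.Phi κ (S.T v r) - S.Phi κ (S.T v r₀)) := by
    filter_upwards [Ioo_mem_nhdsGT_of_mem (⟨le_rfl, hr⟩ : (0:ℝ) ∈ Ico 0 r)] with r₀ h₀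
    exact main r₀ h₀
  have hfin := ge_of_tendsto hlim hev
  linarith [hfin]

lemma psi_le_c4 {κ : ℝ} (hκ : 1 < κ) (hκτ : 1 < κ*(S.τ-S.θ*S.q)) {v} (hv : S.Good v)
    (hvT : ∀ x, v x ≤ S.T v x) {r : ℝ} (hr : 0 < r) :
    S.psi v r ≤ S.c4 κ * (1+r) ^ (S.pex' κ) * (S.Lam κ (S.T v r)) ^ (1/(κ*S.θ+1)) := by
  have hκ0 : (0:ℝ) < κ := lt_trans one_pos hκ
  have hm := m_pos (S := S) hκ0
  have h1 := P_le hκ hκτ hv hvT hr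
  have hLpos : 0 < S.Lam κ (S.T v r) := Lam_pos_of_mem κ (T_ge hv r)
  have h2 : S.Phi κ (S.T v r) - S.Phi κ S.a ≤ S.Lam κ (S.T v r) := by rw [Lam]; linarith
  have h3 : (S.psi v r) ^ (κ*S.θ+1) ≤ S.c3 κ * (1+r) ^ (S.pex κ) * S.Lam κ (S.T v r) :=
    h1.trans (mul_le_mul_of_nonneg_left h2
      (mul_nonneg (c3_pos hκ0).le (rpow_nonneg (by linarith) _)))
  have h4 : ((S.psi v r) ^ (κ*S.θ+1)) ^ (1/(κ*S.θ+1))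
      ≤ (S.c3 κ * (1+r) ^ (S.pex κ) * S.Lam κ (S.T v r)) ^ (1/(κ*S.θ+1)) :=
    Real.rpow_le_rpow (rpow_nonneg (psi_nonneg hv hr.le) _) h3 (by positivity)
  have h5 : ((S.psi v r) ^ (κ*S.θ+1)) ^ (1/(κ*S.θ+1)) = S.psi v r := by
    rw [← Real.rpow_mul (psi_nonneg hv hr.le), mul_one_div, div_self hm.ne', Real.rpow_one]
  have h6 : (S.c3 κ * (1+r) ^ (S.pex κ) * S.Lam κ (S.T v r)) ^ (1/(κ*S.θ+1))
      = S.c4 κ * (1+r) ^ (S.pex' κ) * (S.Lam κ (S.T v r)) ^ (1/(κ*S.θ+1)) := by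
    rw [Real.mul_rpow (mul_nonneg (c3_pos hκ0).le (rpow_nonneg (by linarith) _)) hLpos.le,
        Real.mul_rpow (c3_pos hκ0).le (rpow_nonneg (by linarith) _),
        ← Real.rpow_mul (by linarith : (0:ℝ) ≤ 1+r), c4, pex', mul_one_div]
  calc S.psi v r = ((S.psi v r) ^ (κ*S.θ+1)) ^ (1/(κ*S.θ+1)) := h5.symm
    _ ≤ (S.c3 κ * (1+r) ^ (S.pex κ) * S.Lam κ (S.T v r)) ^ (1/(κ*S.θ+1)) := h4
    _ = _ := h6

lemma Hf_le {κ : ℝ} (hκ : 1 < κ) (hκτ : 1 < κ*(S.τ-S.θ*S.q)) {v} (hv : S.Good v)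
    (hvT : ∀ x, v x ≤ S.T v x) {r : ℝ} (hr : 0 < r) :
    S.Hf κ (S.T v r) ≤ S.c4 κ * S.Nf κ r := by
  have hκ0 : (0:ℝ) < κ := lt_trans one_pos hκ
  have hw : S.Good (S.T v) := T_good hv
  have main : ∀ r₀ ∈ Ioo (0:ℝ) r,
      S.Hf κ (S.T v r) ≤ S.Hf κ (S.T v r₀) + S.c4 κ * (S.Nf κ r - S.Nf κ r₀) := by
    intro r₀ h₀
    set D2 : ℝ → ℝ := fun s => S.c4 κ * S.Nf κ s - S.Hf κ (S.T v s) with hD2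
    have hder : ∀ s, 0 < s → HasDerivAt D2
        (S.c4 κ * (1+s) ^ (S.pex' κ)
          - (S.Lam κ (S.T v s)) ^ (-(1/(κ*S.θ+1))) * S.psi v s) s := by
      intro s hs
      exact ((Nf_hasDerivAt hκ0 hκτ hs.le).const_mul _).sub
        ((Hf_hasDerivAt κ (T_ge hv s)).comp s (T_hasDerivAt hv hs))
    have hmono : MonotoneOn D2 (Icc r₀ r) := by
      apply monotoneOn_of_deriv_nonneg (convex_Icc _ _)
      · exact fun s hs => (hder s (lt_of_lt_of_le h₀.1 hs.1)).continuousAt.continuousWithinAt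
      · intro s hs
        rw [interior_Icc] at hs
        exact (hder s (lt_trans h₀.1 hs.1)).differentiableAt.differentiableWithinAt
      · intro s hs
        rw [interior_Icc] at hs
        have hs0 : 0 < s := lt_trans h₀.1 hs.1
        rw [(hder s hs0).deriv]
        have hL : 0 < S.Lam κ (S.T v s) := Lam_pos_of_mem κ (T_ge hv s)
        have h7 : (S.Lam κ (S.T v s)) ^ (-(1/(κ*S.θ+1))) * S.psi v s
            ≤ (S.Lam κ (S.T v s)) ^ (-(1/(κ*S.θ+1))) *
              (S.c4 κ * (1+s) ^ (S.pex' κ) * (S.Lam κ (S.T v s)) ^ (1/(κ*S.θ+1))) :=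
          mul_le_mul_of_nonneg_left (psi_le_c4 hκ hκτ hv hvT hs0) (rpow_nonneg hL.le _)
        have hLL : (S.Lam κ (S.T v s)) ^ (-(1/(κ*S.θ+1))) *
            (S.Lam κ (S.T v s)) ^ (1/(κ*S.θ+1)) = 1 := by
          rw [← Real.rpow_add hL, neg_add_cancel, Real.rpow_zero]
        have h8 : (S.Lam κ (S.T v s)) ^ (-(1/(κ*S.θ+1))) *
            (S.c4 κ * (1+s) ^ (S.pex' κ) * (S.Lam κ (S.T v s)) ^ (1/(κ*S.θ+1)))
            = S.c4 κ * (1+s) ^ (S.pex' κ) := by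
          calc (S.Lam κ (S.T v s)) ^ (-(1/(κ*S.θ+1))) *
              (S.c4 κ * (1+s) ^ (S.pex' κ) * (S.Lam κ (S.T v s)) ^ (1/(κ*S.θ+1)))
              = S.c4 κ * (1+s) ^ (S.pex' κ) * ((S.Lam κ (S.T v s)) ^ (-(1/(κ*S.θ+1))) *
                (S.Lam κ (S.T v s)) ^ (1/(κ*S.θ+1))) := by ring
            _ = S.c4 κ * (1+s) ^ (S.pex' κ) := by rw [hLL, mul_one]
        linarith [h7.trans_eq h8]
    have hend := hmono (left_mem_Icc.2 h₀.2.le) (right_mem_Icc.2 h₀.2.le) h₀.2.le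
    rw [hD2] at hend
    simp only at hend
    linarith
  have hw0 : Tendsto (S.T v) (𝓝[>] (0:ℝ)) (𝓝 S.a) := by
    have h1 : ContinuousWithinAt (S.T v) (Ici 0) 0 := hw.contOn 0 Set.self_mem_Ici
    have := h1.tendsto
    rw [T_zero] at this
    exact this.mono_left (nhdsWithin_mono _ Ioi_subset_Ici_self)
  have hH : Tendsto (fun t => S.Hf κ (S.T v t)) (𝓝[>] (0:ℝ)) (𝓝 0) := by
    have h2 := (Hf_hasDerivAt (S := S) κ (le_refl S.a)).continuousAt.tendsto
    rw [Hf_zero] at h2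
    exact h2.comp hw0
  have hN : Tendsto (fun t => S.Nf κ t) (𝓝[>] (0:ℝ)) (𝓝 0) := by
    have h2 := (Nf_hasDerivAt (S := S) hκ0 hκτ (le_refl 0)).continuousAt.tendsto
    rw [Nf_zero] at h2
    exact h2.mono_left nhdsWithin_le_nhds
  have hlim : Tendsto (fun r₀ => S.Hf κ (S.T v r₀) + S.c4 κ * (S.Nf κ r - S.Nf κ r₀))
      (𝓝[>] (0:ℝ)) (𝓝 (0 + S.c4 κ * (S.Nf κ r - 0))) :=
    hH.add ((tendsto_const_nhds.sub hN).const_mul _)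
  have hev : ∀ᶠ r₀ in 𝓝[>] (0:ℝ),
      S.Hf κ (S.T v r) ≤ S.Hf κ (S.T v r₀) + S.c4 κ * (S.Nf κ r - S.Nf κ r₀) := by
    filter_upwards [Ioo_mem_nhdsGT_of_mem (⟨le_rfl, hr⟩ : (0:ℝ) ∈ Ico 0 r)] with r₀ h₀
    exact main r₀ h₀
  have hfin := ge_of_tendsto hlim hev
  have : (0:ℝ) + S.c4 κ * (S.Nf κ r - 0) = S.c4 κ * S.Nf κ r := by ring
  linarith [hfin, this]

lemma Phi_nonneg (κ : ℝ) {t : ℝ} (ht : 0 ≤ t) : 0 ≤ S.Phi κ t :=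
  intervalIntegral.integral_nonneg ht (fun s _ => (gk_pos κ s).le)

lemma Phi_lower {κ : ℝ} (hκ0 : 0 ≤ κ) {t : ℝ} (ht : 0 ≤ t) :
    t * S.g 0 ^ κ ≤ S.Phi κ t := by
  have h := intervalIntegral.integral_mono_on ht (_root_.intervalIntegrable_const (μ := volume) (c := S.g 0 ^ κ))
    ((gk_cont (S := S) κ).intervalIntegrable _ _)
    (fun s hs => Real.rpow_le_rpow (S.hg_pos 0).le (S.hg_mono hs.1) hκ0)
  rwa [intervalIntegral.integral_const, sub_zero, smul_eq_mul] at h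

lemma Hint_intble (κ : ℝ) {x y : ℝ} (hx : S.a ≤ x) (hy : S.a ≤ y) :
    IntervalIntegrable (fun t => (S.Lam κ t) ^ (-(1/(κ*S.θ+1)))) volume x y := by
  apply ContinuousOn.intervalIntegrable
  intro t ht
  have hta : S.a ≤ t := by
    rcases le_total x y with h | h
    · rw [uIcc_of_le h] at ht; exact hx.trans ht.1
    · rw [uIcc_of_ge h] at ht; exact hy.trans ht.1
  exact (Hint_contAt κ (Lam_pos_of_mem κ hta)).continuousWithinAt

lemma Hf_diff (κ : ℝ) {x y : ℝ} (hx : S.a ≤ x) (hy : S.a ≤ y) :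
    S.Hf κ y - S.Hf κ x = ∫ t in x..y, (S.Lam κ t) ^ (-(1/(κ*S.θ+1))) := by
  have h1 := Hint_intble (S := S) κ (le_refl S.a) hx
  have h2 := Hint_intble (S := S) κ hx hy
  have h3 := intervalIntegral.integral_add_adjacent_intervals h1 h2
  rw [Hf, Hf, ← h3]
  ring

lemma Hf_unbounded {κ : ℝ} (hκ0 : 0 < κ)
    (hKO : ∀ b : ℝ, 0 < b →
      ∫⁻ t in Set.Ioi b, ENNReal.ofReal ((S.Phi κ t) ^ (-(1/(κ*S.θ+1)))) = ⊤) :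
    ∀ K : ℝ, ∃ x, S.a ≤ x ∧ K ≤ S.Hf κ x := by
  by_contra hcon
  push_neg at hcon
  obtain ⟨K, hK⟩ := hcon
  have hK' : ∀ x, S.a ≤ x → S.Hf κ x ≤ K := fun x hx => (hK x hx).le
  have hm : 0 < κ*S.θ+1 := m_pos hκ0
  have he : 0 < 1/(κ*S.θ+1) := by positivity
  set c := (2:ℝ) ^ (1/(κ*S.θ+1)) with hcdef
  have hc : 0 < c := Real.rpow_pos_of_pos two_pos _
  have hG0 : 0 < S.g 0 ^ κ := gk_pos κ 0
  set b₀ := max (max 1 S.a) ((max 1 (S.Phi κ S.a) + 1) / (S.g 0 ^ κ)) with hb₀def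
  have hb₀1 : (1:ℝ) ≤ b₀ := le_trans (le_max_left 1 S.a) (le_max_left _ _)
  have hb₀pos : 0 < b₀ := lt_of_lt_of_le one_pos hb₀1
  have hb₀a : S.a ≤ b₀ := le_trans (le_max_right 1 S.a) (le_max_left _ _)
  have hΦb : ∀ t, b₀ ≤ t → max 1 (S.Phi κ S.a) + 1 ≤ S.Phi κ t := by
    intro t ht
    have h1 : (max 1 (S.Phi κ S.a) + 1) / (S.g 0 ^ κ) ≤ t :=
      le_trans (le_max_right _ _) ht
    have h2 : max 1 (S.Phi κ S.a) + 1 ≤ t * (S.g 0 ^ κ) := (div_le_iff₀ hG0).mp h1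
    have h3 := Phi_lower (S := S) hκ0.le (le_trans hb₀pos.le ht)
    linarith
  have hptwise : ∀ t, b₀ ≤ t →
      (S.Phi κ t) ^ (-(1/(κ*S.θ+1))) ≤ c * (S.Lam κ t) ^ (-(1/(κ*S.θ+1))) := by
    intro t ht
    have hΦ1 : 1 ≤ S.Phi κ t := by
      have h1 := hΦb t ht
      have h2 := le_max_left (1:ℝ) (S.Phi κ S.a)
      linarith
    have hΦpos : 0 < S.Phi κ t := lt_of_lt_of_le one_pos hΦ1
    have hLam2 : S.Lam κ t ≤ 2 * S.Phi κ t := by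
      rw [Lam]
      have h0 : 0 ≤ S.Phi κ S.a := Phi_nonneg κ S.ha
      linarith
    have hLpos : 0 < S.Lam κ t := Lam_pos_of_mem κ (hb₀a.trans ht)
    have h4 : (2 * S.Phi κ t) ^ (-(1/(κ*S.θ+1))) ≤ (S.Lam κ t) ^ (-(1/(κ*S.θ+1))) :=
      Real.rpow_le_rpow_of_nonpos hLpos hLam2 (by linarith)
    have h5 : (2 * S.Phi κ t) ^ (-(1/(κ*S.θ+1)))
        = (2:ℝ)^(-(1/(κ*S.θ+1))) * (S.Phi κ t) ^ (-(1/(κ*S.θ+1))) :=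
      Real.mul_rpow (by norm_num) hΦpos.le
    have h6 : c * ((2:ℝ)^(-(1/(κ*S.θ+1))) * (S.Phi κ t) ^ (-(1/(κ*S.θ+1))))
        = (S.Phi κ t) ^ (-(1/(κ*S.θ+1))) := by
      rw [hcdef, ← mul_assoc, ← Real.rpow_add two_pos, add_neg_cancel, Real.rpow_zero, one_mul]
    calc (S.Phi κ t) ^ (-(1/(κ*S.θ+1)))
        = c * ((2:ℝ)^(-(1/(κ*S.θ+1))) * (S.Phi κ t) ^ (-(1/(κ*S.θ+1)))) := h6.symm
      _ = c * (2 * S.Phi κ t) ^ (-(1/(κ*S.θ+1))) := by rw [h5]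
      _ ≤ c * (S.Lam κ t) ^ (-(1/(κ*S.θ+1))) := mul_le_mul_of_nonneg_left h4 hc.le
  have claim1 : ∀ n : ℕ, ∫⁻ t in Ioc b₀ (b₀+n), ENNReal.ofReal ((S.Phi κ t) ^ (-(1/(κ*S.θ+1))))
      ≤ ENNReal.ofReal (c * (K - S.Hf κ b₀)) := by
    intro n
    have hnn : (0:ℝ) ≤ n := Nat.cast_nonneg n
    have hbn : S.a ≤ b₀ + n := by linarith
    have hb₀bn : b₀ ≤ b₀ + n := by linarith
    have hintLam : IntegrableOn (fun t => c * (S.Lam κ t) ^ (-(1/(κ*S.θ+1)))) (Ioc b₀ (b₀+n)) := by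
      rw [← intervalIntegrable_iff_integrableOn_Ioc_of_le hb₀bn]
      exact (Hint_intble (S := S) κ hb₀a hbn).const_mul c
    calc ∫⁻ t in Ioc b₀ (b₀+n), ENNReal.ofReal ((S.Phi κ t) ^ (-(1/(κ*S.θ+1))))
        ≤ ∫⁻ t in Ioc b₀ (b₀+n), ENNReal.ofReal (c * (S.Lam κ t) ^ (-(1/(κ*S.θ+1)))) := by
          refine lintegral_mono_ae ?_
          filter_upwards [ae_restrict_mem measurableSet_Ioc] with t ht
          exact ENNReal.ofReal_le_ofReal (hptwise t ht.1.le)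
      _ = ENNReal.ofReal (∫ t in Ioc b₀ (b₀+n), c * (S.Lam κ t) ^ (-(1/(κ*S.θ+1)))) := by
          have hae : 0 ≤ᶠ[MeasureTheory.ae (volume.restrict (Ioc b₀ (b₀+(n:ℝ))))]
              fun t => c * (S.Lam κ t) ^ (-(1/(κ*S.θ+1))) := by
            filter_upwards [ae_restrict_mem measurableSet_Ioc] with t ht
            have hLpos : 0 < S.Lam κ t := Lam_pos_of_mem κ (hb₀a.trans ht.1.le)
            positivity
          exact (MeasureTheory.ofReal_integral_eq_lintegral_ofReal hintLam hae).symm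
      _ = ENNReal.ofReal (c * (S.Hf κ (b₀+n) - S.Hf κ b₀)) := by
          rw [← intervalIntegral.integral_of_le hb₀bn, intervalIntegral.integral_const_mul,
            ← Hf_diff (S := S) κ hb₀a hbn]
      _ ≤ ENNReal.ofReal (c * (K - S.Hf κ b₀)) := by
          apply ENNReal.ofReal_le_ofReal
          apply mul_le_mul_of_nonneg_left _ hc.le
          have := hK' (b₀+n) hbn
          linarith
  have hfmeas : Measurable (fun t => ENNReal.ofReal ((S.Phi κ t) ^ (-(1/(κ*S.θ+1))))) := by
    apply Measurable.ennreal_ofReal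
    exact ((continuous_iff_continuousAt.2 (Phi_contAt (S := S) κ)).measurable).pow_const _
  have hmono : Monotone (fun n : ℕ =>
      (Ioc b₀ (b₀+n)).indicator (fun t => ENNReal.ofReal ((S.Phi κ t) ^ (-(1/(κ*S.θ+1)))))) := by
    intro i j hij
    apply Set.indicator_le_indicator_of_subset
    · exact Ioc_subset_Ioc_right (by exact_mod_cast add_le_add_right (Nat.cast_le.2 hij) b₀)
    · exact fun _ => zero_le
  have hsup : ∫⁻ t in Ioi b₀, ENNReal.ofReal ((S.Phi κ t) ^ (-(1/(κ*S.θ+1))))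
      = ⨆ n : ℕ, ∫⁻ t in Ioc b₀ (b₀+n), ENNReal.ofReal ((S.Phi κ t) ^ (-(1/(κ*S.θ+1)))) := by
    rw [← lintegral_indicator measurableSet_Ioi]
    have e2 : ∀ n : ℕ, ∫⁻ t in Ioc b₀ (b₀+n), ENNReal.ofReal ((S.Phi κ t) ^ (-(1/(κ*S.θ+1))))
        = ∫⁻ t, (Ioc b₀ (b₀+n)).indicator
            (fun t => ENNReal.ofReal ((S.Phi κ t) ^ (-(1/(κ*S.θ+1))))) t := by
      intro n; rw [← lintegral_indicator measurableSet_Ioc]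
    simp_rw [e2]
    rw [← lintegral_iSup (fun n => hfmeas.indicator measurableSet_Ioc) hmono]
    congr 1
    funext t
    rcases lt_or_ge b₀ t with ht | ht
    · obtain ⟨n, hn⟩ := exists_nat_ge (t - b₀)
      apply le_antisymm
      · rw [Set.indicator_of_mem (mem_Ioi.mpr ht)]
        apply le_iSup_of_le n
        rw [Set.indicator_of_mem (show t ∈ Ioc b₀ (b₀+(n:ℝ)) from ⟨ht, by linarith⟩)]
      · apply iSup_le
        intro k
        have hsub : Ioc b₀ (b₀+(k:ℝ)) ⊆ Ioi b₀ := fun y hy => hy.1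
        exact Set.indicator_le_indicator_of_subset hsub (fun _ => zero_le) t
    · rw [Set.indicator_of_notMem (by simpa using ht)]
      refine (le_antisymm ?_ zero_le).symm
      apply iSup_le
      intro k
      rw [Set.indicator_of_notMem]
      intro hmem
      exact absurd hmem.1 (not_lt.2 ht)
  have hKOb := hKO b₀ hb₀pos
  have hlast : ∫⁻ t in Ioi b₀, ENNReal.ofReal ((S.Phi κ t) ^ (-(1/(κ*S.θ+1))))
      ≤ ENNReal.ofReal (c * (K - S.Hf κ b₀)) := by
    rw [hsup]; exact iSup_le claim1
  rw [hKOb] at hlast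
  exact ENNReal.ofReal_ne_top (top_le_iff.mp hlast)

lemma seq_bounded {κ : ℝ} (hκ : 1 < κ) (hκτ : 1 < κ*(S.τ-S.θ*S.q))
    (hunb : ∀ K : ℝ, ∃ x, S.a ≤ x ∧ K ≤ S.Hf κ x) (r : ℝ) :
    ∃ B : ℝ, ∀ n, S.seq n r ≤ B := by
  rcases le_or_gt r 0 with hr | hr
  · exact ⟨S.a, fun n => le_of_eq (seq_nonpos hr n)⟩
  · obtain ⟨x, hax, hx⟩ := hunb (S.c4 κ * S.Nf κ r)
    refine ⟨x, fun n => ?_⟩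
    cases n with
    | zero => exact hax
    | succ n =>
      have h1 : S.Hf κ (S.seq (n+1) r) ≤ S.c4 κ * S.Nf κ r := by
        rw [seq_succ]
        exact Hf_le hκ hκτ (seq_good n) (fun y => by rw [← seq_succ]; exact seq_le_succ n y) hr
      by_contra hcon
      push_neg at hcon
      have h2 : S.Hf κ x < S.Hf κ (S.seq (n+1) r) :=
        Hf_strictMonoOn κ (mem_Ici.2 hax) (mem_Ici.2 ((seq_good (n+1)).le r)) hcon
      linarith

-- versions of the basic lemmas that only need monotonicity (for the limit function)

lemma integrandA_intble' {v : ℝ → ℝ} (hm : Monotone v) {x : ℝ} (hx : 0 ≤ x) :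
    IntervalIntegrable (fun s => s ^ (S.τ - 1) * S.g (v s)) volume 0 x := by
  apply IntervalIntegrable.mono_fun'
    (g := fun s => s ^ (S.τ - 1) * S.g (v x))
    ((intervalIntegrable_rpow' (by linarith [S.τ_pos])).mul_const _)
  · exact ((measurable_id.pow_const _).mul
      (S.hg_cont.measurable.comp hm.measurable)).aestronglyMeasurable
  · rw [uIoc_of_le hx]
    filter_upwards [ae_restrict_mem measurableSet_Ioc] with s hs
    have h1 : (0:ℝ) ≤ s ^ (S.τ - 1) := rpow_nonneg hs.1.le _
    rw [Real.norm_eq_abs, abs_of_nonneg (mul_nonneg h1 (S.hg_pos _).le)]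
    exact mul_le_mul_of_nonneg_left (S.hg_mono (hm hs.2)) h1

lemma A_le' {v : ℝ → ℝ} (hm : Monotone v) {t : ℝ} (ht : 0 ≤ t) :
    S.A v t ≤ S.g (v t) * t ^ S.τ / S.τ := by
  have h1 : S.A v t ≤ ∫ s in (0:ℝ)..t, s ^ (S.τ - 1) * S.g (v t) := by
    apply intervalIntegral.integral_mono_on ht (integrandA_intble' hm ht)
      ((intervalIntegrable_rpow' (by linarith [S.τ_pos])).mul_const _)
    intro s hs
    exact mul_le_mul_of_nonneg_left (S.hg_mono (hm hs.2)) (rpow_nonneg hs.1 _)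
  have h2 : ∫ s in (0:ℝ)..t, s ^ (S.τ - 1) * S.g (v t)
      = S.g (v t) * t ^ S.τ / S.τ := by
    rw [intervalIntegral.integral_mul_const, integral_rpow (Or.inl (by linarith [S.τ_pos]))]
    rw [sub_add_cancel, Real.zero_rpow S.τ_pos.ne']
    ring
  linarith

lemma A_ge' {v : ℝ → ℝ} (hm : Monotone v) (hb : ∀ r, S.a ≤ v r) {t : ℝ} (ht : 0 ≤ t) :
    S.g S.a * t ^ S.τ / S.τ ≤ S.A v t := by
  have h1 : ∫ s in (0:ℝ)..t, s ^ (S.τ - 1) * S.g S.a ≤ S.A v t := by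
    apply intervalIntegral.integral_mono_on ht
      ((intervalIntegrable_rpow' (by linarith [S.τ_pos])).mul_const _)
      (integrandA_intble' hm ht)
    intro s hs
    exact mul_le_mul_of_nonneg_left (S.hg_mono (hb s)) (rpow_nonneg hs.1 _)
  have h2 : ∫ s in (0:ℝ)..t, s ^ (S.τ - 1) * S.g S.a
      = S.g S.a * t ^ S.τ / S.τ := by
    rw [intervalIntegral.integral_mul_const, integral_rpow (Or.inl (by linarith [S.τ_pos]))]
    rw [sub_add_cancel, Real.zero_rpow S.τ_pos.ne']
    ring
  linarith

lemma A_pos' {v : ℝ → ℝ} (hm : Monotone v) (hb : ∀ r, S.a ≤ v r) {t : ℝ} (ht : 0 < t) :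
    0 < S.A v t :=
  lt_of_lt_of_le (div_pos (mul_pos (S.hg_pos _) (Real.rpow_pos_of_pos ht _)) S.τ_pos)
    (A_ge' hm hb ht.le)

lemma A_nonneg' {v : ℝ → ℝ} {t : ℝ} (ht : 0 ≤ t) : 0 ≤ S.A v t := by
  apply intervalIntegral.integral_nonneg ht
  intro s hs
  exact mul_nonneg (rpow_nonneg hs.1 _) (S.hg_pos _).le

lemma A_contOn' {v : ℝ → ℝ} (hm : Monotone v) : ContinuousOn (S.A v) (Ici 0) := by
  intro x hx
  have hx0 : (0:ℝ) ≤ x := hx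
  set M := x + 1 with hM
  have hint : IntegrableOn (fun s => s ^ (S.τ - 1) * S.g (v s)) (Icc 0 M) volume := by
    rw [integrableOn_Icc_iff_integrableOn_Ioc]
    rw [← intervalIntegrable_iff_integrableOn_Ioc_of_le (by linarith)]
    exact integrandA_intble' hm (by linarith)
  have hprim := intervalIntegral.continuousOn_primitive hint
  have h1 : ContinuousWithinAt (fun y => ∫ t in Ioc (0:ℝ) y, t ^ (S.τ - 1) * S.g (v t))
      (Ici 0) x := by
    apply (hprim x ⟨hx0, by linarith⟩).mono_of_mem_nhdsWithin
    apply Filter.mem_of_superset (inter_mem_nhdsWithin (Ici 0) (Iio_mem_nhds (by linarith : x < M)))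
    rintro y ⟨hy1, hy2⟩
    exact ⟨hy1, le_of_lt hy2⟩
  apply h1.congr
  · intro y hy
    rw [A, intervalIntegral.integral_of_le hy]
  · rw [A, intervalIntegral.integral_of_le hx0]

lemma psi_contAt' {v : ℝ → ℝ} (hm : Monotone v) (hb : ∀ r, S.a ≤ v r) {t : ℝ} (ht : 0 < t) :
    ContinuousAt (S.psi v) t := by
  apply ContinuousAt.mul
  · exact continuousAt_const.mul (Real.continuousAt_rpow_const t _ (Or.inl ht.ne'))
  · exact (Real.continuousAt_rpow_const _ _ (Or.inl (A_pos' hm hb ht).ne')).comp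
      ((A_contOn' hm).continuousAt (Ici_mem_nhds ht))

lemma psi_nonneg' {v : ℝ → ℝ} {t : ℝ} (ht : 0 ≤ t) : 0 ≤ S.psi v t :=
  mul_nonneg (mul_nonneg S.hC.le (rpow_nonneg ht _)) (rpow_nonneg (A_nonneg' ht) _)

lemma psi_le' {v : ℝ → ℝ} (hm : Monotone v) {t : ℝ} (ht : 0 ≤ t) :
    S.psi v t ≤ S.C * (S.g (v t) / S.τ) ^ (1 / S.θ) * t ^ S.dlt := by
  rcases eq_or_lt_of_le ht with h | h
  · rw [← h, psi_zero, Real.zero_rpow S.dlt_pos.ne', mul_zero]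
  · have h1 : S.psi v t ≤ S.C * t ^ (-S.q) * (S.g (v t) * t ^ S.τ / S.τ) ^ (1 / S.θ) :=
      mul_le_mul_of_nonneg_left
        (Real.rpow_le_rpow (A_nonneg' ht) (A_le' hm ht) (one_div_nonneg.2 S.hθ.le))
        (mul_nonneg S.hC.le (rpow_nonneg ht _))
    have h2 : (S.g (v t) * t ^ S.τ / S.τ) ^ (1 / S.θ)
        = (S.g (v t) / S.τ) ^ (1 / S.θ) * t ^ (S.τ / S.θ) := by
      rw [show S.g (v t) * t ^ S.τ / S.τ = S.g (v t) / S.τ * t ^ S.τ by ring,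
        Real.mul_rpow (div_nonneg (S.hg_pos _).le S.τ_pos.le) (rpow_nonneg ht _),
        ← Real.rpow_mul ht, mul_one_div]
    calc S.psi v t
        ≤ S.C * t ^ (-S.q) * ((S.g (v t) / S.τ) ^ (1 / S.θ) * t ^ (S.τ / S.θ)) := by
          rw [← h2]; exact h1
      _ = S.C * (S.g (v t) / S.τ) ^ (1 / S.θ) * (t ^ (-S.q) * t ^ (S.τ / S.θ)) := by ring
      _ = S.C * (S.g (v t) / S.τ) ^ (1 / S.θ) * t ^ S.dlt := by
          rw [← Real.rpow_add h, S.dlt_eq]; congr 1; ring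

lemma psi_intble' {v : ℝ → ℝ} (hm : Monotone v) (hb : ∀ r, S.a ≤ v r) {x : ℝ} (hx : 0 ≤ x) :
    IntervalIntegrable (S.psi v) volume 0 x := by
  rw [intervalIntegrable_iff_integrableOn_Ioc_of_le hx]
  have hmaj : IntegrableOn (fun t : ℝ => S.C * (S.g (v x) / S.τ) ^ (1 / S.θ) * t ^ S.dlt)
      (Ioc 0 x) := by
    rw [← intervalIntegrable_iff_integrableOn_Ioc_of_le hx]
    exact (intervalIntegrable_rpow' (by linarith [S.dlt_pos])).const_mul _
  apply Integrable.mono' hmaj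
  · exact (ContinuousOn.aestronglyMeasurable
      (fun s hs => (psi_contAt' hm hb hs.1).continuousWithinAt) measurableSet_Ioc)
  · rw [ae_restrict_iff' measurableSet_Ioc]
    filter_upwards with s hs
    rw [Real.norm_eq_abs, abs_of_nonneg (psi_nonneg' hs.1.le)]
    calc S.psi v s ≤ S.C * (S.g (v s) / S.τ) ^ (1 / S.θ) * s ^ S.dlt := psi_le' hm hs.1.le
      _ ≤ S.C * (S.g (v x) / S.τ) ^ (1 / S.θ) * s ^ S.dlt := by
          apply mul_le_mul_of_nonneg_right _ (rpow_nonneg hs.1.le _)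
          apply mul_le_mul_of_nonneg_left _ S.hC.le
          exact Real.rpow_le_rpow (div_nonneg (S.hg_pos _).le S.τ_pos.le)
            ((div_le_div_iff_of_pos_right S.τ_pos).mpr (S.hg_mono (hm hs.2)))
            (one_div_nonneg.2 S.hθ.le)

-- the limit function

variable (S) in
noncomputable def vlim : ℝ → ℝ := fun r => ⨆ n, S.seq n r

section vlim

variable (hbd : ∀ r : ℝ, BddAbove (range fun n => S.seq n r))

include hbd

lemma seq_le_vlim (n : ℕ) (r : ℝ) : S.seq n r ≤ S.vlim r := le_ciSup (hbd r) n

lemma seq_tendsto_vlim (r : ℝ) :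
    Tendsto (fun n => S.seq n r) atTop (𝓝 (S.vlim r)) :=
  tendsto_atTop_ciSup (seq_mono_n r) (hbd r)

lemma vlim_mono : Monotone S.vlim := by
  intro r r' h
  apply ciSup_le
  intro n
  exact le_trans ((seq_good n).mono h) (seq_le_vlim hbd n r')

lemma vlim_ge (r : ℝ) : S.a ≤ S.vlim r :=
  le_trans ((seq_good 0).le r) (seq_le_vlim hbd 0 r)

lemma vlim_nonpos {r : ℝ} (hr : r ≤ 0) : S.vlim r = S.a := by
  rw [vlim]
  have : (fun n => S.seq n r) = fun _ => S.a := funext (fun n => seq_nonpos hr n)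
  rw [this, ciSup_const]

lemma vlim_zero : S.vlim 0 = S.a := vlim_nonpos hbd le_rfl

lemma vlim_meas : Measurable S.vlim := (vlim_mono hbd).measurable

lemma A_seq_tendsto {t : ℝ} (ht : 0 ≤ t) :
    Tendsto (fun n => S.A (S.seq n) t) atTop (𝓝 (S.A S.vlim t)) := by
  have hrw : ∀ w : ℝ → ℝ, S.A w t = ∫ s in Ioc (0:ℝ) t, s ^ (S.τ - 1) * S.g (w s) :=
    fun w => intervalIntegral.integral_of_le ht
  simp_rw [A] at hrw ⊢
  rw [hrw]
  have hrw2 : (fun n => ∫ s in (0:ℝ)..t, s ^ (S.τ - 1) * S.g (S.seq n s))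
      = fun n => ∫ s in Ioc (0:ℝ) t, s ^ (S.τ - 1) * S.g (S.seq n s) :=
    funext (fun n => hrw _)
  rw [hrw2]
  apply MeasureTheory.integral_tendsto_of_tendsto_of_monotone
  · intro n
    exact (intervalIntegrable_iff_integrableOn_Ioc_of_le ht).mp
      (integrandA_intble' (seq_good n).mono ht)
  · -- integrability of the limit integrand
    have hmeas : Measurable fun s => s ^ (S.τ - 1) * S.g (S.vlim s) :=
      (measurable_id.pow_const _).mul (S.hg_cont.measurable.comp (vlim_meas hbd))
    apply Integrable.mono'
      (g := fun s : ℝ => s ^ (S.τ - 1) * S.g (S.vlim t))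
      ((intervalIntegrable_iff_integrableOn_Ioc_of_le ht).mp
        ((intervalIntegrable_rpow' (by linarith [S.τ_pos])).mul_const _))
      hmeas.aestronglyMeasurable
    rw [ae_restrict_iff' measurableSet_Ioc]
    filter_upwards with s hs
    have h1 : (0:ℝ) ≤ s ^ (S.τ - 1) := rpow_nonneg hs.1.le _
    rw [Real.norm_eq_abs, abs_of_nonneg (mul_nonneg h1 (S.hg_pos _).le)]
    exact mul_le_mul_of_nonneg_left (S.hg_mono ((vlim_mono hbd) hs.2)) h1
  · filter_upwards [ae_restrict_mem measurableSet_Ioc] with s hs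
    intro i j hij
    exact mul_le_mul_of_nonneg_left (S.hg_mono (seq_mono_n s hij)) (rpow_nonneg hs.1.le _)
  · filter_upwards [ae_restrict_mem measurableSet_Ioc] with s hs
    exact ((S.hg_cont.continuousAt.tendsto.comp (seq_tendsto_vlim hbd s)).const_mul _)

lemma psi_seq_tendsto {t : ℝ} (ht : 0 < t) :
    Tendsto (fun n => S.psi (S.seq n) t) atTop (𝓝 (S.psi S.vlim t)) := by
  have hA : Tendsto (fun n => S.A (S.seq n) t) atTop (𝓝 (S.A S.vlim t)) :=
    A_seq_tendsto hbd ht.le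
  have hApos : 0 < S.A S.vlim t := A_pos' (vlim_mono hbd) (vlim_ge hbd) ht
  have h2 : Tendsto (fun n => (S.A (S.seq n) t) ^ (1/S.θ)) atTop
      (𝓝 ((S.A S.vlim t) ^ (1/S.θ))) :=
    ((Real.continuousAt_rpow_const _ _ (Or.inl hApos.ne')).tendsto).comp hA
  have h3 := h2.const_mul (S.C * t ^ (-S.q))
  simp only [psi]
  convert h3 using 2

lemma vlim_eq {r : ℝ} (hr : 0 ≤ r) :
    S.vlim r = S.a + ∫ t in (0:ℝ)..r, S.psi S.vlim t := by
  have hL : Tendsto (fun n => S.seq (n+1) r) atTop (𝓝 (S.vlim r)) :=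
    (seq_tendsto_vlim hbd r).comp (tendsto_add_atTop_nat 1)
  have hRint : Tendsto (fun n => ∫ t in Ioc (0:ℝ) r, S.psi (S.seq n) t) atTop
      (𝓝 (∫ t in Ioc (0:ℝ) r, S.psi S.vlim t)) := by
    apply MeasureTheory.integral_tendsto_of_tendsto_of_monotone
    · intro n
      exact (intervalIntegrable_iff_integrableOn_Ioc_of_le hr).mp (psi_intble (seq_good n) hr)
    · exact (intervalIntegrable_iff_integrableOn_Ioc_of_le hr).mp
        (psi_intble' (vlim_mono hbd) (vlim_ge hbd) hr)
    · filter_upwards [ae_restrict_mem measurableSet_Ioc] with t htt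
      intro i j hij
      have : ∀ x, S.seq i x ≤ S.seq j x := fun x => seq_mono_n x hij
      exact psi_le_psi (seq_good i) (seq_good j) this htt.1.le
    · filter_upwards [ae_restrict_mem measurableSet_Ioc] with t htt
      exact psi_seq_tendsto hbd htt.1
  have hR : Tendsto (fun n => S.seq (n+1) r) atTop
      (𝓝 (S.a + ∫ t in Ioc (0:ℝ) r, S.psi S.vlim t)) := by
    have heq : ∀ n, S.seq (n+1) r = S.a + ∫ t in Ioc (0:ℝ) r, S.psi (S.seq n) t := by
      intro n
      rw [seq_succ, T_apply hr, intervalIntegral.integral_of_le hr]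
    simp_rw [heq]
    exact hRint.const_add S.a
  have := tendsto_nhds_unique hL hR
  rw [this, intervalIntegral.integral_of_le hr]

end vlim

lemma psiD_pos {v} (hv : S.Good v) {r : ℝ} (hr : 0 < r) : 0 < S.psiD v r := by
  have hA : 0 < S.A v r := A_pos hv hr
  have hG : 0 < S.g (v r) := S.hg_pos _
  have hθ := S.hθ; have hτ := S.τ_pos; have hq := S.hq; have hC := S.hC
  have hX : 0 < r ^ S.τ * S.g (v r) := mul_pos (Real.rpow_pos_of_pos hr _) hG
  have key : 0 < (1/S.θ) * r ^ S.τ * S.g (v r) - S.q * S.A v r := by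
    have h1 : S.q * S.A v r ≤ S.q * (S.g (v r) * r ^ S.τ / S.τ) :=
      mul_le_mul_of_nonneg_left (A_le hv hr.le) S.hq
    have h2 : S.q * (S.g (v r) * r ^ S.τ / S.τ) < (1/S.θ) * (r ^ S.τ * S.g (v r)) := by
      have e1 : S.q * (S.g (v r) * r ^ S.τ / S.τ) = S.q * (S.g (v r) * r ^ S.τ) / S.τ := by
        ring
      have e2 : (1/S.θ) * (r ^ S.τ * S.g (v r)) = S.g (v r) * r ^ S.τ / S.θ := by
        ring
      rw [e1, e2, div_lt_div_iff₀ S.τ_pos S.hθ]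
      nlinarith [mul_lt_mul_of_pos_right S.hτ1 (mul_pos hG (Real.rpow_pos_of_pos hr S.τ))]
    calc (0:ℝ) < (1/S.θ) * (r ^ S.τ * S.g (v r)) - S.q * (S.g (v r) * r ^ S.τ / S.τ) := by
          linarith
      _ ≤ (1/S.θ) * r ^ S.τ * S.g (v r) - S.q * S.A v r := by
          rw [mul_assoc]
          linarith
  have eA : (S.A v r) ^ (1/S.θ) = (S.A v r) ^ (1/S.θ - 1) * S.A v r := by
    rw [← Real.rpow_add_one hA.ne' (1/S.θ - 1)]
    congr 1
    ring
  have er : r ^ (-S.q) * r ^ (S.τ-1) = r ^ (-S.q-1) * r ^ S.τ := by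
    rw [← Real.rpow_add hr, ← Real.rpow_add hr]
    congr 1
    ring
  have heq : S.psiD v r = S.C * (r ^ (-S.q-1) * (S.A v r) ^ (1/S.θ-1))
      * ((1/S.θ) * r ^ S.τ * S.g (v r) - S.q * S.A v r) := by
    rw [psiD, eA]
    calc S.C * ((-S.q) * r ^ (-S.q - 1) * ((S.A v r) ^ (1/S.θ-1) * S.A v r) +
          r ^ (-S.q) * ((1/S.θ) * (S.A v r) ^ (1/S.θ - 1) * (r ^ (S.τ-1) * S.g (v r))))
        = S.C * ((-S.q) * r ^ (-S.q - 1) * ((S.A v r) ^ (1/S.θ-1) * S.A v r) +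
          (r ^ (-S.q) * r ^ (S.τ-1)) * ((1/S.θ) * (S.A v r) ^ (1/S.θ - 1) * S.g (v r))) := by
          ring
      _ = S.C * ((-S.q) * r ^ (-S.q - 1) * ((S.A v r) ^ (1/S.θ-1) * S.A v r) +
          (r ^ (-S.q-1) * r ^ S.τ) * ((1/S.θ) * (S.A v r) ^ (1/S.θ - 1) * S.g (v r))) := by
          rw [er]
      _ = S.C * (r ^ (-S.q-1) * (S.A v r) ^ (1/S.θ-1))
          * ((1/S.θ) * r ^ S.τ * S.g (v r) - S.q * S.A v r) := by
          ring
  rw [heq]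
  have h5 : 0 < r ^ (-S.q-1) * (S.A v r) ^ (1/S.θ-1) :=
    mul_pos (Real.rpow_pos_of_pos hr _) (Real.rpow_pos_of_pos hA _)
  exact mul_pos (mul_pos S.hC h5) key

section vlim2

variable (hbd : ∀ r : ℝ, BddAbove (range fun n => S.seq n r))

include hbd

lemma vlim_contOn : ContinuousOn S.vlim (Ici 0) := by
  intro x hx
  have hx0 : (0:ℝ) ≤ x := hx
  set M := x + 1 with hM
  have hint : IntegrableOn (S.psi S.vlim) (Icc 0 M) volume := by
    rw [integrableOn_Icc_iff_integrableOn_Ioc]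
    exact (intervalIntegrable_iff_integrableOn_Ioc_of_le (by linarith)).mp
      (psi_intble' (vlim_mono hbd) (vlim_ge hbd) (by linarith))
  have hprim := intervalIntegral.continuousOn_primitive hint
  have h1 : ContinuousWithinAt (fun y => ∫ t in Ioc (0:ℝ) y, S.psi S.vlim t) (Ici 0) x := by
    apply (hprim x ⟨hx0, by linarith⟩).mono_of_mem_nhdsWithin
    apply Filter.mem_of_superset (inter_mem_nhdsWithin (Ici 0) (Iio_mem_nhds (by linarith : x < M)))
    rintro y ⟨hy1, hy2⟩
    exact ⟨hy1, le_of_lt hy2⟩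
  apply ((continuousWithinAt_const (b := S.a)).add h1).congr
  · intro y hy
    rw [vlim_eq hbd hy, intervalIntegral.integral_of_le hy]; rfl
  · rw [vlim_eq hbd hx0, intervalIntegral.integral_of_le hx0]; rfl

lemma vlim_good : S.Good S.vlim := ⟨vlim_contOn hbd, vlim_mono hbd, vlim_ge hbd⟩

lemma vlim_fix : S.T S.vlim = S.vlim := by
  funext r
  rcases le_or_gt r 0 with hr | hr
  · rw [T_apply_nonpos hr, vlim_nonpos hbd hr]
  · rw [T_apply hr.le, (vlim_eq hbd hr.le).symm]

lemma vlim_hasDerivAt {r : ℝ} (hr : 0 < r) : HasDerivAt S.vlim (S.psi S.vlim r) r := by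
  have h := T_hasDerivAt (vlim_good hbd) hr
  rwa [vlim_fix hbd] at h

lemma vlim_deriv {r : ℝ} (hr : 0 < r) : deriv S.vlim r = S.psi S.vlim r :=
  (vlim_hasDerivAt hbd hr).deriv

lemma vlim_deriv_eventuallyEq {r : ℝ} (hr : 0 < r) : deriv S.vlim =ᶠ[𝓝 r] S.psi S.vlim := by
  filter_upwards [Ioi_mem_nhds hr] with y hy
  exact vlim_deriv hbd hy

lemma vlim_hasDerivWithinAt_zero : HasDerivWithinAt S.vlim 0 (Ici 0) 0 := by
  rw [hasDerivWithinAt_iff_tendsto_slope]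
  have hset : (Ici (0:ℝ)) \ {0} = Ioi 0 := Ici_sdiff_left
  rw [hset]
  set K := S.C * (S.g (S.vlim 1) / S.τ) ^ (1/S.θ) with hKdef
  have hK0 : 0 ≤ K := by
    have h1 := S.hg_pos (S.vlim 1); have h2 := S.τ_pos; have h3 := S.hC
    positivity
  have hδ := S.dlt_pos
  have hbound : ∀ y ∈ Ioo (0:ℝ) 1, slope S.vlim 0 y ≤ (K/(S.dlt+1)) * y ^ S.dlt := by
    intro y hy
    have hy0 : 0 < y := hy.1
    have hup : ∫ t in (0:ℝ)..y, S.psi S.vlim t ≤ ∫ t in (0:ℝ)..y, K * t ^ S.dlt := by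
      apply intervalIntegral.integral_mono_on hy0.le
        (psi_intble' (vlim_mono hbd) (vlim_ge hbd) hy0.le)
        ((intervalIntegrable_rpow' (by linarith)).const_mul _)
      intro t htt
      refine (psi_le' (vlim_mono hbd) htt.1).trans ?_
      apply mul_le_mul_of_nonneg_right _ (rpow_nonneg htt.1 _)
      apply mul_le_mul_of_nonneg_left _ S.hC.le
      exact Real.rpow_le_rpow (div_nonneg (S.hg_pos _).le S.τ_pos.le)
        ((div_le_div_iff_of_pos_right S.τ_pos).mpr (S.hg_mono ((vlim_mono hbd) (le_trans htt.2 hy.2.le))))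
        (one_div_nonneg.2 S.hθ.le)
    have hval : ∫ t in (0:ℝ)..y, K * t ^ S.dlt = K * (y ^ (S.dlt+1) / (S.dlt+1)) := by
      rw [intervalIntegral.integral_const_mul, integral_rpow (Or.inl (by linarith))]
      rw [Real.zero_rpow (by linarith : S.dlt + 1 ≠ 0), sub_zero]
    have hslope : slope S.vlim 0 y = (∫ t in (0:ℝ)..y, S.psi S.vlim t) / y := by
      rw [slope_def_field, vlim_zero hbd, vlim_eq hbd hy0.le]
      rw [sub_zero]
      ring_nf
    rw [hslope]
    rw [div_le_iff₀ hy0]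
    calc (∫ t in (0:ℝ)..y, S.psi S.vlim t) ≤ K * (y ^ (S.dlt+1) / (S.dlt+1)) := by
          rw [← hval]; exact hup
      _ = (K/(S.dlt+1)) * y ^ (S.dlt+1) := by ring
      _ = (K/(S.dlt+1)) * y ^ S.dlt * y := by
          rw [show S.dlt + 1 = S.dlt + 1 from rfl, Real.rpow_add_one hy0.ne']
          ring
  have hlow : ∀ y ∈ Ioi (0:ℝ), 0 ≤ slope S.vlim 0 y := by
    intro y hy
    have hy0 : (0:ℝ) < y := hy
    have h0 : 0 ≤ ∫ t in (0:ℝ)..y, S.psi S.vlim t :=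
      intervalIntegral.integral_nonneg hy0.le (fun t htt => psi_nonneg' htt.1)
    have hslope : slope S.vlim 0 y = (∫ t in (0:ℝ)..y, S.psi S.vlim t) / y := by
      rw [slope_def_field, vlim_zero hbd, vlim_eq hbd hy0.le]
      rw [sub_zero]
      ring_nf
    rw [hslope]
    positivity
  have hrp : Tendsto (fun y : ℝ => (K/(S.dlt+1)) * y ^ S.dlt) (𝓝[>] 0) (𝓝 0) := by
    have h := (Real.continuousAt_rpow_const 0 S.dlt (Or.inr S.dlt_pos.le)).tendsto
    rw [Real.zero_rpow S.dlt_pos.ne'] at h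
    have h1 : Tendsto (fun y : ℝ => y ^ S.dlt) (𝓝[>] (0:ℝ)) (𝓝 0) :=
      h.mono_left nhdsWithin_le_nhds
    have h2 := h1.const_mul (K/(S.dlt+1))
    simpa using h2
  apply tendsto_of_tendsto_of_tendsto_of_le_of_le' tendsto_const_nhds hrp
  · filter_upwards [self_mem_nhdsWithin] with y hy
    exact hlow y hy
  · filter_upwards [Ioo_mem_nhdsGT_of_mem (⟨le_rfl, one_pos⟩ : (0:ℝ) ∈ Ico 0 1)] with y hy
    exact hbound y hy

end vlim2

end Setup
end KOProof

/-- Part (a) of Theorem 1.3: if `θq < τ < θq + 1` and, for some `ε ∈ (0, τ - θq)`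
and `κ = (1-ε)/(τ-θq-ε)`, the modified Keller–Osserman condition
`∫_b^∞ (∫_0^t g(s)^κ ds)^{-1/(κθ+1)} dt = +∞` holds for every `b > 0`, then for every
initial value `a ≥ 0` the Cauchy problem (★) has an entire solution on `[0, ∞)` with
`v'(0) = 0` (right derivative) and `v' > 0`, `v'' > 0` on `(0, ∞)`. -/
theorem entire_existence_of_modified_KO
    (g : ℝ → ℝ) (hg_cont : Continuous g) (hg_mono : Monotone g) (hg_pos : ∀ t, 0 < g t)
    (C q θ τ : ℝ) (hC : 0 < C) (hq : 0 ≤ q) (hθ : 0 < θ)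
    (hτ1 : θ * q < τ) (hτ2 : τ < θ * q + 1)
    (hKO : ∃ ε : ℝ, 0 < ε ∧ ε < τ - θ * q ∧
      ∀ b : ℝ, 0 < b →
        ∫⁻ t in Set.Ioi b,
          ENNReal.ofReal ((∫ s in (0:ℝ)..t, g s ^ ((1 - ε) / (τ - θ * q - ε))) ^
            (-(1 / ((1 - ε) / (τ - θ * q - ε) * θ + 1)))) = ⊤) :
    ∀ a : ℝ, 0 ≤ a → ∃ v : ℝ → ℝ,
      SolvesCauchy C q τ θ a g ⊤ v ∧
      HasDerivWithinAt v 0 (Set.Ici 0) 0 ∧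
      ∀ r : ℝ, 0 < r →
        0 < deriv v r ∧ DifferentiableAt ℝ (deriv v) r ∧ 0 < deriv (deriv v) r := by
  intro a ha
  obtain ⟨ε, hε0, hετ, hKO'⟩ := hKO
  have hτq1 : τ - θ*q < 1 := by linarith
  have hτqε : 0 < τ - θ*q - ε := by linarith
  set S : KOProof.Setup := ⟨g, C, q, θ, τ, a, hg_cont, hg_mono, hg_pos, hC, hq, hθ, hτ1, hτ2, ha⟩
    with hSdef
  set κ : ℝ := (1 - ε) / (τ - θ * q - ε) with hκdef
  have hκ : 1 < κ := by
    rw [hκdef, lt_div_iff₀ hτqε]; linarith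
  have hκτ : 1 < κ * (τ - θ*q) := by
    rw [hκdef, div_mul_eq_mul_div, lt_div_iff₀ hτqε]
    nlinarith [mul_pos hε0 (by linarith : (0:ℝ) < 1 - (τ - θ*q))]
  have hunb : ∀ K : ℝ, ∃ x, S.a ≤ x ∧ K ≤ S.Hf κ x := by
    apply KOProof.Setup.Hf_unbounded (lt_trans one_pos hκ)
    intro b hb
    exact hKO' b hb
  have hbd : ∀ r : ℝ, BddAbove (Set.range fun n => S.seq n r) := by
    intro r
    obtain ⟨B, hB⟩ := KOProof.Setup.seq_bounded hκ hκτ hunb r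
    refine ⟨B, ?_⟩
    rintro y ⟨n, rfl⟩
    exact hB n
  refine ⟨S.vlim, ⟨?_, ?_, ?_⟩, ?_, ?_⟩
  · have hset : {r : ℝ | 0 ≤ r ∧ ENNReal.ofReal r < (⊤ : ℝ≥0∞)} = Set.Ici 0 := by
      ext r
      simp [ENNReal.ofReal_lt_top]
    rw [hset]
    exact KOProof.Setup.vlim_contOn hbd
  · exact KOProof.Setup.vlim_zero hbd
  · intro r hr _
    have h := KOProof.Setup.vlim_hasDerivAt hbd hr
    rw [KOProof.Setup.psi_eq_cauchyRHS] at h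
    exact h
  · exact KOProof.Setup.vlim_hasDerivWithinAt_zero hbd
  · intro r hr
    have hgood := KOProof.Setup.vlim_good hbd
    refine ⟨?_, ?_, ?_⟩
    · rw [KOProof.Setup.vlim_deriv hbd hr]
      exact KOProof.Setup.psi_pos hgood hr
    · exact ((KOProof.Setup.vlim_deriv_eventuallyEq hbd hr).differentiableAt_iff).mpr
        (KOProof.Setup.psi_hasDerivAt hgood hr).differentiableAt
    · rw [(KOProof.Setup.vlim_deriv_eventuallyEq hbd hr).deriv_eq,
        (KOProof.Setup.psi_hasDerivAt hgood hr).deriv]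
      exact KOProof.Setup.psiD_pos hgood hr
end
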